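/- arXiv:2105.05660 — 5 statements merged into one kernel-verified Lean document; each statement's English description precedes it below -/
import Mathlib

section
/- For every complex number q with 0 < |q| < 1, the shifted 5-cycle graph series satisfies Σ_{n₁,…,n₅ ≥ 0} q^{n₁n₂+n₁n₅+n₂n₃+n₃n₄+n₄n₅+n₁+2n₂+n₃+n₄+2n₅} / ((q)_{n₁}(q)_{n₂}(q)_{n₃}(q)_{n₄}(q)_{n₅}) = q^{-2}/(q)_∞² · Σ_{n≥1} n·q^{2n}/(1 - q^n). -/
/-- The finite q-Pochhammer symbol `(q)_n = ∏_{j=1}^n (1 - q^j)`. -/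
noncomputable def qp (q : ℂ) (n : ℕ) : ℂ := ∏ j ∈ Finset.range n, (1 - q ^ (j + 1))

/-- The infinite q-Pochhammer symbol `(q)_∞ = ∏_{j=1}^∞ (1 - q^j)`. -/
noncomputable def qpInf (q : ℂ) : ℂ := ∏' j : ℕ, (1 - q ^ (j + 1))

open Filter Finset Topology

lemma exp_le_one_sub {r x : ℝ} (hr : r < 1) (hx0 : 0 ≤ x) (hxr : x ≤ r) :
    Real.exp (-(x / (1 - r))) ≤ 1 - x := by
  have h1r : (0 : ℝ) < 1 - r := by linarith
  have hy0 : 0 ≤ x / (1 - r) := div_nonneg hx0 h1r.le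
  have hpos : (0 : ℝ) < 1 + x / (1 - r) := by linarith
  have key : 1 * 1 ≤ (1 - x) * (1 + x / (1 - r)) := by
    have e : 1 + x / (1 - r) = (1 - r + x) / (1 - r) := by field_simp
    rw [e, one_mul, mul_div_assoc', le_div_iff₀ h1r, one_mul]
    nlinarith [mul_nonneg hx0 (sub_nonneg.mpr hxr)]
  have h2 : 1 + x / (1 - r) ≤ Real.exp (x / (1 - r)) := by
    have := Real.add_one_le_exp (x / (1 - r)); linarith
  rw [Real.exp_neg]
  calc (Real.exp (x / (1 - r)))⁻¹ ≤ (1 + x / (1 - r))⁻¹ :=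
        inv_anti₀ hpos h2
    _ ≤ 1 - x := by
        rw [inv_le_iff_one_le_mul₀ hpos]
        linarith [key]


section base
variable {q : ℂ} (hq : ‖q‖ < 1)

lemma qp_succ (n : ℕ) : qp q (n + 1) = qp q n * (1 - q ^ (n + 1)) :=
  Finset.prod_range_succ _ _

lemma qp_zero : qp q 0 = 1 := rfl

include hq

lemma one_sub_pow_ne (j : ℕ) : (1 : ℂ) - q ^ (j + 1) ≠ 0 := by
  intro h
  have h2 : q ^ (j + 1) = 1 := by linear_combination -h
  have : ‖q ^ (j + 1)‖ < 1 := by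
    rw [norm_pow]
    exact pow_lt_one₀ (norm_nonneg q) hq (Nat.succ_ne_zero j)
  rw [h2, norm_one] at this
  exact lt_irrefl _ this

lemma qp_ne (n : ℕ) : qp q n ≠ 0 :=
  Finset.prod_ne_zero_iff.2 fun j _ => one_sub_pow_ne hq j

lemma sum_pow_le (n : ℕ) : ∑ j ∈ range n, ‖q‖ ^ (j + 1) ≤ ‖q‖ / (1 - ‖q‖) := by
  have hr0 : (0 : ℝ) ≤ ‖q‖ := norm_nonneg q
  have h1r : (0 : ℝ) < 1 - ‖q‖ := by linarith
  have hs : Summable fun j : ℕ => ‖q‖ ^ j := summable_geometric_of_lt_one hr0 hq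
  calc ∑ j ∈ range n, ‖q‖ ^ (j + 1) = ‖q‖ * ∑ j ∈ range n, ‖q‖ ^ j := by
        rw [Finset.mul_sum]; exact Finset.sum_congr rfl fun j _ => by ring
    _ ≤ ‖q‖ * (1 - ‖q‖)⁻¹ := by
        refine mul_le_mul_of_nonneg_left ?_ hr0
        calc ∑ j ∈ range n, ‖q‖ ^ j ≤ ∑' j : ℕ, ‖q‖ ^ j :=
              Summable.sum_le_tsum (range n) (fun i _ => pow_nonneg hr0 i) hs
          _ = (1 - ‖q‖)⁻¹ := tsum_geometric_of_lt_one hr0 hq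
    _ = ‖q‖ / (1 - ‖q‖) := by rw [div_eq_mul_inv]

lemma qp_norm_lb (n : ℕ) : Real.exp (-(‖q‖ / (1 - ‖q‖) ^ 2)) ≤ ‖qp q n‖ := by
  have hr0 : (0 : ℝ) ≤ ‖q‖ := norm_nonneg q
  have h1r : (0 : ℝ) < 1 - ‖q‖ := by linarith
  have hpow : ∀ j : ℕ, ‖q‖ ^ (j + 1) ≤ ‖q‖ := fun j =>
    pow_le_of_le_one hr0 hq.le (Nat.succ_ne_zero j)
  have step1 : ∀ j : ℕ, Real.exp (-(‖q‖ ^ (j + 1) / (1 - ‖q‖))) ≤ ‖1 - q ^ (j + 1)‖ := by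
    intro j
    have h1 : Real.exp (-(‖q‖ ^ (j + 1) / (1 - ‖q‖))) ≤ 1 - ‖q‖ ^ (j + 1) :=
      exp_le_one_sub hq (pow_nonneg hr0 _) (hpow j)
    have h2 : 1 - ‖q‖ ^ (j + 1) ≤ ‖1 - q ^ (j + 1)‖ := by
      have := norm_sub_norm_le (1 : ℂ) (q ^ (j + 1))
      rwa [norm_one, norm_pow] at this
    linarith
  calc Real.exp (-(‖q‖ / (1 - ‖q‖) ^ 2))
      ≤ Real.exp (-(∑ j ∈ range n, ‖q‖ ^ (j + 1) / (1 - ‖q‖))) := by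
        apply Real.exp_le_exp.2
        rw [neg_le_neg_iff]
        rw [← Finset.sum_div]
        rw [div_le_div_iff₀ h1r (by positivity)]
        calc (∑ j ∈ range n, ‖q‖ ^ (j + 1)) * (1 - ‖q‖) ^ 2
            ≤ (‖q‖ / (1 - ‖q‖)) * (1 - ‖q‖) ^ 2 := by
              exact mul_le_mul_of_nonneg_right (sum_pow_le hq n) (by positivity)
          _ = ‖q‖ * (1 - ‖q‖) := by
              rw [sq, ← mul_assoc, div_mul_cancel₀ _ (ne_of_gt h1r)]
    _ = ∏ j ∈ range n, Real.exp (-(‖q‖ ^ (j + 1) / (1 - ‖q‖))) := by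
        rw [← Real.exp_sum]; congr 1; rw [← Finset.sum_neg_distrib]
    _ ≤ ∏ j ∈ range n, ‖1 - q ^ (j + 1)‖ :=
        Finset.prod_le_prod (fun j _ => (Real.exp_pos _).le) (fun j _ => step1 j)
    _ = ‖qp q n‖ := (norm_prod _ _).symm

lemma qp_norm_ub (n : ℕ) : ‖qp q n‖ ≤ Real.exp (‖q‖ / (1 - ‖q‖)) := by
  have hr0 : (0 : ℝ) ≤ ‖q‖ := norm_nonneg q
  calc ‖qp q n‖ = ∏ j ∈ range n, ‖1 - q ^ (j + 1)‖ := norm_prod _ _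
    _ ≤ ∏ j ∈ range n, Real.exp (‖q‖ ^ (j + 1)) := by
        refine Finset.prod_le_prod (fun j _ => norm_nonneg _) (fun j _ => ?_)
        calc ‖1 - q ^ (j + 1)‖ ≤ ‖(1 : ℂ)‖ + ‖q ^ (j + 1)‖ := norm_sub_le _ _
          _ = 1 + ‖q‖ ^ (j + 1) := by rw [norm_one, norm_pow]
          _ ≤ Real.exp (‖q‖ ^ (j + 1)) := by
              have := Real.add_one_le_exp (‖q‖ ^ (j + 1)); linarith
    _ = Real.exp (∑ j ∈ range n, ‖q‖ ^ (j + 1)) := (Real.exp_sum _ _).symm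
    _ ≤ Real.exp (‖q‖ / (1 - ‖q‖)) := Real.exp_le_exp.2 (sum_pow_le hq n)

end base

section conv
variable {q : ℂ} (hq : ‖q‖ < 1)
include hq

lemma summable_log_q : Summable fun j : ℕ => Complex.log (1 - q ^ (j + 1)) := by
  have hr0 : (0 : ℝ) ≤ ‖q‖ := norm_nonneg q
  have h1r : (0 : ℝ) < 1 - ‖q‖ := by linarith
  set K : ℝ := ‖q‖ * (1 - ‖q‖)⁻¹ / 2 + 1 with hK
  have hbound : ∀ j : ℕ, ‖Complex.log (1 - q ^ (j + 1))‖ ≤ K * ‖q‖ ^ (j + 1) := by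
    intro j
    set x : ℝ := ‖q‖ ^ (j + 1) with hx
    have hx0 : (0 : ℝ) ≤ x := pow_nonneg hr0 _
    have hle : x ≤ ‖q‖ := pow_le_of_le_one hr0 hq.le (Nat.succ_ne_zero j)
    have hx1 : x < 1 := lt_of_le_of_lt hle hq
    have hnz : ‖-q ^ (j + 1)‖ < 1 := by rw [norm_neg, norm_pow]; exact hx1
    have hlog := Complex.norm_log_one_add_le hnz
    rw [show (1 : ℂ) + -q ^ (j + 1) = 1 - q ^ (j + 1) by ring] at hlog
    rw [norm_neg, norm_pow, ← hx] at hlog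
    have hinv : (1 - x)⁻¹ ≤ (1 - ‖q‖)⁻¹ := by
      apply inv_anti₀ h1r; linarith
    have hxq : x * (1 - x)⁻¹ ≤ ‖q‖ * (1 - ‖q‖)⁻¹ :=
      mul_le_mul hle hinv (inv_nonneg.2 (by linarith)) hr0
    have := mul_le_mul_of_nonneg_left hxq hx0
    calc ‖Complex.log (1 - q ^ (j + 1))‖ ≤ x ^ 2 * (1 - x)⁻¹ / 2 + x := hlog
      _ ≤ K * x := by rw [hK]; nlinarith
  apply Summable.of_norm_bounded ?_ hbound
  apply Summable.mul_left
  exact (summable_geometric_of_lt_one hr0 hq).comp_injective (add_left_injective 1)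

lemma multipliable_q : Multipliable fun j : ℕ => 1 - q ^ (j + 1) := by
  have := Complex.multipliable_of_summable_log (summable_log_q hq)
  exact this

lemma qp_tendsto : Tendsto (fun N => qp q N) atTop (𝓝 (qpInf q)) :=
  (multipliable_q hq).hasProd.tendsto_prod_nat

lemma qpInf_ne : qpInf q ≠ 0 := by
  have hc : (0 : ℝ) < Real.exp (-(‖q‖ / (1 - ‖q‖) ^ 2)) := Real.exp_pos _
  have : Real.exp (-(‖q‖ / (1 - ‖q‖) ^ 2)) ≤ ‖qpInf q‖ :=
    ge_of_tendsto' ((qp_tendsto hq).norm) (qp_norm_lb hq)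
  intro h0
  rw [h0, norm_zero] at this
  linarith

end conv

noncomputable def qC (q : ℂ) : ℝ :=
  Real.exp (‖q‖ / (1 - ‖q‖)) * (Real.exp (-(‖q‖ / (1 - ‖q‖) ^ 2)))⁻¹
    * (Real.exp (-(‖q‖ / (1 - ‖q‖) ^ 2)))⁻¹

section bq
variable {q : ℂ} (hq : ‖q‖ < 1)
include hq

lemma qC_pos : 0 < qC q := by
  unfold qC; positivity

lemma inv_qp_norm_le (n : ℕ) : ‖(qp q n)⁻¹‖ ≤ (Real.exp (-(‖q‖ / (1 - ‖q‖) ^ 2)))⁻¹ := by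
  rw [norm_inv]
  exact inv_anti₀ (Real.exp_pos _) (qp_norm_lb hq n)

lemma B_norm_le (n k : ℕ) : ‖qp q (n + k) / (qp q n * qp q k)‖ ≤ qC q := by
  rw [div_eq_mul_inv, mul_inv, ← mul_assoc]
  unfold qC
  rw [norm_mul]
  refine mul_le_mul ?_ (inv_qp_norm_le hq k) (norm_nonneg _)
    (mul_nonneg (Real.exp_pos _).le (inv_nonneg.2 (Real.exp_pos _).le))
  rw [norm_mul]
  exact mul_le_mul (qp_norm_ub hq _) (inv_qp_norm_le hq n) (norm_nonneg _)
    (Real.exp_pos _).le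

lemma summable_B (k m : ℕ) :
    Summable fun n : ℕ => qp q (n + k) / (qp q n * qp q k) * q ^ (n * (m + 1)) := by
  have hr0 : (0 : ℝ) ≤ ‖q‖ := norm_nonneg q
  apply Summable.of_norm_bounded (g := fun n => qC q * ‖q‖ ^ n)
    ((summable_geometric_of_lt_one hr0 hq).mul_left _)
  intro n
  rw [norm_mul]
  refine mul_le_mul (B_norm_le hq n k) ?_ (norm_nonneg _) (qC_pos hq).le
  rw [norm_pow]
  calc ‖q‖ ^ (n * (m + 1)) ≤ ‖q‖ ^ n :=
    pow_le_pow_of_le_one hr0 hq.le (by nlinarith)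
  _ = ‖q‖ ^ n := rfl

lemma sum_B_eq (k m : ℕ) :
    ∑' n : ℕ, qp q (n + k) / (qp q n * qp q k) * q ^ (n * (m + 1))
      = qp q m / qp q (m + 1 + k) := by
  induction k with
  | zero =>
    have h1 : ∀ n : ℕ, qp q (n + 0) / (qp q n * qp q 0) * q ^ (n * (m + 1))
        = (q ^ (m + 1)) ^ n := by
      intro n
      rw [Nat.add_zero, qp_zero, mul_one, div_self (qp_ne hq n), one_mul,
        ← pow_mul, Nat.mul_comm]
    rw [tsum_congr h1, tsum_geometric_of_norm_lt_one
      (by rw [norm_pow]; exact pow_lt_one₀ (norm_nonneg q) hq (Nat.succ_ne_zero m))]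
    rw [Nat.add_zero, qp_succ]
    rw [div_mul_eq_div_div, div_self (qp_ne hq m), one_div]
  | succ k ih =>
    set f : ℕ → ℕ → ℂ :=
      fun j n => qp q (n + j) / (qp q n * qp q j) * q ^ (n * (m + 1)) with hf
    have hS1 : Summable (f (k+1)) := summable_B hq (k+1) m
    have hSk : Summable (f k) := summable_B hq k m
    have hrec : ∀ n : ℕ, f (k+1) (n+1)
        = f k (n+1) + (q ^ (k+1) * q ^ (m+1)) * f (k+1) n := by
      intro n
      rw [hf]
      simp only
      have e1 : n + 1 + (k + 1) = (n + k + 1) + 1 := by omega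
      have e2 : n + 1 + k = (n + k) + 1 := by omega
      have e3 : n + (k + 1) = (n + k) + 1 := by omega
      rw [e1, e2, e3, qp_succ (n+k+1), qp_succ (n+k), qp_succ n, qp_succ k]
      have h1 := qp_ne hq n
      have h2 := qp_ne hq k
      have h3 := one_sub_pow_ne hq n
      have h4 := one_sub_pow_ne hq k
      have h5 : ((n:ℕ) + 1) * (m + 1) = n * (m + 1) + (m + 1) := by ring
      rw [h5, pow_add]
      field_simp
      ring
    have hz1 : f (k+1) 0 = 1 := by
      rw [hf]; simp only [Nat.zero_add, Nat.zero_mul, pow_zero, mul_one]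
      rw [qp_zero, one_mul, div_self (qp_ne hq (k+1))]
    have hz2 : f k 0 = 1 := by
      rw [hf]; simp only [Nat.zero_add, Nat.zero_mul, pow_zero, mul_one]
      rw [qp_zero, one_mul, div_self (qp_ne hq k)]
    have hs1' : Summable fun n => f k (n+1) :=
      (summable_nat_add_iff 1).mpr hSk
    have hs2' : Summable fun n => (q ^ (k+1) * q ^ (m+1)) * f (k+1) n :=
      hS1.mul_left _
    have key : ∑' n, f (k+1) n
        = ∑' n, f k n + (q ^ (k+1) * q ^ (m+1)) * ∑' n, f (k+1) n := by
      conv_lhs => rw [Summable.tsum_eq_zero_add hS1]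
      rw [hz1, tsum_congr hrec, Summable.tsum_add hs1' hs2', tsum_mul_left]
      conv_rhs => rw [Summable.tsum_eq_zero_add hSk, hz2]
      ring
    have hw : (1 : ℂ) - q ^ (m + k + 2) ≠ 0 := by
      have := one_sub_pow_ne hq (m + k + 1)
      rwa [show m + k + 1 + 1 = m + k + 2 by omega] at this
    have ihf : ∑' n, f k n = qp q m / qp q (m + 1 + k) := ih
    have hqpk := qp_ne hq (m + 1 + k)
    rw [eq_div_iff hqpk] at ihf
    have hpw : q ^ (k+1) * q ^ (m+1) = q ^ (m + k + 2) := by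
      rw [← pow_add]; congr 1; omega
    rw [hpw] at key
    have hS' : (∑' n, f (k+1) n) * (1 - q ^ (m + k + 2)) = ∑' n, f k n := by
      linear_combination key
    have hsolve : ∑' n, f (k+1) n = qp q m / qp q (m + 1 + (k + 1)) := by
      have e4 : m + 1 + (k + 1) = (m + 1 + k) + 1 := by omega
      rw [e4, qp_succ]
      have e5 : m + 1 + k + 1 = m + k + 2 := by omega
      rw [e5, eq_div_iff (mul_ne_zero hqpk hw)]
      calc (∑' n, f (k+1) n) * (qp q (m + 1 + k) * (1 - q ^ (m + k + 2)))
          = ((∑' n, f (k+1) n) * (1 - q ^ (m + k + 2))) * qp q (m + 1 + k) := by ring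
        _ = (∑' n, f k n) * qp q (m + 1 + k) := by rw [hS']
        _ = qp q m := ihf
    exact hsolve
end bq

section euler
variable {q : ℂ} (hq : ‖q‖ < 1)
include hq

lemma sum_inv_qp (m : ℕ) :
    ∑' n : ℕ, q ^ (n * (m + 1)) / qp q n = qp q m / qpInf q := by
  have hr0 : (0 : ℝ) ≤ ‖q‖ := norm_nonneg q
  set f : ℕ → ℕ → ℂ :=
    fun k n => qp q (n + k) / (qp q n * qp q k) * q ^ (n * (m + 1)) with hf
  set g : ℕ → ℂ := fun n => q ^ (n * (m + 1)) / qp q n with hg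
  -- dominated convergence
  have h_sum : Summable fun n : ℕ => qC q * ‖q‖ ^ n :=
    (summable_geometric_of_lt_one hr0 hq).mul_left _
  have hab : ∀ n : ℕ, Tendsto (fun k => f k n) atTop (𝓝 (g n)) := by
    intro n
    have heq : ∀ k : ℕ, f k n
        = (∏ i ∈ range n, (1 - q ^ (k + i + 1))) * g n := by
      intro k
      rw [hf, hg]
      simp only
      have : qp q (n + k) = qp q k * ∏ i ∈ range n, (1 - q ^ (k + i + 1)) := by
        rw [Nat.add_comm n k]
        unfold qp
        rw [Finset.prod_range_add]
      rw [this]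
      have h1 := qp_ne hq n
      have h2 := qp_ne hq k
      field_simp
    simp only [heq]
    have hlim : Tendsto (fun k : ℕ => ∏ i ∈ range n, (1 - q ^ (k + i + 1)))
        atTop (𝓝 1) := by
      have : Tendsto (fun k : ℕ => ∏ i ∈ range n, (1 - q ^ (k + i + 1)))
          atTop (𝓝 (∏ i ∈ range n, (1 : ℂ))) := by
        apply tendsto_finset_prod
        intro i _
        have hq0 : Tendsto (fun k : ℕ => q ^ (k + i + 1)) atTop (𝓝 0) := by
          have h1 : Tendsto (fun k : ℕ => q ^ k) atTop (𝓝 0) :=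
            tendsto_pow_atTop_nhds_zero_of_norm_lt_one hq
          have h2 : ∀ k : ℕ, q ^ (k + i + 1) = q ^ k * q ^ (i + 1) := by
            intro k; ring
          simp only [h2]
          simpa using h1.mul_const (q ^ (i + 1))
        simpa using (tendsto_const_nhds (x := (1:ℂ))).sub hq0
      simpa using this
    simpa using hlim.mul_const (g n)
  have h_bound : ∀ k : ℕ, ∀ n : ℕ, ‖f k n‖ ≤ qC q * ‖q‖ ^ n := by
    intro k n
    rw [hf]
    simp only [norm_mul]
    refine mul_le_mul (B_norm_le hq n k) ?_ (norm_nonneg _) (qC_pos hq).le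
    rw [norm_pow]
    exact pow_le_pow_of_le_one hr0 hq.le (by nlinarith)
  have hmain : Tendsto (fun k => ∑' n, f k n) atTop (𝓝 (∑' n, g n)) :=
    tendsto_tsum_of_dominated_convergence h_sum hab (Eventually.of_forall h_bound)
  have heval : ∀ k : ℕ, ∑' n, f k n = qp q m / qp q (m + 1 + k) := fun k => sum_B_eq hq k m
  simp only [heval] at hmain
  have hlim2 : Tendsto (fun k : ℕ => qp q m / qp q (m + 1 + k)) atTop
      (𝓝 (qp q m / qpInf q)) := by
    apply Tendsto.div tendsto_const_nhds ?_ (qpInf_ne hq)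
    have : Tendsto (fun k : ℕ => m + 1 + k) atTop atTop := by
      simpa [Nat.add_comm] using tendsto_add_atTop_nat (m + 1)
    exact (qp_tendsto hq).comp this
  exact tendsto_nhds_unique hmain hlim2

end euler

/-- the general term of the 5-fold sum -/
noncomputable def tm (q : ℂ) (n₁ n₂ n₃ n₄ n₅ : ℕ) : ℂ :=
  q ^ (n₁ * n₂ + n₁ * n₅ + n₂ * n₃ + n₃ * n₄ + n₄ * n₅ + n₁ + 2 * n₂ + n₃ + n₄ + 2 * n₅) /
    (qp q n₁ * qp q n₂ * qp q n₃ * qp q n₄ * qp q n₅)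

/-- the coordinate permutation used to reorder the quintuple sum -/
def perm5 : (ℕ × ℕ × ℕ × ℕ × ℕ) ≃ (ℕ × ℕ × ℕ × ℕ × ℕ) where
  toFun p := (p.2.2.2.2, p.1, p.2.2.2.1, p.2.2.1, p.2.1)
  invFun p := (p.2.1, p.2.2.2.2, p.2.2.2.1, p.2.2.1, p.1)
  left_inv := by rintro ⟨a, b, c, d, e⟩; rfl
  right_inv := by rintro ⟨a, b, c, d, e⟩; rfl

/-- the diagonal equivalence -/
def diagEquiv : (Σ m : ℕ, Fin (m + 1)) ≃ ℕ × ℕ where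
  toFun s := (s.2.1, s.1 - s.2.1)
  invFun p := ⟨p.1 + p.2, ⟨p.1, by omega⟩⟩
  left_inv := by
    rintro ⟨m, ⟨k, hk⟩⟩
    refine Sigma.ext (by simp; omega) ?_
    rw [Fin.heq_ext_iff (by simp; omega)]
  right_inv := by rintro ⟨a, b⟩; simp

section main
variable {q : ℂ} (hq : ‖q‖ < 1)
include hq

lemma summable_geo_pair : Summable fun p : ℕ × ℕ => ‖q‖ ^ p.1 * ‖q‖ ^ p.2 := by
  have hgeo : Summable fun n : ℕ => ‖q‖ ^ n :=
    summable_geometric_of_lt_one (norm_nonneg q) hq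
  exact hgeo.mul_of_nonneg hgeo (fun n => pow_nonneg (norm_nonneg q) n)
    (fun n => pow_nonneg (norm_nonneg q) n)

include hq in
set_option maxHeartbeats 1000000 in
lemma summable_tm :
    Summable fun p : ℕ × ℕ × ℕ × ℕ × ℕ => tm q p.1 p.2.1 p.2.2.1 p.2.2.2.1 p.2.2.2.2 := by
  have hr0 : (0 : ℝ) ≤ ‖q‖ := norm_nonneg q
  set c : ℝ := Real.exp (-(‖q‖ / (1 - ‖q‖) ^ 2)) with hc
  have hcpos : 0 < c := Real.exp_pos _
  have hgeo : Summable fun n : ℕ => ‖q‖ ^ n :=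
    summable_geometric_of_lt_one hr0 hq
  have hnn : ∀ n : ℕ, (0:ℝ) ≤ ‖q‖ ^ n := fun n => pow_nonneg hr0 n
  have h2 : Summable fun p : ℕ × ℕ => ‖q‖ ^ p.1 * ‖q‖ ^ p.2 :=
    hgeo.mul_of_nonneg hgeo hnn hnn
  have h3 : Summable fun p : ℕ × ℕ × ℕ => ‖q‖ ^ p.1 * (‖q‖ ^ p.2.1 * ‖q‖ ^ p.2.2) :=
    hgeo.mul_of_nonneg h2 hnn (fun p => mul_nonneg (hnn _) (hnn _))
  have h4 : Summable fun p : ℕ × ℕ × ℕ × ℕ =>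
      ‖q‖ ^ p.1 * (‖q‖ ^ p.2.1 * (‖q‖ ^ p.2.2.1 * ‖q‖ ^ p.2.2.2)) :=
    hgeo.mul_of_nonneg h3 hnn
      (fun p => mul_nonneg (hnn _) (mul_nonneg (hnn _) (hnn _)))
  have h5 : Summable fun p : ℕ × ℕ × ℕ × ℕ × ℕ =>
      ‖q‖ ^ p.1 * (‖q‖ ^ p.2.1 * (‖q‖ ^ p.2.2.1 * (‖q‖ ^ p.2.2.2.1 * ‖q‖ ^ p.2.2.2.2))) :=
    hgeo.mul_of_nonneg h4 hnn
      (fun p => mul_nonneg (hnn _) (mul_nonneg (hnn _) (mul_nonneg (hnn _) (hnn _))))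
  apply Summable.of_norm_bounded (h5.mul_left ((c⁻¹) ^ 5))
  rintro ⟨n₁, n₂, n₃, n₄, n₅⟩
  simp only [tm]
  rw [norm_div, norm_pow]
  have hE : n₁ + n₂ + n₃ + n₄ + n₅
      ≤ n₁ * n₂ + n₁ * n₅ + n₂ * n₃ + n₃ * n₄ + n₄ * n₅ + n₁ + 2 * n₂ + n₃ + n₄ + 2 * n₅ := by
    have h : n₁ * n₂ + n₁ * n₅ + n₂ * n₃ + n₃ * n₄ + n₄ * n₅ + n₁ + 2 * n₂ + n₃ + n₄ + 2 * n₅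
        = (n₁ * n₂ + n₁ * n₅ + n₂ * n₃ + n₃ * n₄ + n₄ * n₅)
          + (n₁ + 2 * n₂ + n₃ + n₄ + 2 * n₅) := by ring
    rw [h]
    calc n₁ + n₂ + n₃ + n₄ + n₅ ≤ n₁ + 2 * n₂ + n₃ + n₄ + 2 * n₅ := by omega
      _ ≤ _ := Nat.le_add_left _ _
  have hnum : ‖q‖ ^ (n₁ * n₂ + n₁ * n₅ + n₂ * n₃ + n₃ * n₄ + n₄ * n₅ + n₁ + 2 * n₂ + n₃
      + n₄ + 2 * n₅) ≤ ‖q‖ ^ (n₁ + n₂ + n₃ + n₄ + n₅) :=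
    pow_le_pow_of_le_one hr0 hq.le hE
  have hden : c ^ 5 ≤ ‖qp q n₁ * qp q n₂ * qp q n₃ * qp q n₄ * qp q n₅‖ := by
    simp only [norm_mul]
    have l1 := qp_norm_lb hq n₁
    have l2 := qp_norm_lb hq n₂
    have l3 := qp_norm_lb hq n₃
    have l4 := qp_norm_lb hq n₄
    have l5 := qp_norm_lb hq n₅
    rw [← hc] at l1 l2 l3 l4 l5
    calc c ^ 5 = c * c * c * c * c := by ring
      _ ≤ ‖qp q n₁‖ * ‖qp q n₂‖ * ‖qp q n₃‖ * ‖qp q n₄‖ * ‖qp q n₅‖ := by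
          have b1 : (0:ℝ) ≤ c := hcpos.le
          gcongr
  have hdenpos : (0:ℝ) < c ^ 5 := by positivity
  calc ‖q‖ ^ (n₁ * n₂ + n₁ * n₅ + n₂ * n₃ + n₃ * n₄ + n₄ * n₅ + n₁ + 2 * n₂ + n₃ + n₄ + 2 * n₅)
        / ‖qp q n₁ * qp q n₂ * qp q n₃ * qp q n₄ * qp q n₅‖
      ≤ ‖q‖ ^ (n₁ + n₂ + n₃ + n₄ + n₅) / c ^ 5 :=
        div_le_div₀ (hnn _) hnum hdenpos hden
    _ = (c⁻¹) ^ 5 * (‖q‖ ^ n₁ * (‖q‖ ^ n₂ * (‖q‖ ^ n₃ * (‖q‖ ^ n₄ * ‖q‖ ^ n₅)))) := by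
        rw [div_eq_mul_inv, ← inv_pow]
        ring

lemma stageE (a b c d : ℕ) :
    ∑' e : ℕ, tm q e a d c b
      = qp q (a + b) / qpInf q
        * (q ^ (a * d + d * c + c * b + 2 * a + d + c + 2 * b)
          / (qp q a * qp q d * qp q c * qp q b)) := by
  have h : ∀ e : ℕ, tm q e a d c b
      = q ^ (e * ((a + b) + 1)) / qp q e
        * (q ^ (a * d + d * c + c * b + 2 * a + d + c + 2 * b)
          / (qp q a * qp q d * qp q c * qp q b)) := by
    intro e
    unfold tm
    rw [show e * a + e * b + a * d + d * c + c * b + e + 2 * a + d + c + 2 * b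
      = e * ((a + b) + 1) + (a * d + d * c + c * b + 2 * a + d + c + 2 * b) by ring, pow_add]
    ring
  rw [tsum_congr h, tsum_mul_right, sum_inv_qp hq (a + b)]

lemma stageD (a b c : ℕ) :
    ∑' d : ℕ, qp q (a + b) / qpInf q
        * (q ^ (a * d + d * c + c * b + 2 * a + d + c + 2 * b)
          / (qp q a * qp q d * qp q c * qp q b))
      = qp q (a + b) / qpInf q
        * (qp q (a + c) / qpInf q
          * (q ^ (c * b + 2 * a + c + 2 * b) / (qp q a * qp q c * qp q b))) := by
  have h : ∀ d : ℕ, qp q (a + b) / qpInf q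
      * (q ^ (a * d + d * c + c * b + 2 * a + d + c + 2 * b)
        / (qp q a * qp q d * qp q c * qp q b))
      = q ^ (d * ((a + c) + 1)) / qp q d
        * (qp q (a + b) / qpInf q
          * (q ^ (c * b + 2 * a + c + 2 * b) / (qp q a * qp q c * qp q b))) := by
    intro d
    rw [show a * d + d * c + c * b + 2 * a + d + c + 2 * b
      = d * ((a + c) + 1) + (c * b + 2 * a + c + 2 * b) by ring, pow_add]
    ring
  rw [tsum_congr h, tsum_mul_right, sum_inv_qp hq (a + c)]
  ring

lemma stageC (a b : ℕ) :
    ∑' c : ℕ, qp q (a + b) / qpInf q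
        * (qp q (a + c) / qpInf q
          * (q ^ (c * b + 2 * a + c + 2 * b) / (qp q a * qp q c * qp q b)))
      = q ^ (2 * a + 2 * b) / (qpInf q ^ 2 * (1 - q ^ (a + b + 1))) := by
  have h : ∀ c : ℕ, qp q (a + b) / qpInf q
      * (qp q (a + c) / qpInf q
        * (q ^ (c * b + 2 * a + c + 2 * b) / (qp q a * qp q c * qp q b)))
      = qp q (c + a) / (qp q c * qp q a) * q ^ (c * (b + 1))
        * (qp q (a + b) * q ^ (2 * a + 2 * b) / (qpInf q ^ 2 * qp q b)) := by
    intro c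
    rw [show c * b + 2 * a + c + 2 * b = c * (b + 1) + (2 * a + 2 * b) by ring, pow_add,
      show a + c = c + a by ring]
    ring
  rw [tsum_congr h, tsum_mul_right, sum_B_eq hq a b,
    show b + 1 + a = (a + b) + 1 by omega, qp_succ]
  have h1 := qp_ne hq a
  have h2 := qp_ne hq b
  have h3 := qp_ne hq (a + b)
  have h4 := qpInf_ne hq
  have h5 := one_sub_pow_ne hq (a + b)
  field_simp

lemma summable_H :
    Summable fun p : ℕ × ℕ =>
      q ^ (2 * p.1 + 2 * p.2) / (qpInf q ^ 2 * (1 - q ^ (p.1 + p.2 + 1))) := by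
  have hr0 : (0 : ℝ) ≤ ‖q‖ := norm_nonneg q
  have h1r : (0 : ℝ) < 1 - ‖q‖ := by linarith
  have hipos : (0 : ℝ) < ‖qpInf q‖ ^ 2 * (1 - ‖q‖) := by
    have := qpInf_ne hq
    have : (0:ℝ) < ‖qpInf q‖ := norm_pos_iff.2 this
    positivity
  have hnn : ∀ n : ℕ, (0:ℝ) ≤ ‖q‖ ^ n := fun n => pow_nonneg hr0 n
  apply Summable.of_norm_bounded ((summable_geo_pair hq).mul_right (‖qpInf q‖ ^ 2 * (1 - ‖q‖))⁻¹)
  rintro ⟨a, b⟩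
  simp only [norm_div, norm_pow, norm_mul]
  have hnum : ‖q‖ ^ (2 * a + 2 * b) ≤ ‖q‖ ^ (a + b) :=
    pow_le_pow_of_le_one hr0 hq.le (by omega)
  have hden : ‖qpInf q‖ ^ 2 * (1 - ‖q‖) ≤ ‖qpInf q‖ ^ 2 * ‖1 - q ^ (a + b + 1)‖ := by
    refine mul_le_mul_of_nonneg_left ?_ (by positivity)
    have h1 : ‖q‖ ^ (a + b + 1) ≤ ‖q‖ :=
      pow_le_of_le_one hr0 hq.le (Nat.succ_ne_zero _)
    have h2 := norm_sub_norm_le (1 : ℂ) (q ^ (a + b + 1))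
    rw [norm_one, norm_pow] at h2
    linarith
  calc ‖q‖ ^ (2 * a + 2 * b) / (‖qpInf q‖ ^ 2 * ‖1 - q ^ (a + b + 1)‖)
      ≤ ‖q‖ ^ (a + b) / (‖qpInf q‖ ^ 2 * (1 - ‖q‖)) :=
        div_le_div₀ (hnn _) hnum hipos hden
    _ = ‖q‖ ^ a * ‖q‖ ^ b * (‖qpInf q‖ ^ 2 * (1 - ‖q‖))⁻¹ := by
        rw [div_eq_mul_inv, pow_add]

lemma stageSum :
    ∑' p : ℕ × ℕ, q ^ (2 * p.1 + 2 * p.2) / (qpInf q ^ 2 * (1 - q ^ (p.1 + p.2 + 1)))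
      = ∑' m : ℕ, ((m : ℂ) + 1) * q ^ (2 * m) / (qpInf q ^ 2 * (1 - q ^ (m + 1))) := by
  set H : ℕ × ℕ → ℂ :=
    fun p => q ^ (2 * p.1 + 2 * p.2) / (qpInf q ^ 2 * (1 - q ^ (p.1 + p.2 + 1))) with hH
  have hHs : Summable H := summable_H hq
  have hs2 : Summable fun s : Σ m : ℕ, Fin (m + 1) => H (diagEquiv s) :=
    diagEquiv.summable_iff.mpr hHs
  rw [← diagEquiv.tsum_eq H, Summable.tsum_sigma hs2]
  refine tsum_congr fun m => ?_
  have hterm : ∀ k : Fin (m + 1), H (diagEquiv ⟨m, k⟩)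
      = q ^ (2 * m) / (qpInf q ^ 2 * (1 - q ^ (m + 1))) := by
    rintro ⟨k, hk⟩
    have hkm : k ≤ m := by omega
    show H (k, m - k) = _
    rw [hH]
    simp only
    rw [show 2 * k + 2 * (m - k) = 2 * m by omega, show k + (m - k) + 1 = m + 1 by omega]
  rw [tsum_congr hterm, tsum_fintype]
  rw [Finset.sum_const, Finset.card_univ, Fintype.card_fin, nsmul_eq_mul]
  push_cast
  ring

end main

theorem C5_shifted_graph_series' (q : ℂ) (h0 : 0 < ‖q‖) (h1 : ‖q‖ < 1) :
    (∑' (n₁ : ℕ) (n₂ : ℕ) (n₃ : ℕ) (n₄ : ℕ) (n₅ : ℕ),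
      q ^ (n₁ * n₂ + n₁ * n₅ + n₂ * n₃ + n₃ * n₄ + n₄ * n₅ + n₁ + 2 * n₂ + n₃ + n₄ + 2 * n₅) /
        (qp q n₁ * qp q n₂ * qp q n₃ * qp q n₄ * qp q n₅))
      = q⁻¹ ^ 2 / (qpInf q) ^ 2 *
          ∑' n : ℕ, ((n : ℂ) + 1) * q ^ (2 * (n + 1)) / (1 - q ^ (n + 1)) := by
  have hq : ‖q‖ < 1 := h1
  have hq0 : q ≠ 0 := by
    intro h
    rw [h] at h0
    simp at h0
  set F : ℕ × ℕ × ℕ × ℕ × ℕ → ℂ :=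
    fun p => tm q p.1 p.2.1 p.2.2.1 p.2.2.2.1 p.2.2.2.2 with hFdef
  have hF : Summable F := summable_tm hq
  have hG : Summable fun p : ℕ × ℕ × ℕ × ℕ × ℕ => F (perm5 p) :=
    (perm5.summable_iff (f := F)).mpr hF
  have h_iter : ∑' p : ℕ × ℕ × ℕ × ℕ × ℕ, F p
      = ∑' (n₁ : ℕ) (n₂ : ℕ) (n₃ : ℕ) (n₄ : ℕ) (n₅ : ℕ),
        q ^ (n₁ * n₂ + n₁ * n₅ + n₂ * n₃ + n₃ * n₄ + n₄ * n₅ + n₁ + 2 * n₂ + n₃ + n₄ + 2 * n₅) /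
          (qp q n₁ * qp q n₂ * qp q n₃ * qp q n₄ * qp q n₅) := by
    rw [Summable.tsum_prod hF]
    refine tsum_congr fun n₁ => ?_
    rw [Summable.tsum_prod (hF.prod_factor n₁)]
    refine tsum_congr fun n₂ => ?_
    rw [Summable.tsum_prod ((hF.prod_factor n₁).prod_factor n₂)]
    refine tsum_congr fun n₃ => ?_
    rw [Summable.tsum_prod (((hF.prod_factor n₁).prod_factor n₂).prod_factor n₃)]
    refine tsum_congr fun n₄ => tsum_congr fun n₅ => ?_
    rfl
  have h_perm : ∑' p : ℕ × ℕ × ℕ × ℕ × ℕ, F (perm5 p) = ∑' p : ℕ × ℕ × ℕ × ℕ × ℕ, F p :=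
    perm5.tsum_eq F
  have h_iter2 : ∑' p : ℕ × ℕ × ℕ × ℕ × ℕ, F (perm5 p)
      = ∑' (a : ℕ) (b : ℕ) (c : ℕ) (d : ℕ) (e : ℕ), tm q e a d c b := by
    rw [Summable.tsum_prod hG]
    refine tsum_congr fun a => ?_
    rw [Summable.tsum_prod (hG.prod_factor a)]
    refine tsum_congr fun b => ?_
    rw [Summable.tsum_prod ((hG.prod_factor a).prod_factor b)]
    refine tsum_congr fun c => ?_
    rw [Summable.tsum_prod (((hG.prod_factor a).prod_factor b).prod_factor c)]
    refine tsum_congr fun d => tsum_congr fun e => ?_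
    rfl
  have h_eval : ∑' (a : ℕ) (b : ℕ) (c : ℕ) (d : ℕ) (e : ℕ), tm q e a d c b
      = ∑' (a : ℕ) (b : ℕ),
          q ^ (2 * a + 2 * b) / (qpInf q ^ 2 * (1 - q ^ (a + b + 1))) := by
    refine tsum_congr fun a => tsum_congr fun b => ?_
    calc ∑' (c : ℕ) (d : ℕ) (e : ℕ), tm q e a d c b
        = ∑' (c : ℕ) (d : ℕ), qp q (a + b) / qpInf q
            * (q ^ (a * d + d * c + c * b + 2 * a + d + c + 2 * b)
              / (qp q a * qp q d * qp q c * qp q b)) :=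
          tsum_congr fun c => tsum_congr fun d => stageE hq a b c d
      _ = ∑' (c : ℕ), qp q (a + b) / qpInf q
            * (qp q (a + c) / qpInf q
              * (q ^ (c * b + 2 * a + c + 2 * b) / (qp q a * qp q c * qp q b))) :=
          tsum_congr fun c => stageD hq a b c
      _ = q ^ (2 * a + 2 * b) / (qpInf q ^ 2 * (1 - q ^ (a + b + 1))) := stageC hq a b
  have h_pair : ∑' (a : ℕ) (b : ℕ),
      q ^ (2 * a + 2 * b) / (qpInf q ^ 2 * (1 - q ^ (a + b + 1)))
      = ∑' p : ℕ × ℕ, q ^ (2 * p.1 + 2 * p.2) / (qpInf q ^ 2 * (1 - q ^ (p.1 + p.2 + 1))) :=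
    (Summable.tsum_prod (summable_H hq)).symm
  have h_rhs : q⁻¹ ^ 2 / (qpInf q) ^ 2 *
      ∑' n : ℕ, ((n : ℂ) + 1) * q ^ (2 * (n + 1)) / (1 - q ^ (n + 1))
      = ∑' m : ℕ, ((m : ℂ) + 1) * q ^ (2 * m) / (qpInf q ^ 2 * (1 - q ^ (m + 1))) := by
    rw [← tsum_mul_left]
    refine tsum_congr fun n => ?_
    have h4 := qpInf_ne hq
    have h5 := one_sub_pow_ne hq n
    rw [show 2 * (n + 1) = 2 * n + 2 by ring, pow_add]
    field_simp
  rw [← h_iter, ← h_perm, h_iter2, h_eval, h_pair, stageSum hq, h_rhs]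
end

section
/- For every complex number q with 0 < |q| < 1 and all natural numbers a, b ≥ 0, one has Σ_{n₁,n₂ ≥ 0} q^{n₁n₂+(a+1)n₁+(b+1)n₂} / ((q)_{n₁}(q)_{n₂}) = 1/( (q^{b+1};q)_{a+1} · (q^{a+1};q)_∞ ), and this also equals 1/( (q^{a+1};q)_{b+1} · (q^{b+1};q)_∞ ). -/
open Finset Filter Topology

/-- The general finite q-Pochhammer symbol `(x;q)_m = ∏_{j=0}^{m-1} (1 - x q^j)`. -/
noncomputable def qpg (q x : ℂ) (m : ℕ) : ℂ := ∏ j ∈ Finset.range m, (1 - x * q ^ j)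

/-- The general infinite q-Pochhammer symbol `(x;q)_∞ = ∏_{j=0}^{∞} (1 - x q^j)`. -/
noncomputable def qpgInf (q x : ℂ) : ℂ := ∏' j : ℕ, (1 - x * q ^ j)

namespace Framing

lemma weier (s : Finset ℕ) (c : ℕ → ℝ) (h0 : ∀ i, 0 ≤ c i) (h1 : ∀ i, c i ≤ 1) :
    1 - ∑ i ∈ s, c i ≤ ∏ i ∈ s, (1 - c i) := by
  induction s using Finset.cons_induction with
  | empty => simp
  | cons a s ha ih =>
    rw [Finset.prod_cons, Finset.sum_cons]
    have hca := h0 a; have hca1 := h1 a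
    have hs : (0:ℝ) ≤ ∑ i ∈ s, c i := Finset.sum_nonneg (fun i _ => h0 i)
    have hp : (0:ℝ) ≤ ∏ i ∈ s, (1 - c i) :=
      Finset.prod_nonneg (fun i _ => by linarith [h1 i])
    nlinarith [ih]

lemma lowbd (c : ℕ → ℝ) (h0 : ∀ i, 0 ≤ c i) (h1 : ∀ i, c i < 1) (hs : Summable c) :
    ∃ δ : ℝ, 0 < δ ∧ ∀ n, δ ≤ ∏ j ∈ Finset.range n, (1 - c j) := by
  have htail : Tendsto (fun i => ∑' k, c (k + i)) atTop (𝓝 0) := tendsto_sum_nat_add c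
  obtain ⟨J, hJ⟩ := (htail.eventually (eventually_le_nhds (by norm_num : (0:ℝ) < 1/2))).exists
  have hPJ : 0 < ∏ j ∈ Finset.range J, (1 - c j) :=
    Finset.prod_pos (fun j _ => by linarith [h1 j])
  refine ⟨(∏ j ∈ Finset.range J, (1 - c j)) / 2, by positivity, fun n => ?_⟩
  rcases le_or_gt n J with hn | hn
  · have hsplit := Finset.prod_range_mul_prod_Ico (fun j => 1 - c j) hn
    have h1' : ∏ i ∈ Finset.Ico n J, (1 - c i) ≤ 1 :=
      Finset.prod_le_one (fun i _ => by linarith [h1 i]) (fun i _ => by linarith [h0 i])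
    have hpn : 0 < ∏ j ∈ Finset.range n, (1 - c j) :=
      Finset.prod_pos (fun j _ => by linarith [h1 j])
    nlinarith
  · have hsplit := Finset.prod_range_mul_prod_Ico (fun j => 1 - c j) hn.le
    have hsum : ∑ i ∈ Finset.Ico J n, c i ≤ 1/2 := by
      have h1 : ∑ i ∈ Finset.Ico J n, c i = ∑ i ∈ Finset.range (n - J), c (J + i) :=
        Finset.sum_Ico_eq_sum_range c J n
      have hs' : Summable fun k => c (k + J) := (summable_nat_add_iff J).2 hs
      have h2 : ∑ i ∈ Finset.range (n - J), c (J + i) ≤ ∑' k, c (k + J) := by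
        have h3 := Summable.sum_le_tsum (Finset.range (n - J)) (fun i _ => h0 (i + J)) hs'
        calc ∑ i ∈ Finset.range (n - J), c (J + i)
            = ∑ i ∈ Finset.range (n - J), c (i + J) := by
              refine Finset.sum_congr rfl fun i _ => by rw [Nat.add_comm]
          _ ≤ ∑' k, c (k + J) := h3
      linarith
    have hw := weier (Finset.Ico J n) c h0 (fun i => (h1 i).le)
    nlinarith [hsplit, hPJ]

variable {q x t : ℂ}

lemma hc_sum (hq : ‖q‖ < 1) (x : ℂ) : Summable fun j : ℕ => ‖x‖ * ‖q‖ ^ j :=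
  (summable_geometric_of_lt_one (norm_nonneg _) hq).mul_left _

lemma hc_lt_one (hq : ‖q‖ < 1) (hx : ‖x‖ < 1) (j : ℕ) : ‖x‖ * ‖q‖ ^ j < 1 :=
  lt_of_le_of_lt
    (mul_le_of_le_one_right (norm_nonneg x) (pow_le_one₀ (norm_nonneg q) hq.le))
    hx

lemma factor_ne (hq : ‖q‖ < 1) (hx : ‖x‖ < 1) (j : ℕ) : (1 : ℂ) - x * q ^ j ≠ 0 := by
  intro h
  have h2 : x * q ^ j = 1 := by linear_combination -h
  have h3 : ‖x * q ^ j‖ = 1 := by rw [h2, norm_one]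
  rw [norm_mul, norm_pow] at h3
  have := hc_lt_one hq hx j
  linarith [h3]

lemma one_sub_ne {z : ℂ} (hz : ‖z‖ < 1) : (1 : ℂ) - z ≠ 0 := by
  intro h
  have h2 : z = 1 := by linear_combination -h
  rw [h2, norm_one] at hz; linarith

lemma qpg_lb (hq : ‖q‖ < 1) (hx : ‖x‖ < 1) :
    ∃ δ : ℝ, 0 < δ ∧ ∀ n, δ ≤ ‖qpg q x n‖ := by
  obtain ⟨δ, hδ, h⟩ := lowbd (fun j => ‖x‖ * ‖q‖ ^ j) (fun i => by positivity)
    (hc_lt_one hq hx) (hc_sum hq x)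
  refine ⟨δ, hδ, fun n => (h n).trans ?_⟩
  rw [qpg, norm_prod]
  refine Finset.prod_le_prod (fun j _ => by linarith [hc_lt_one hq hx j]) (fun j _ => ?_)
  calc 1 - ‖x‖ * ‖q‖ ^ j = ‖(1:ℂ)‖ - ‖x * q ^ j‖ := by rw [norm_one, norm_mul, norm_pow]
    _ ≤ ‖1 - x * q ^ j‖ := norm_sub_norm_le _ _

lemma qpg_ne_zero (hq : ‖q‖ < 1) (hx : ‖x‖ < 1) (n : ℕ) : qpg q x n ≠ 0 :=
  Finset.prod_ne_zero_iff.2 fun j _ => factor_ne hq hx j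

lemma qpg_ub (hq : ‖q‖ < 1) (x : ℂ) (n : ℕ) :
    ‖qpg q x n‖ ≤ Real.exp (‖x‖ * (1 - ‖q‖)⁻¹) := by
  rw [qpg, norm_prod]
  calc ∏ j ∈ Finset.range n, ‖1 - x * q ^ j‖
      ≤ ∏ j ∈ Finset.range n, Real.exp (‖x‖ * ‖q‖ ^ j) := by
        refine Finset.prod_le_prod (fun j _ => norm_nonneg _) (fun j _ => ?_)
        calc ‖1 - x * q ^ j‖ ≤ ‖(1:ℂ)‖ + ‖x * q ^ j‖ := norm_sub_le _ _
          _ = 1 + ‖x‖ * ‖q‖ ^ j := by rw [norm_one, norm_mul, norm_pow]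
          _ ≤ Real.exp (‖x‖ * ‖q‖ ^ j) := by
              have := Real.add_one_le_exp (‖x‖ * ‖q‖ ^ j); linarith
    _ = Real.exp (∑ j ∈ Finset.range n, ‖x‖ * ‖q‖ ^ j) := by rw [Real.exp_sum]
    _ ≤ Real.exp (‖x‖ * (1 - ‖q‖)⁻¹) := by
        apply Real.exp_le_exp.2
        have h1 := Summable.sum_le_tsum (Finset.range n) (fun i _ => by positivity : ∀ i ∉ Finset.range n,
          (0:ℝ) ≤ ‖x‖ * ‖q‖ ^ i) (hc_sum hq x)
        have h2 : ∑' j : ℕ, ‖x‖ * ‖q‖ ^ j = ‖x‖ * (1 - ‖q‖)⁻¹ := by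
          rw [tsum_mul_left, tsum_geometric_of_lt_one (norm_nonneg _) hq]
        linarith

lemma multipliable_qpg (hq : ‖q‖ < 1) (hx : ‖x‖ < 1) :
    Multipliable fun j : ℕ => 1 - x * q ^ j := by
  have htends : Tendsto (fun J : ℕ => ‖x‖ * ‖q‖ ^ J) atTop (𝓝 0) := by
    simpa using (tendsto_pow_atTop_nhds_zero_of_lt_one (norm_nonneg q) hq).const_mul ‖x‖
  obtain ⟨J, hJ⟩ := (htends.eventually
    (eventually_le_nhds (by norm_num : (0:ℝ) < 1/2))).exists
  have hlog : Summable fun j : ℕ => Complex.log (1 - x * q ^ j) := by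
    rw [← summable_nat_add_iff J]
    apply Summable.of_norm_bounded (g := fun j => 3/2 * (‖x‖ * ‖q‖ ^ J) * ‖q‖ ^ j)
      (((summable_geometric_of_lt_one (norm_nonneg _) hq).mul_left _))
    intro j
    have hz : ‖-(x * q ^ (j + J))‖ ≤ 1/2 := by
      rw [norm_neg, norm_mul, norm_pow, pow_add]
      calc ‖x‖ * (‖q‖ ^ j * ‖q‖ ^ J) ≤ 1 * (1 * (‖x‖ * ‖q‖ ^ J)) := by
            rw [one_mul, one_mul]
            calc ‖x‖ * (‖q‖ ^ j * ‖q‖ ^ J) = (‖x‖ * ‖q‖ ^ J) * ‖q‖ ^ j := by ring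
              _ ≤ (‖x‖ * ‖q‖ ^ J) * 1 := by
                  refine mul_le_mul_of_nonneg_left (pow_le_one₀ (norm_nonneg q) hq.le) ?_
                  positivity
              _ = ‖x‖ * ‖q‖ ^ J := mul_one _
        _ ≤ 1/2 := by simpa using hJ
    have hb := Complex.norm_log_one_add_half_le_self hz
    rw [show (1:ℂ) + -(x * q ^ (j + J)) = 1 - x * q ^ (j + J) by ring] at hb
    calc ‖Complex.log (1 - x * q ^ (j + J))‖ ≤ 3/2 * ‖-(x * q ^ (j + J))‖ := hb
      _ = 3/2 * (‖x‖ * ‖q‖ ^ J) * ‖q‖ ^ j := by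
          rw [norm_neg, norm_mul, norm_pow, pow_add]; ring
  exact Complex.multipliable_of_summable_log hlog

lemma tendsto_qpg (hq : ‖q‖ < 1) (hx : ‖x‖ < 1) :
    Tendsto (fun n => qpg q x n) atTop (𝓝 (qpgInf q x)) :=
  (multipliable_qpg hq hx).hasProd.tendsto_prod_nat

lemma qpgInf_ne_zero (hq : ‖q‖ < 1) (hx : ‖x‖ < 1) : qpgInf q x ≠ 0 := by
  obtain ⟨δ, hδ, h⟩ := qpg_lb hq hx
  have hlim := (tendsto_qpg hq hx).norm
  have : δ ≤ ‖qpgInf q x‖ := ge_of_tendsto' hlim (fun n => h n)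
  intro h0
  rw [h0, norm_zero] at this; linarith

lemma qpgInf_split (hq : ‖q‖ < 1) (hx : ‖x‖ < 1) (n : ℕ) :
    qpgInf q x = qpg q x n * qpgInf q (x * q ^ n) := by
  have hshift : Multipliable fun i : ℕ => (1 - x * q ^ (i + n)) := by
    have hxn : ‖x * q ^ n‖ < 1 := by
      rw [norm_mul, norm_pow]; exact hc_lt_one hq hx n
    refine (multipliable_qpg hq hxn).congr fun i => ?_
    rw [pow_add]; ring
  have h2 := Multipliable.prod_mul_tprod_nat_mul' (f := fun j : ℕ => 1 - x * q ^ j) (k := n) hshift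
  have h3 : ∏' (i : ℕ), (1 - x * q ^ (i + n)) = qpgInf q (x * q ^ n) := by
    rw [qpgInf]
    exact tprod_congr fun i => by rw [pow_add]; ring
  rw [qpgInf, ← h2, qpg, h3]

lemma qp_eq (q : ℂ) (n : ℕ) : qp q n = qpg q q n := by
  unfold qp qpg
  exact Finset.prod_congr rfl fun j _ => by rw [pow_succ']

lemma qp_lb (hq : ‖q‖ < 1) : ∃ δ : ℝ, 0 < δ ∧ ∀ n, δ ≤ ‖qp q n‖ := by
  obtain ⟨δ, hδ, h⟩ := qpg_lb hq hq
  exact ⟨δ, hδ, fun n => by rw [qp_eq]; exact h n⟩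

lemma qp_ne_zero (hq : ‖q‖ < 1) (n : ℕ) : qp q n ≠ 0 := by
  rw [qp_eq]; exact qpg_ne_zero hq hq n

end Framing

namespace Framing

/-- summand of the q-binomial series -/
noncomputable def Gs (q x t : ℂ) (n : ℕ) : ℂ := qpg q x n * t ^ n / qp q n

/-- the q-binomial series `∑ (x;q)_n t^n / (q)_n` -/
noncomputable def G (q x t : ℂ) : ℂ := ∑' n, Gs q x t n

variable {q x t : ℂ}

lemma Gs_norm_le (hq : ‖q‖ < 1) {δ : ℝ} (hδ : 0 < δ) (hlb : ∀ n, δ ≤ ‖qp q n‖)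
    (x t : ℂ) (n : ℕ) :
    ‖Gs q x t n‖ ≤ Real.exp (‖x‖ * (1 - ‖q‖)⁻¹) / δ * ‖t‖ ^ n := by
  rw [Gs, norm_div, norm_mul, norm_pow]
  rw [div_le_iff₀ (lt_of_lt_of_le hδ (hlb n))]
  calc ‖qpg q x n‖ * ‖t‖ ^ n ≤ Real.exp (‖x‖ * (1 - ‖q‖)⁻¹) * ‖t‖ ^ n :=
        mul_le_mul_of_nonneg_right (qpg_ub hq x n) (by positivity)
    _ = Real.exp (‖x‖ * (1 - ‖q‖)⁻¹) / δ * ‖t‖ ^ n * δ := by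
        field_simp
    _ ≤ Real.exp (‖x‖ * (1 - ‖q‖)⁻¹) / δ * ‖t‖ ^ n * ‖qp q n‖ := by
        refine mul_le_mul_of_nonneg_left (hlb n) ?_
        positivity

lemma Gs_summable (hq : ‖q‖ < 1) (x : ℂ) (ht : ‖t‖ < 1) : Summable (Gs q x t) := by
  obtain ⟨δ, hδ, hlb⟩ := qp_lb hq
  exact Summable.of_norm_bounded
    (((summable_geometric_of_lt_one (norm_nonneg t) ht).mul_left _))
    (Gs_norm_le hq hδ hlb x t)

lemma Gs_zero (q x t : ℂ) : Gs q x t 0 = 1 := by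
  simp [Gs, qpg, qp]

lemma Gs_succ_sub (hq : ‖q‖ < 1) (x t : ℂ) (n : ℕ) :
    Gs q x t (n + 1) - Gs q x (q * t) (n + 1) = t * Gs q x t n - x * t * Gs q x (q * t) n := by
  have hqp : qp q (n + 1) = qp q n * (1 - q ^ (n + 1)) := Finset.prod_range_succ _ n
  have hqpg : qpg q x (n + 1) = qpg q x n * (1 - x * q ^ n) := Finset.prod_range_succ _ n
  have h1 : (1 : ℂ) - q ^ (n + 1) ≠ 0 := by
    apply one_sub_ne
    rw [norm_pow]
    exact pow_lt_one₀ (norm_nonneg q) hq (Nat.succ_ne_zero n)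
  have h2 := qp_ne_zero hq n
  rw [Gs, Gs, Gs, Gs, hqp, hqpg]
  field_simp
  ring

lemma funceq (hq : ‖q‖ < 1) (hx : ‖x‖ < 1) (ht : ‖t‖ < 1) :
    (1 - t) * G q x t = (1 - x * t) * G q x (q * t) := by
  have hqt : ‖q * t‖ < 1 := by
    rw [norm_mul]
    calc ‖q‖ * ‖t‖ ≤ 1 * ‖t‖ := mul_le_mul_of_nonneg_right hq.le (norm_nonneg t)
      _ = ‖t‖ := one_mul _
      _ < 1 := ht
  have hf := Gs_summable hq x ht
  have hg := Gs_summable hq x hqt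
  have hsub : Summable fun n => Gs q x t n - Gs q x (q * t) n := hf.sub hg
  have key : G q x t - G q x (q * t) = t * G q x t - x * t * G q x (q * t) := by
    calc G q x t - G q x (q * t) = ∑' n, (Gs q x t n - Gs q x (q * t) n) :=
          (Summable.tsum_sub hf hg).symm
      _ = (Gs q x t 0 - Gs q x (q * t) 0)
          + ∑' n, (Gs q x t (n+1) - Gs q x (q * t) (n+1)) := Summable.tsum_eq_zero_add hsub
      _ = ∑' n, (Gs q x t (n+1) - Gs q x (q * t) (n+1)) := by
          rw [Gs_zero, Gs_zero, sub_self, zero_add]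
      _ = ∑' n, (t * Gs q x t n - x * t * Gs q x (q * t) n) :=
          tsum_congr fun n => Gs_succ_sub hq x t n
      _ = ∑' n, t * Gs q x t n - ∑' n, x * t * Gs q x (q * t) n :=
          Summable.tsum_sub (hf.mul_left t) (hg.mul_left (x * t))
      _ = t * G q x t - x * t * G q x (q * t) := by
          rw [tsum_mul_left, tsum_mul_left]; rfl
  linear_combination key

lemma norm_pow_mul_lt (hq : ‖q‖ < 1) (ht : ‖t‖ < 1) (N : ℕ) : ‖q ^ N * t‖ < 1 := by
  rw [norm_mul, norm_pow]
  calc ‖q‖ ^ N * ‖t‖ ≤ 1 * ‖t‖ :=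
        mul_le_mul_of_nonneg_right (pow_le_one₀ (norm_nonneg q) hq.le) (norm_nonneg t)
    _ = ‖t‖ := one_mul _
    _ < 1 := ht

lemma telescope (hq : ‖q‖ < 1) (hx : ‖x‖ < 1) (ht : ‖t‖ < 1) (N : ℕ) :
    qpg q t N * G q x t = qpg q (x * t) N * G q x (q ^ N * t) := by
  induction N with
  | zero => simp [qpg]
  | succ N ih =>
    have ht' : ‖q ^ N * t‖ < 1 := norm_pow_mul_lt hq ht N
    have hfe := funceq hq hx ht'
    rw [show q * (q ^ N * t) = q ^ (N + 1) * t by ring] at hfe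
    rw [qpg, Finset.prod_range_succ, qpg, Finset.prod_range_succ, ← qpg, ← qpg]
    linear_combination (1 - t * q ^ N) * ih + qpg q (x * t) N * hfe

lemma G_tendsto_one (hq : ‖q‖ < 1) (x : ℂ) (ht : ‖t‖ < 1) :
    Tendsto (fun N => G q x (q ^ N * t)) atTop (𝓝 1) := by
  obtain ⟨δ, hδ, hlb⟩ := qp_lb hq
  set M : ℝ := Real.exp (‖x‖ * (1 - ‖q‖)⁻¹) / δ with hM
  have hM0 : 0 < M := by positivity
  have claim : ∀ s : ℂ, ‖s‖ ≤ ‖t‖ → ‖G q x s - 1‖ ≤ M * (1 - ‖t‖)⁻¹ * ‖s‖ := by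
    intro s hs
    have hs1 : ‖s‖ < 1 := lt_of_le_of_lt hs ht
    have hfs := Gs_summable hq x hs1
    have hsum1 : Summable fun n => M * ‖s‖ * ‖t‖ ^ n :=
      (summable_geometric_of_lt_one (norm_nonneg t) ht).mul_left _
    have hGsub : G q x s - 1 = ∑' n, Gs q x s (n + 1) := by
      rw [G, Summable.tsum_eq_zero_add hfs, Gs_zero]; ring
    have hbnd : ∀ n : ℕ, ‖Gs q x s (n + 1)‖ ≤ M * ‖s‖ * ‖t‖ ^ n := by
      intro n
      calc ‖Gs q x s (n + 1)‖ ≤ M * ‖s‖ ^ (n + 1) := Gs_norm_le hq hδ hlb x s (n + 1)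
        _ = M * ‖s‖ * ‖s‖ ^ n := by ring
        _ ≤ M * ‖s‖ * ‖t‖ ^ n := by
            refine mul_le_mul_of_nonneg_left (pow_le_pow_left₀ (norm_nonneg s) hs n) ?_
            positivity
    have hsn : Summable fun n => ‖Gs q x s (n + 1)‖ :=
      Summable.of_nonneg_of_le (fun n => norm_nonneg _) hbnd hsum1
    calc ‖G q x s - 1‖ = ‖∑' n, Gs q x s (n + 1)‖ := by rw [hGsub]
      _ ≤ ∑' n, ‖Gs q x s (n + 1)‖ := norm_tsum_le_tsum_norm hsn
      _ ≤ ∑' n : ℕ, M * ‖s‖ * ‖t‖ ^ n := Summable.tsum_le_tsum hbnd hsn hsum1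
      _ = M * ‖s‖ * (1 - ‖t‖)⁻¹ := by
          rw [tsum_mul_left, tsum_geometric_of_lt_one (norm_nonneg t) ht]
      _ = M * (1 - ‖t‖)⁻¹ * ‖s‖ := by ring
  rw [show (1 : ℂ) = 1 from rfl]
  have hzero : Tendsto (fun N : ℕ => ‖G q x (q ^ N * t) - 1‖) atTop (𝓝 0) := by
    apply squeeze_zero (fun N => norm_nonneg _)
      (fun N => ?_) (g := fun N => M * (1 - ‖t‖)⁻¹ * ‖t‖ * ‖q‖ ^ N)
    · have : Tendsto (fun N : ℕ => ‖q‖ ^ N) atTop (𝓝 0) :=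
        tendsto_pow_atTop_nhds_zero_of_lt_one (norm_nonneg q) hq
      simpa using this.const_mul (M * (1 - ‖t‖)⁻¹ * ‖t‖)
    · calc ‖G q x (q ^ N * t) - 1‖ ≤ M * (1 - ‖t‖)⁻¹ * ‖q ^ N * t‖ := by
            apply claim
            rw [norm_mul, norm_pow]
            calc ‖q‖ ^ N * ‖t‖ ≤ 1 * ‖t‖ :=
                  mul_le_mul_of_nonneg_right (pow_le_one₀ (norm_nonneg q) hq.le) (norm_nonneg t)
              _ = ‖t‖ := one_mul _
        _ = M * (1 - ‖t‖)⁻¹ * ‖t‖ * ‖q‖ ^ N := by rw [norm_mul, norm_pow]; ring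
  have := tendsto_iff_norm_sub_tendsto_zero.2 hzero
  exact this

lemma KB (hq : ‖q‖ < 1) (hx : ‖x‖ < 1) (ht : ‖t‖ < 1) :
    qpgInf q t * G q x t = qpgInf q (x * t) := by
  have hxt : ‖x * t‖ < 1 := by
    rw [norm_mul]
    calc ‖x‖ * ‖t‖ ≤ 1 * ‖t‖ := mul_le_mul_of_nonneg_right hx.le (norm_nonneg t)
      _ = ‖t‖ := one_mul _
      _ < 1 := ht
  have h1 : Tendsto (fun N => qpg q t N * G q x t) atTop (𝓝 (qpgInf q t * G q x t)) :=
    (tendsto_qpg hq ht).mul_const _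
  have h2 : Tendsto (fun N => qpg q (x * t) N * G q x (q ^ N * t)) atTop
      (𝓝 (qpgInf q (x * t) * 1)) :=
    (tendsto_qpg hq hxt).mul (G_tendsto_one hq x ht)
  have h3 := tendsto_nhds_unique (h1.congr (fun N => telescope hq hx ht N)) h2
  rw [h3, mul_one]

lemma Euler (hq : ‖q‖ < 1) {s : ℂ} (hs : ‖s‖ < 1) : qpgInf q s * G q 0 s = 1 := by
  have := KB hq (by simpa using (one_pos : (0:ℝ) < 1) : ‖(0:ℂ)‖ < 1) hs
  rw [zero_mul] at this
  rw [this, qpgInf]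
  simp

end Framing

theorem framing_lemma (q : ℂ) (h0 : 0 < ‖q‖) (h1 : ‖q‖ < 1) (a b : ℕ) :
    ((∑' (n₁ : ℕ) (n₂ : ℕ),
        q ^ (n₁ * n₂ + (a + 1) * n₁ + (b + 1) * n₂) / (qp q n₁ * qp q n₂))
      = 1 / (qpg q (q ^ (b + 1)) (a + 1) * qpgInf q (q ^ (a + 1)))) ∧
    ((∑' (n₁ : ℕ) (n₂ : ℕ),
        q ^ (n₁ * n₂ + (a + 1) * n₁ + (b + 1) * n₂) / (qp q n₁ * qp q n₂))
      = 1 / (qpg q (q ^ (a + 1)) (b + 1) * qpgInf q (q ^ (b + 1)))) := by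
  have hq : ‖q‖ < 1 := h1
  have hpow : ∀ k : ℕ, ‖q ^ (k + 1)‖ < 1 := fun k => by
    rw [norm_pow]; exact pow_lt_one₀ (norm_nonneg q) hq (Nat.succ_ne_zero k)
  have hG0 : ∀ s : ℂ, Framing.G q 0 s = ∑' n, s ^ n / qp q n := fun s =>
    tsum_congr fun n => by simp [Framing.Gs, qpg]
  have hDa : qpgInf q (q ^ (a + 1)) ≠ 0 := Framing.qpgInf_ne_zero hq (hpow a)
  have hDb : qpgInf q (q ^ (b + 1)) ≠ 0 := Framing.qpgInf_ne_zero hq (hpow b)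
  have hE : qpgInf q (q ^ (a + b + 2)) ≠ 0 := Framing.qpgInf_ne_zero hq (hpow (a + b + 1))
  -- core computation
  have core : (∑' (n₁ : ℕ) (n₂ : ℕ),
        q ^ (n₁ * n₂ + (a + 1) * n₁ + (b + 1) * n₂) / (qp q n₁ * qp q n₂))
      = (qpgInf q (q ^ (b + 1)))⁻¹ * Framing.G q (q ^ (b + 1)) (q ^ (a + 1)) := by
    rw [Framing.G, ← tsum_mul_left]
    refine tsum_congr fun n₁ => ?_
    have inner : (∑' n₂ : ℕ, q ^ (n₁ * n₂ + (a + 1) * n₁ + (b + 1) * n₂) / (qp q n₁ * qp q n₂))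
        = (q ^ ((a + 1) * n₁) / qp q n₁) * Framing.G q 0 (q ^ (n₁ + b + 1)) := by
      rw [hG0, ← tsum_mul_left]
      refine tsum_congr fun n₂ => ?_
      rw [div_mul_div_comm, ← pow_mul, ← pow_add]
      congr 2
      ring
    rw [inner]
    have hsplit : qpgInf q (q ^ (b + 1))
        = qpg q (q ^ (b + 1)) n₁ * qpgInf q (q ^ (n₁ + b + 1)) := by
      have h := Framing.qpgInf_split hq (hpow b) n₁
      rwa [show q ^ (b + 1) * q ^ n₁ = q ^ (n₁ + b + 1) by rw [← pow_add]; congr 1; ring] at h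
    have hB : qpgInf q (q ^ (n₁ + b + 1)) ≠ 0 := Framing.qpgInf_ne_zero hq (hpow (n₁ + b))
    have hEu := Framing.Euler hq (hpow (n₁ + b) : ‖q ^ (n₁ + b + 1)‖ < 1)
    have hGv : Framing.G q 0 (q ^ (n₁ + b + 1)) = (qpgInf q (q ^ (n₁ + b + 1)))⁻¹ :=
      eq_inv_of_mul_eq_one_left (by linear_combination hEu)
    rw [hGv, Framing.Gs, hsplit, ← pow_mul]
    have hqpg : qpg q (q ^ (b + 1)) n₁ ≠ 0 := Framing.qpg_ne_zero hq (hpow b) n₁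
    have hqp : qp q n₁ ≠ 0 := Framing.qp_ne_zero hq n₁
    rw [mul_comm (a + 1) n₁]
    field_simp
  have hKB : qpgInf q (q ^ (a + 1)) * Framing.G q (q ^ (b + 1)) (q ^ (a + 1))
      = qpgInf q (q ^ (a + b + 2)) := by
    have h := Framing.KB hq (hpow b) (hpow a)
    rwa [show q ^ (b + 1) * q ^ (a + 1) = q ^ (a + b + 2) by rw [← pow_add]; congr 1; ring] at h
  have split1 : qpgInf q (q ^ (b + 1))
      = qpg q (q ^ (b + 1)) (a + 1) * qpgInf q (q ^ (a + b + 2)) := by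
    have h := Framing.qpgInf_split hq (hpow b) (a + 1)
    rwa [show q ^ (b + 1) * q ^ (a + 1) = q ^ (a + b + 2) by rw [← pow_add]; congr 1; ring] at h
  have split2 : qpgInf q (q ^ (a + 1))
      = qpg q (q ^ (a + 1)) (b + 1) * qpgInf q (q ^ (a + b + 2)) := by
    have h := Framing.qpgInf_split hq (hpow a) (b + 1)
    rwa [show q ^ (a + 1) * q ^ (b + 1) = q ^ (a + b + 2) by rw [← pow_add]; congr 1; ring] at h
  have hqpg1 : qpg q (q ^ (b + 1)) (a + 1) ≠ 0 := Framing.qpg_ne_zero hq (hpow b) (a + 1)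
  have hqpg2 : qpg q (q ^ (a + 1)) (b + 1) ≠ 0 := Framing.qpg_ne_zero hq (hpow a) (b + 1)
  constructor
  · rw [core]
    rw [split1]
    field_simp
    linear_combination hKB
  · rw [core]
    have hGP : Framing.G q (q ^ (b + 1)) (q ^ (a + 1)) * qpg q (q ^ (a + 1)) (b + 1) = 1 := by
      apply mul_left_cancel₀ hE
      linear_combination hKB - Framing.G q (q ^ (b + 1)) (q ^ (a + 1)) * split2
    field_simp
    linear_combination hGP
end

section
/- For every complex number q with 0 < |q| < 1, the triple Lambert-type sum for the sum of squares of divisors satisfies Σ_{n₁,n₂,n₃ ≥ 0} q^{n₁+n₂+n₃+1} / ( (1 - q^{n₁+n₂+1})(1 - q^{n₁+n₂+n₃+1}) ) = Σ_{n≥1} n²·q^n/(1 - q^n). -/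
open Finset

namespace SqDivAux

noncomputable def G (q : ℂ) (n : ℕ) : ℂ := q ^ n / (1 - q ^ n)

noncomputable def Tail (q : ℂ) (m : ℕ) : ℂ := ∑' k : ℕ, G q (k + m)

noncomputable def Pp (q : ℂ) (n : ℕ) : ℂ := ∑ b ∈ range n, G q b

lemma G_zero (q : ℂ) : G q 0 = 0 := by simp [G]

lemma one_sub_ne {q : ℂ} (h1 : ‖q‖ < 1) {n : ℕ} (hn : n ≠ 0) : 1 - q ^ n ≠ 0 := by
  intro h
  have hq : q ^ n = 1 := by linear_combination -h
  have : ‖q ^ n‖ < 1 := by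
    rw [norm_pow]
    exact pow_lt_one₀ (norm_nonneg q) h1 hn
  rw [hq] at this; simp at this

lemma star {q : ℂ} (h1 : ‖q‖ < 1) {a b : ℕ} (ha : a ≠ 0) (hb : b ≠ 0) :
    G q a * G q b = G q (a + b) * (G q a + G q b + 1) := by
  have hA := one_sub_ne h1 ha
  have hB := one_sub_ne h1 hb
  have hAB := one_sub_ne h1 (show a + b ≠ 0 by omega)
  simp only [G, pow_add] at *
  field_simp
  ring

lemma G_bound {q : ℂ} (h1 : ‖q‖ < 1) (n : ℕ) :
    ‖G q n‖ ≤ (1 - ‖q‖)⁻¹ * ‖q‖ ^ n := by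
  have h0 : (0:ℝ) < 1 - ‖q‖ := by linarith
  rcases Nat.eq_zero_or_pos n with rfl | hn
  · rw [G_zero, norm_zero]; positivity
  · have hpn : ‖q ^ n‖ ≤ ‖q‖ := by
      rw [norm_pow]
      calc ‖q‖ ^ n ≤ ‖q‖ ^ 1 := pow_le_pow_of_le_one (norm_nonneg q) h1.le hn
        _ = ‖q‖ := pow_one _
    have hd : (1:ℝ) - ‖q‖ ≤ ‖1 - q ^ n‖ := by
      have := norm_sub_norm_le (1 : ℂ) (q ^ n)
      simp only [norm_one] at this
      linarith
    rw [G, norm_div, norm_pow]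
    rw [div_le_iff₀ (by linarith)]
    rw [inv_mul_eq_div, div_mul_eq_mul_div, le_div_iff₀ h0]
    have hq : (0:ℝ) ≤ ‖q‖ ^ n := by positivity
    exact mul_le_mul_of_nonneg_left hd hq

section Bounds

variable {q : ℂ}

lemma hc_nonneg (h1 : ‖q‖ < 1) : (0:ℝ) ≤ (1 - ‖q‖)⁻¹ := by
  have : (0:ℝ) < 1 - ‖q‖ := by linarith
  positivity

lemma hgeo (h1 : ‖q‖ < 1) : Summable fun n : ℕ => ‖q‖ ^ n :=
  summable_geometric_of_lt_one (norm_nonneg q) h1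

lemma hpoly (h1 : ‖q‖ < 1) (k : ℕ) : Summable fun n : ℕ => (n:ℝ) ^ k * ‖q‖ ^ n :=
  summable_pow_mul_geometric_of_norm_lt_one k
    (by rwa [Real.norm_eq_abs, abs_of_nonneg (norm_nonneg q)])

lemma base1 (h1 : ‖q‖ < 1) : Summable fun n : ℕ => ((n:ℝ) + 1) * ‖q‖ ^ n :=
  ((hpoly h1 1).add (hgeo h1)).congr fun n => by ring

lemma base2 (h1 : ‖q‖ < 1) : Summable fun n : ℕ => ((n:ℝ) + 1) ^ 2 * ‖q‖ ^ n :=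
  ((hpoly h1 2).add (((hpoly h1 1).mul_left 2).add (hgeo h1))).congr fun n => by ring

lemma hGnorm (h1 : ‖q‖ < 1) : Summable fun n => ‖G q n‖ :=
  Summable.of_nonneg_of_le (fun n => norm_nonneg _) (G_bound h1) ((hgeo h1).mul_left _)

lemma hG (h1 : ‖q‖ < 1) : Summable (G q) := (hGnorm h1).of_norm

lemma P_bound (h1 : ‖q‖ < 1) (n : ℕ) : ‖Pp q n‖ ≤ (1 - ‖q‖)⁻¹ * (1 - ‖q‖)⁻¹ := by
  calc ‖Pp q n‖ ≤ ∑ b ∈ range n, ‖G q b‖ := norm_sum_le _ _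
    _ ≤ ∑' b : ℕ, ‖G q b‖ :=
        Summable.sum_le_tsum _ (fun b _ => norm_nonneg _) (hGnorm h1)
    _ ≤ ∑' b : ℕ, (1 - ‖q‖)⁻¹ * ‖q‖ ^ b :=
        Summable.tsum_le_tsum (G_bound h1) (hGnorm h1) ((hgeo h1).mul_left _)
    _ = (1 - ‖q‖)⁻¹ * ∑' b : ℕ, ‖q‖ ^ b := tsum_mul_left
    _ = (1 - ‖q‖)⁻¹ * (1 - ‖q‖)⁻¹ := by
        rw [tsum_geometric_of_lt_one (norm_nonneg q) h1]

lemma Tail_bound (h1 : ‖q‖ < 1) (m : ℕ) :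
    ‖Tail q m‖ ≤ ((1 - ‖q‖)⁻¹ * (1 - ‖q‖)⁻¹) * ‖q‖ ^ m := by
  have hs : Summable fun k : ℕ => ‖G q (k + m)‖ :=
    (hGnorm h1).comp_injective (add_left_injective m)
  calc ‖Tail q m‖ ≤ ∑' k : ℕ, ‖G q (k + m)‖ := norm_tsum_le_tsum_norm hs
    _ ≤ ∑' k : ℕ, ((1 - ‖q‖)⁻¹ * ‖q‖ ^ m) * ‖q‖ ^ k := by
        apply Summable.tsum_le_tsum _ hs ((hgeo h1).mul_left _)
        intro k
        calc ‖G q (k + m)‖ ≤ (1 - ‖q‖)⁻¹ * ‖q‖ ^ (k + m) := G_bound h1 _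
          _ = ((1 - ‖q‖)⁻¹ * ‖q‖ ^ m) * ‖q‖ ^ k := by rw [pow_add]; ring
    _ = ((1 - ‖q‖)⁻¹ * ‖q‖ ^ m) * ∑' k : ℕ, ‖q‖ ^ k := tsum_mul_left
    _ = ((1 - ‖q‖)⁻¹ * (1 - ‖q‖)⁻¹) * ‖q‖ ^ m := by
        rw [tsum_geometric_of_lt_one (norm_nonneg q) h1]; ring

lemma summable_pair (h1 : ‖q‖ < 1) {f : ℕ × ℕ → ℂ} (F : ℕ → ℝ) (hF : Summable F)
    (hFnn : ∀ n, 0 ≤ F n) (h : ∀ x : ℕ × ℕ, ‖f x‖ ≤ F x.1 * ‖q‖ ^ x.2) :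
    Summable f :=
  Summable.of_norm_bounded
    (hF.mul_of_nonneg (hgeo h1) hFnn fun n => by positivity) h

end Bounds

lemma tsum_antidiagonal {f : ℕ × ℕ → ℂ} (hf : Summable f) :
    ∑' x : ℕ × ℕ, f x = ∑' n : ℕ, ∑ kl ∈ antidiagonal n, f kl := by
  calc ∑' x : ℕ × ℕ, f x
      = ∑' p : (Σ n : ℕ, antidiagonal n), f (Finset.HasAntidiagonal.sigmaAntidiagonalEquivProd p) :=
        (Finset.HasAntidiagonal.sigmaAntidiagonalEquivProd.tsum_eq f).symm
    _ = ∑' (n : ℕ) (c : antidiagonal n), f (Finset.HasAntidiagonal.sigmaAntidiagonalEquivProd ⟨n, c⟩) :=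
        Summable.tsum_sigma' (fun n => (hasSum_fintype _).summable)
          (Finset.HasAntidiagonal.sigmaAntidiagonalEquivProd.summable_iff.mpr hf)
    _ = ∑' n : ℕ, ∑ kl ∈ antidiagonal n, f kl :=
        tsum_congr fun n => Finset.tsum_subtype _ _


lemma inner_eq {q : ℂ} (h1 : ‖q‖ < 1) (n : ℕ) :
    ∑ kl ∈ antidiagonal n, (kl.1 : ℂ) * G q kl.1 * G q kl.2
      = (n : ℂ) * G q n * Pp q n + (∑ i ∈ range n, (i : ℂ)) * G q n := by
  rw [Finset.Nat.sum_antidiagonal_eq_sum_range_succ_mk]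
  rw [Finset.sum_range_succ, Nat.sub_self, G_zero, mul_zero, add_zero]
  have step : ∀ i ∈ range n, (i:ℂ) * G q i * G q (n - i)
      = (i:ℂ) * G q n * G q i + (i:ℂ) * G q n * G q (n - i) + (i:ℂ) * G q n := by
    intro i hi
    rw [mem_range] at hi
    rcases Nat.eq_zero_or_pos i with rfl | hipos
    · simp
    · have hstar := star h1 (show i ≠ 0 by omega) (show n - i ≠ 0 by omega)
      have hni : i + (n - i) = n := by omega
      rw [hni] at hstar
      rw [mul_assoc, hstar]
      ring
  rw [Finset.sum_congr rfl step]
  rw [Finset.sum_add_distrib, Finset.sum_add_distrib]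
  have refl2 : ∑ i ∈ range n, (i:ℂ) * G q n * G q (n - i)
      = ∑ i ∈ range n, ((n:ℂ) - i) * G q n * G q i := by
    have e1 : ∑ i ∈ range n, (i:ℂ) * G q n * G q (n - i)
        = ∑ i ∈ range (n+1), (i:ℂ) * G q n * G q (n - i) := by
      rw [Finset.sum_range_succ, Nat.sub_self, G_zero, mul_zero, add_zero]
    have e2 : ∑ i ∈ range n, ((n:ℂ) - i) * G q n * G q i
        = ∑ i ∈ range (n+1), ((n:ℂ) - i) * G q n * G q i := by
      rw [Finset.sum_range_succ, sub_self, zero_mul, zero_mul, add_zero]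
    rw [e1, e2, ← Finset.sum_range_reflect (fun i => (i:ℂ) * G q n * G q (n - i)) (n+1)]
    apply Finset.sum_congr rfl
    intro j hj
    rw [mem_range] at hj
    have hj' : j ≤ n := by omega
    have h3 : n + 1 - 1 - j = n - j := by omega
    have h4 : n - (n - j) = j := by omega
    rw [h3, h4, Nat.cast_sub hj']
  rw [refl2]
  have comb : ∑ i ∈ range n, (i:ℂ) * G q n * G q i
      + ∑ i ∈ range n, ((n:ℂ) - i) * G q n * G q i
      = (n:ℂ) * G q n * Pp q n := by
    rw [← Finset.sum_add_distrib, Pp, Finset.mul_sum]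
    apply Finset.sum_congr rfl
    intro i _
    ring
  have third : ∑ i ∈ range n, (i:ℂ) * G q n = (∑ i ∈ range n, (i:ℂ)) * G q n := by
    rw [Finset.sum_mul]
  rw [comb, third]

lemma hc'G_sum {q : ℂ} (h1 : ‖q‖ < 1) :
    Summable (fun n : ℕ => (∑ i ∈ range n, (i : ℂ)) * G q n) := by
  set c : ℝ := (1 - ‖q‖)⁻¹ with hc
  apply Summable.of_norm_bounded (g := fun n : ℕ => c * ((n:ℝ) ^ 2 * ‖q‖ ^ n))
    ((hpoly h1 2).mul_left c)
  intro n
  have hb : ‖∑ i ∈ range n, (i : ℂ)‖ ≤ (n:ℝ) ^ 2 := by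
    calc ‖∑ i ∈ range n, (i : ℂ)‖ ≤ ∑ i ∈ range n, ‖(i : ℂ)‖ := norm_sum_le _ _
      _ ≤ ∑ i ∈ range n, (n : ℝ) := by
          apply Finset.sum_le_sum
          intro i hi
          rw [mem_range] at hi
          rw [Complex.norm_natCast]
          exact_mod_cast hi.le
      _ = (n : ℝ) * n := by rw [Finset.sum_const, card_range, nsmul_eq_mul]
      _ = (n : ℝ) ^ 2 := by ring
  calc ‖(∑ i ∈ range n, (i : ℂ)) * G q n‖
      = ‖∑ i ∈ range n, (i : ℂ)‖ * ‖G q n‖ := norm_mul _ _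
    _ ≤ (n:ℝ) ^ 2 * (c * ‖q‖ ^ n) := by
        apply mul_le_mul hb (G_bound h1 _) (norm_nonneg _) (by positivity)
    _ = c * ((n:ℝ) ^ 2 * ‖q‖ ^ n) := by ring

lemma core {q : ℂ} (h1 : ‖q‖ < 1) :
    ∑' a : ℕ, (a : ℂ) * G q a * Tail q a
      = ∑' n : ℕ, (∑ i ∈ range n, (i : ℂ)) * G q n := by
  set c : ℝ := (1 - ‖q‖)⁻¹ with hc
  have hcnn : 0 ≤ c := hc_nonneg h1
  have hT : Summable (fun x : ℕ × ℕ => (x.1 : ℂ) * G q x.1 * G q x.2) := by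
    apply summable_pair h1 (F := fun a => (c * c) * ((a:ℝ) * ‖q‖ ^ a))
      (((hpoly h1 1).congr (fun n => by ring)).mul_left (c * c))
      (fun n => by positivity)
    intro x
    calc ‖(x.1 : ℂ) * G q x.1 * G q x.2‖
        = (x.1 : ℝ) * ‖G q x.1‖ * ‖G q x.2‖ := by
          rw [norm_mul, norm_mul, Complex.norm_natCast]
      _ ≤ (x.1 : ℝ) * (c * ‖q‖ ^ x.1) * (c * ‖q‖ ^ x.2) := by
          apply mul_le_mul _ (G_bound h1 _) (norm_nonneg _) (by positivity)
          exact mul_le_mul_of_nonneg_left (G_bound h1 _) (Nat.cast_nonneg _)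
      _ = ((c * c) * ((x.1:ℝ) * ‖q‖ ^ x.1)) * ‖q‖ ^ x.2 := by ring
  have hX : Summable (fun a : ℕ => (a : ℂ) * G q a * Pp q a) := by
    apply Summable.of_norm_bounded (g := fun a : ℕ => ((c * c * c) * ((a:ℝ) * ‖q‖ ^ a)))
      (((hpoly h1 1).congr (fun n => by ring)).mul_left _)
    intro a
    calc ‖(a : ℂ) * G q a * Pp q a‖ = (a:ℝ) * ‖G q a‖ * ‖Pp q a‖ := by
          rw [norm_mul, norm_mul, Complex.norm_natCast]
      _ ≤ (a : ℝ) * (c * ‖q‖ ^ a) * (c * c) := by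
          apply mul_le_mul _ (P_bound h1 _) (norm_nonneg _) (by positivity)
          exact mul_le_mul_of_nonneg_left (G_bound h1 _) (Nat.cast_nonneg _)
      _ = (c * c * c) * ((a:ℝ) * ‖q‖ ^ a) := by ring
  have hY : Summable (fun a : ℕ => (a : ℂ) * G q a * Tail q a) := by
    apply Summable.of_norm_bounded (g := fun a : ℕ => ((c * c * c) * ((a:ℝ) * ‖q‖ ^ a)))
      (((hpoly h1 1).congr (fun n => by ring)).mul_left _)
    intro a
    have hr1 : ‖q‖ ^ a ≤ 1 := pow_le_one₀ (norm_nonneg q) h1.le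
    calc ‖(a : ℂ) * G q a * Tail q a‖ = (a:ℝ) * ‖G q a‖ * ‖Tail q a‖ := by
          rw [norm_mul, norm_mul, Complex.norm_natCast]
      _ ≤ (a : ℝ) * (c * ‖q‖ ^ a) * ((c * c) * ‖q‖ ^ a) := by
          apply mul_le_mul _ (Tail_bound h1 _) (norm_nonneg _) (by positivity)
          exact mul_le_mul_of_nonneg_left (G_bound h1 _) (Nat.cast_nonneg _)
      _ = ((c * c * c) * ((a:ℝ) * ‖q‖ ^ a)) * ‖q‖ ^ a := by ring
      _ ≤ ((c * c * c) * ((a:ℝ) * ‖q‖ ^ a)) * 1 := by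
          apply mul_le_mul_of_nonneg_left hr1 (by positivity)
      _ = (c * c * c) * ((a:ℝ) * ‖q‖ ^ a) := mul_one _
  have hc'G : Summable (fun n : ℕ => (∑ i ∈ range n, (i : ℂ)) * G q n) := hc'G_sum h1
  have eqII : ∑' x : ℕ × ℕ, (x.1 : ℂ) * G q x.1 * G q x.2
      = (∑' a : ℕ, (a : ℂ) * G q a * Pp q a) + ∑' a : ℕ, (a : ℂ) * G q a * Tail q a := by
    rw [Summable.tsum_prod' hT (fun a => hT.prod_factor a), ← Summable.tsum_add hX hY]
    apply tsum_congr
    intro a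
    calc ∑' b : ℕ, (a : ℂ) * G q a * G q b
        = ((a : ℂ) * G q a) * ∑' b : ℕ, G q b := tsum_mul_left
      _ = ((a : ℂ) * G q a) * (Pp q a + Tail q a) := by
          rw [← Summable.sum_add_tsum_nat_add a (hG h1)]; rfl
      _ = (a : ℂ) * G q a * Pp q a + (a : ℂ) * G q a * Tail q a := by ring
  have eqI : ∑' x : ℕ × ℕ, (x.1 : ℂ) * G q x.1 * G q x.2
      = (∑' a : ℕ, (a : ℂ) * G q a * Pp q a)
        + ∑' n : ℕ, (∑ i ∈ range n, (i : ℂ)) * G q n := by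
    rw [tsum_antidiagonal hT, ← Summable.tsum_add
      ((summable_nat_add_iff 0).mp ?_) hc'G]
    · exact tsum_congr fun n => inner_eq h1 n
    · simpa using hX
  have := eqII.symm.trans eqI
  exact add_left_cancel this


noncomputable def J (q : ℂ) (p : ℕ) : ℂ := (1 + G q (p + 1)) * Tail q (p + 1)

lemma term_eq {q : ℂ} (h1 : ‖q‖ < 1) (n₁ n₂ n₃ : ℕ) :
    q ^ (n₁ + n₂ + n₃ + 1) / ((1 - q ^ (n₁ + n₂ + 1)) * (1 - q ^ (n₁ + n₂ + n₃ + 1)))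
      = (1 + G q (n₁ + n₂ + 1)) * G q (n₃ + (n₁ + n₂ + 1)) := by
  have e : n₃ + (n₁ + n₂ + 1) = n₁ + n₂ + n₃ + 1 := by omega
  rw [e]
  have hM := one_sub_ne h1 (show n₁ + n₂ + 1 ≠ 0 by omega)
  have hN := one_sub_ne h1 (show n₁ + n₂ + n₃ + 1 ≠ 0 by omega)
  rw [G, G]
  field_simp
  try ring

lemma J_bound {q : ℂ} (h1 : ‖q‖ < 1) (p : ℕ) :
    ‖J q p‖ ≤ ((1 + (1 - ‖q‖)⁻¹) * ((1 - ‖q‖)⁻¹ * (1 - ‖q‖)⁻¹)) * ‖q‖ ^ p := by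
  set c : ℝ := (1 - ‖q‖)⁻¹ with hc
  have hcnn : 0 ≤ c := hc_nonneg h1
  have h1' : ‖1 + G q (p + 1)‖ ≤ 1 + c := by
    calc ‖1 + G q (p + 1)‖ ≤ ‖(1:ℂ)‖ + ‖G q (p + 1)‖ := norm_add_le _ _
      _ ≤ 1 + c * ‖q‖ ^ (p + 1) := by
          rw [norm_one]
          exact (add_le_add_iff_left 1).mpr (G_bound h1 _)
      _ ≤ 1 + c := by
          have : c * ‖q‖ ^ (p + 1) ≤ c * 1 :=
            mul_le_mul_of_nonneg_left (pow_le_one₀ (norm_nonneg q) h1.le) hcnn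
          linarith
  have h2' : ‖Tail q (p + 1)‖ ≤ (c * c) * ‖q‖ ^ p := by
    calc ‖Tail q (p + 1)‖ ≤ (c * c) * ‖q‖ ^ (p + 1) := Tail_bound h1 _
      _ = ((c * c) * ‖q‖ ^ p) * ‖q‖ := by rw [pow_succ]; ring
      _ ≤ ((c * c) * ‖q‖ ^ p) * 1 := by
          apply mul_le_mul_of_nonneg_left h1.le (by positivity)
      _ = (c * c) * ‖q‖ ^ p := mul_one _
  calc ‖J q p‖ = ‖1 + G q (p + 1)‖ * ‖Tail q (p + 1)‖ := norm_mul _ _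
    _ ≤ (1 + c) * ((c * c) * ‖q‖ ^ p) := by
        apply mul_le_mul h1' h2' (norm_nonneg _) (by positivity)
    _ = ((1 + c) * (c * c)) * ‖q‖ ^ p := by ring

lemma count_lemma (m : ℕ) :
    (∑ i ∈ range m, ((i:ℂ) + 1)) + (∑ i ∈ range m, (i:ℂ)) = (m:ℂ) ^ 2 := by
  induction m with
  | zero => simp
  | succ k ih =>
    rw [Finset.sum_range_succ, Finset.sum_range_succ]
    push_cast
    push_cast at ih
    linear_combination ih

set_option maxHeartbeats 2000000 in
theorem main {q : ℂ} (h1 : ‖q‖ < 1) :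
    (∑' (n₁ : ℕ) (n₂ : ℕ) (n₃ : ℕ),
      q ^ (n₁ + n₂ + n₃ + 1) /
        ((1 - q ^ (n₁ + n₂ + 1)) * (1 - q ^ (n₁ + n₂ + n₃ + 1))))
      = ∑' n : ℕ, ((n : ℂ) + 1) ^ 2 * q ^ (n + 1) / (1 - q ^ (n + 1)) := by
  set c : ℝ := (1 - ‖q‖)⁻¹ with hc
  have hcnn : 0 ≤ c := hc_nonneg h1
  -- summability facts
  have hJpair : Summable (fun x : ℕ × ℕ => J q (x.1 + x.2)) := by
    apply summable_pair h1 (F := fun a : ℕ => (((1 + c) * (c * c)) * ‖q‖ ^ a))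
      ((hgeo h1).mul_left _) (fun n => by positivity)
    intro x
    calc ‖J q (x.1 + x.2)‖ ≤ ((1 + c) * (c * c)) * ‖q‖ ^ (x.1 + x.2) := J_bound h1 _
      _ = (((1 + c) * (c * c)) * ‖q‖ ^ x.1) * ‖q‖ ^ x.2 := by rw [pow_add]; ring
  have hL1pair : Summable (fun x : ℕ × ℕ => ((x.1 : ℂ) + 1) * G q (x.2 + (x.1 + 1))) := by
    apply summable_pair h1 (F := fun a : ℕ => c * (((a:ℝ) + 1) * ‖q‖ ^ a))
      ((base1 h1).mul_left c) (fun n => by positivity)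
    intro x
    have hr1 : ‖q‖ ≤ 1 := h1.le
    calc ‖((x.1 : ℂ) + 1) * G q (x.2 + (x.1 + 1))‖
        = ‖(x.1 : ℂ) + 1‖ * ‖G q (x.2 + (x.1 + 1))‖ := norm_mul _ _
      _ ≤ ((x.1 : ℝ) + 1) * (c * ‖q‖ ^ (x.2 + (x.1 + 1))) := by
          apply mul_le_mul _ (G_bound h1 _) (norm_nonneg _) (by positivity)
          have e : ((x.1 : ℂ) + 1) = ((x.1 + 1 : ℕ) : ℂ) := by push_cast; ring
          rw [e, Complex.norm_natCast]
          push_cast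
          exact le_refl _
      _ = (c * (((x.1:ℝ) + 1) * ‖q‖ ^ x.1)) * ‖q‖ ^ x.2 * ‖q‖ := by
          rw [pow_add, pow_add, pow_one]; ring
      _ ≤ (c * (((x.1:ℝ) + 1) * ‖q‖ ^ x.1)) * ‖q‖ ^ x.2 * 1 := by
          apply mul_le_mul_of_nonneg_left h1.le (by positivity)
      _ = (c * (((x.1:ℝ) + 1) * ‖q‖ ^ x.1)) * ‖q‖ ^ x.2 := mul_one _
  have hY : Summable (fun a : ℕ => (a : ℂ) * G q a * Tail q a) := by
    apply Summable.of_norm_bounded (g := fun a : ℕ => ((c * c * c) * ((a:ℝ) * ‖q‖ ^ a)))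
      (((hpoly h1 1).congr (fun n => by ring)).mul_left _)
    intro a
    have hr1 : ‖q‖ ^ a ≤ 1 := pow_le_one₀ (norm_nonneg q) h1.le
    calc ‖(a : ℂ) * G q a * Tail q a‖ = (a:ℝ) * ‖G q a‖ * ‖Tail q a‖ := by
          rw [norm_mul, norm_mul, Complex.norm_natCast]
      _ ≤ (a : ℝ) * (c * ‖q‖ ^ a) * ((c * c) * ‖q‖ ^ a) := by
          apply mul_le_mul _ (Tail_bound h1 _) (norm_nonneg _) (by positivity)
          exact mul_le_mul_of_nonneg_left (G_bound h1 _) (Nat.cast_nonneg _)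
      _ = ((c * c * c) * ((a:ℝ) * ‖q‖ ^ a)) * ‖q‖ ^ a := by ring
      _ ≤ ((c * c * c) * ((a:ℝ) * ‖q‖ ^ a)) * 1 := by
          apply mul_le_mul_of_nonneg_left hr1 (by positivity)
      _ = (c * c * c) * ((a:ℝ) * ‖q‖ ^ a) := mul_one _
  have hL1 : Summable (fun n : ℕ => ((n : ℂ) + 1) * Tail q (n + 1)) := by
    apply Summable.of_norm_bounded (g := fun n : ℕ => (c * c) * (((n:ℝ) + 1) * ‖q‖ ^ n))
      ((base1 h1).mul_left _)
    intro n
    calc ‖((n : ℂ) + 1) * Tail q (n + 1)‖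
        = ‖(n : ℂ) + 1‖ * ‖Tail q (n + 1)‖ := norm_mul _ _
      _ ≤ ((n : ℝ) + 1) * ((c * c) * ‖q‖ ^ (n + 1)) := by
          apply mul_le_mul _ (Tail_bound h1 _) (norm_nonneg _) (by positivity)
          have e : ((n : ℂ) + 1) = ((n + 1 : ℕ) : ℂ) := by push_cast; ring
          rw [e, Complex.norm_natCast]
          push_cast
          exact le_refl _
      _ = ((c * c) * (((n:ℝ) + 1) * ‖q‖ ^ n)) * ‖q‖ := by rw [pow_succ]; ring
      _ ≤ ((c * c) * (((n:ℝ) + 1) * ‖q‖ ^ n)) * 1 := by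
          apply mul_le_mul_of_nonneg_left h1.le (by positivity)
      _ = (c * c) * (((n:ℝ) + 1) * ‖q‖ ^ n) := mul_one _
  have hA : Summable (fun s : ℕ => (∑ i ∈ range (s + 1), ((i:ℂ) + 1)) * G q (s + 1)) := by
    apply Summable.of_norm_bounded (g := fun s : ℕ => c * (((s:ℝ) + 1) ^ 2 * ‖q‖ ^ s))
      ((base2 h1).mul_left c)
    intro s
    have hb : ‖∑ i ∈ range (s + 1), ((i:ℂ) + 1)‖ ≤ ((s:ℝ) + 1) ^ 2 := by
      calc ‖∑ i ∈ range (s + 1), ((i:ℂ) + 1)‖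
          ≤ ∑ i ∈ range (s + 1), ‖(i:ℂ) + 1‖ := norm_sum_le _ _
        _ ≤ ∑ i ∈ range (s + 1), ((s:ℝ) + 1) := by
            apply Finset.sum_le_sum
            intro i hi
            rw [mem_range] at hi
            have : ((i : ℂ) + 1) = ((i + 1 : ℕ) : ℂ) := by push_cast; ring
            rw [this, Complex.norm_natCast]
            exact_mod_cast Nat.succ_le_succ (Nat.lt_succ_iff.mp hi)
        _ = ((s:ℝ) + 1) * ((s:ℝ) + 1) := by
            rw [Finset.sum_const, card_range, nsmul_eq_mul]; push_cast; ring
        _ = ((s:ℝ) + 1) ^ 2 := by ring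
    calc ‖(∑ i ∈ range (s + 1), ((i:ℂ) + 1)) * G q (s + 1)‖
        = ‖∑ i ∈ range (s + 1), ((i:ℂ) + 1)‖ * ‖G q (s + 1)‖ := norm_mul _ _
      _ ≤ ((s:ℝ) + 1) ^ 2 * (c * ‖q‖ ^ (s + 1)) := by
          apply mul_le_mul hb (G_bound h1 _) (norm_nonneg _) (by positivity)
      _ = (c * (((s:ℝ) + 1) ^ 2 * ‖q‖ ^ s)) * ‖q‖ := by rw [pow_succ]; ring
      _ ≤ (c * (((s:ℝ) + 1) ^ 2 * ‖q‖ ^ s)) * 1 := by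
          apply mul_le_mul_of_nonneg_left h1.le (by positivity)
      _ = c * (((s:ℝ) + 1) ^ 2 * ‖q‖ ^ s) := mul_one _
  have hB : Summable (fun s : ℕ => (∑ i ∈ range (s + 1), (i:ℂ)) * G q (s + 1)) := by
    apply Summable.of_norm_bounded (g := fun s : ℕ => c * (((s:ℝ) + 1) ^ 2 * ‖q‖ ^ s))
      ((base2 h1).mul_left c)
    intro s
    have hb : ‖∑ i ∈ range (s + 1), (i:ℂ)‖ ≤ ((s:ℝ) + 1) ^ 2 := by
      calc ‖∑ i ∈ range (s + 1), (i:ℂ)‖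
          ≤ ∑ i ∈ range (s + 1), ‖(i:ℂ)‖ := norm_sum_le _ _
        _ ≤ ∑ i ∈ range (s + 1), ((s:ℝ) + 1) := by
            apply Finset.sum_le_sum
            intro i hi
            rw [mem_range] at hi
            rw [Complex.norm_natCast]
            have : (i : ℝ) ≤ (s : ℝ) := by exact_mod_cast Nat.lt_succ_iff.mp hi
            linarith
        _ = ((s:ℝ) + 1) * ((s:ℝ) + 1) := by
            rw [Finset.sum_const, card_range, nsmul_eq_mul]; push_cast; ring
        _ = ((s:ℝ) + 1) ^ 2 := by ring
    calc ‖(∑ i ∈ range (s + 1), (i:ℂ)) * G q (s + 1)‖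
        = ‖∑ i ∈ range (s + 1), (i:ℂ)‖ * ‖G q (s + 1)‖ := norm_mul _ _
      _ ≤ ((s:ℝ) + 1) ^ 2 * (c * ‖q‖ ^ (s + 1)) := by
          apply mul_le_mul hb (G_bound h1 _) (norm_nonneg _) (by positivity)
      _ = (c * (((s:ℝ) + 1) ^ 2 * ‖q‖ ^ s)) * ‖q‖ := by rw [pow_succ]; ring
      _ ≤ (c * (((s:ℝ) + 1) ^ 2 * ‖q‖ ^ s)) * 1 := by
          apply mul_le_mul_of_nonneg_left h1.le (by positivity)
      _ = c * (((s:ℝ) + 1) ^ 2 * ‖q‖ ^ s) := mul_one _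
  have hYsucc : Summable (fun n : ℕ => ((n + 1 : ℕ) : ℂ) * G q (n + 1) * Tail q (n + 1)) :=
    (summable_nat_add_iff 1).2 hY
  -- the chain
  calc (∑' (n₁ : ℕ) (n₂ : ℕ) (n₃ : ℕ),
      q ^ (n₁ + n₂ + n₃ + 1) /
        ((1 - q ^ (n₁ + n₂ + 1)) * (1 - q ^ (n₁ + n₂ + n₃ + 1))))
      = ∑' (n₁ : ℕ) (n₂ : ℕ), J q (n₁ + n₂) := by
        apply tsum_congr; intro n₁
        apply tsum_congr; intro n₂
        rw [tsum_congr (fun n₃ => term_eq h1 n₁ n₂ n₃), tsum_mul_left]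
        rfl
    _ = ∑' x : ℕ × ℕ, J q (x.1 + x.2) :=
        (Summable.tsum_prod' hJpair (fun a => hJpair.prod_factor a)).symm
    _ = ∑' n : ℕ, ∑ kl ∈ antidiagonal n, J q (kl.1 + kl.2) := tsum_antidiagonal hJpair
    _ = ∑' n : ℕ, (((n : ℂ) + 1) * Tail q (n + 1)
          + ((n + 1 : ℕ) : ℂ) * G q (n + 1) * Tail q (n + 1)) := by
        apply tsum_congr; intro n
        rw [Finset.Nat.sum_antidiagonal_eq_sum_range_succ_mk]
        have : ∀ i ∈ range (n + 1), J q (i + (n - i)) = J q n := by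
          intro i hi
          rw [mem_range] at hi
          congr 1
          omega
        rw [Finset.sum_congr rfl this, Finset.sum_const, card_range, nsmul_eq_mul]
        rw [J]
        push_cast
        ring
    _ = (∑' n : ℕ, ((n : ℂ) + 1) * Tail q (n + 1))
          + ∑' n : ℕ, ((n + 1 : ℕ) : ℂ) * G q (n + 1) * Tail q (n + 1) :=
        Summable.tsum_add hL1 hYsucc
    _ = (∑' s : ℕ, (∑ i ∈ range (s + 1), ((i:ℂ) + 1)) * G q (s + 1))
          + ∑' s : ℕ, (∑ i ∈ range (s + 1), (i:ℂ)) * G q (s + 1) := by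
        congr 1
        · -- L1 computation
          calc ∑' n : ℕ, ((n : ℂ) + 1) * Tail q (n + 1)
              = ∑' (n : ℕ) (k : ℕ), ((n : ℂ) + 1) * G q (k + (n + 1)) := by
                apply tsum_congr; intro n
                rw [Tail, tsum_mul_left]
            _ = ∑' x : ℕ × ℕ, ((x.1 : ℂ) + 1) * G q (x.2 + (x.1 + 1)) :=
                (Summable.tsum_prod' hL1pair (fun a => hL1pair.prod_factor a)).symm
            _ = ∑' s : ℕ, ∑ kl ∈ antidiagonal s, ((kl.1 : ℂ) + 1) * G q (kl.2 + (kl.1 + 1)) :=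
                tsum_antidiagonal hL1pair
            _ = ∑' s : ℕ, (∑ i ∈ range (s + 1), ((i:ℂ) + 1)) * G q (s + 1) := by
                apply tsum_congr; intro s
                rw [Finset.Nat.sum_antidiagonal_eq_sum_range_succ_mk]
                have : ∀ i ∈ range (s + 1),
                    ((i : ℂ) + 1) * G q ((s - i) + (i + 1)) = ((i:ℂ) + 1) * G q (s + 1) := by
                  intro i hi
                  rw [mem_range] at hi
                  congr 2
                  omega
                rw [Finset.sum_congr rfl this, ← Finset.sum_mul]
        · -- core computation
          calc ∑' n : ℕ, ((n + 1 : ℕ) : ℂ) * G q (n + 1) * Tail q (n + 1)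
              = ∑' a : ℕ, (a : ℂ) * G q a * Tail q a := by
                rw [Summable.tsum_eq_zero_add hY]
                simp [G_zero]
            _ = ∑' n : ℕ, (∑ i ∈ range n, (i : ℂ)) * G q n := core h1
            _ = ∑' s : ℕ, (∑ i ∈ range (s + 1), (i:ℂ)) * G q (s + 1) := by
                rw [Summable.tsum_eq_zero_add (hc'G_sum h1)]
                simp [G_zero]
    _ = ∑' s : ℕ, ((∑ i ∈ range (s + 1), ((i:ℂ) + 1)) * G q (s + 1)
          + (∑ i ∈ range (s + 1), (i:ℂ)) * G q (s + 1)) := (Summable.tsum_add hA hB).symm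
    _ = ∑' n : ℕ, ((n : ℂ) + 1) ^ 2 * q ^ (n + 1) / (1 - q ^ (n + 1)) := by
        apply tsum_congr; intro s
        rw [← add_mul]
        have := count_lemma (s + 1)
        push_cast at this
        rw [this, G, mul_div_assoc]

end SqDivAux

theorem sum_of_squares_of_divisors_triple_sum (q : ℂ)
    (h0 : 0 < ‖q‖) (h1 : ‖q‖ < 1) :
    (∑' (n₁ : ℕ) (n₂ : ℕ) (n₃ : ℕ),
      q ^ (n₁ + n₂ + n₃ + 1) /
        ((1 - q ^ (n₁ + n₂ + 1)) * (1 - q ^ (n₁ + n₂ + n₃ + 1))))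
      = ∑' n : ℕ, ((n : ℂ) + 1) ^ 2 * q ^ (n + 1) / (1 - q ^ (n + 1)) := by
  apply SqDivAux.main
  exact h1
end

section
/- For every complex number q with 0 < |q| < 1, one has Σ_{n≥1} σ₁(n)·q^n = Σ_{n≥1} q^n/(1 - q^n)² = Σ_{n≥1} (-1)^{n+1}·(1 + q^n)·q^{n(n+1)/2}/(1 - q^n)², where σ₁(n) denotes the sum of the positive divisors of n. Equivalently, with E₂(q) := 1 - 24·Σ_{n≥1} σ₁(n)·q^n, both Lambert-type series above equal (1 - E₂(q))/24. -/
open Finset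

lemma odd_div_sum (N : ℕ) :
    ∑ e ∈ N.divisors.filter (fun e => ¬ 2 ∣ e), (((2 * (N / e) : ℕ) : ℂ) - (e : ℂ))
      = ∑ d ∈ N.divisors, (d : ℂ) := by
  induction N using Nat.strong_induction_on with
  | _ N ih =>
    rcases Nat.eq_zero_or_pos N with rfl | hN
    · simp
    by_cases h2 : 2 ∣ N
    · -- N = 2 * J
      obtain ⟨J, rfl⟩ := h2
      have hJ : 0 < J := by omega
      have hfe : (2 * J).divisors.filter (fun e => ¬ 2 ∣ e)
          = J.divisors.filter (fun e => ¬ 2 ∣ e) := by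
        ext e
        simp only [Finset.mem_filter, Nat.mem_divisors]
        constructor
        · rintro ⟨⟨hd, -⟩, ho⟩
          refine ⟨⟨?_, by omega⟩, ho⟩
          have hc : Nat.Coprime e 2 := by
            rw [Nat.coprime_comm]
            exact (Nat.prime_two.coprime_iff_not_dvd).mpr ho
          exact hc.dvd_of_dvd_mul_left hd
        · rintro ⟨⟨hd, -⟩, ho⟩
          exact ⟨⟨hd.mul_left 2, by omega⟩, ho⟩
      have hstep : ∀ e ∈ J.divisors.filter (fun e => ¬ 2 ∣ e),
          (((2 * (2 * J / e) : ℕ) : ℂ) - (e : ℂ))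
            = 2 * (((2 * (J / e) : ℕ) : ℂ) - (e : ℂ)) + (e : ℂ) := by
        intro e he
        rw [Finset.mem_filter, Nat.mem_divisors] at he
        rw [Nat.mul_div_assoc 2 he.1.1]
        push_cast
        ring
      have heven : ((2 * J).divisors.filter (fun e => 2 ∣ e))
          = J.divisors.image (fun d => 2 * d) := by
        ext e
        simp only [Finset.mem_filter, Nat.mem_divisors, Finset.mem_image]
        constructor
        · rintro ⟨⟨hd, -⟩, c, rfl⟩
          exact ⟨c, ⟨(mul_dvd_mul_iff_left (two_ne_zero)).mp hd, by omega⟩, rfl⟩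
        · rintro ⟨c, ⟨hd, -⟩, rfl⟩
          exact ⟨⟨mul_dvd_mul_left 2 hd, by omega⟩, ⟨c, rfl⟩⟩
      have hsplit : ∑ d ∈ (2 * J).divisors, (d : ℂ)
          = 2 * ∑ d ∈ J.divisors, (d : ℂ)
            + ∑ e ∈ J.divisors.filter (fun e => ¬ 2 ∣ e), (e : ℂ) := by
        rw [← Finset.sum_filter_add_sum_filter_not ((2*J).divisors) (fun e => 2 ∣ e), heven, hfe,
          Finset.sum_image (by intro x _ y _ h; simp only at h; omega)]
        push_cast
        rw [Finset.mul_sum]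
      rw [hfe, Finset.sum_congr rfl hstep, Finset.sum_add_distrib, ← Finset.mul_sum,
        ih J (by omega), hsplit]
    · -- N odd
      have hfe : N.divisors.filter (fun e => ¬ 2 ∣ e) = N.divisors := by
        apply Finset.filter_true_of_mem
        intro e he hdvd
        exact h2 (hdvd.trans (Nat.mem_divisors.mp he).1)
      rw [hfe]
      have : ∀ e ∈ N.divisors, (((2 * (N / e) : ℕ) : ℂ) - (e : ℂ))
          = 2 * ((N / e : ℕ) : ℂ) - (e : ℂ) := by intro e _; push_cast; ring
      rw [Finset.sum_congr rfl this, Finset.sum_sub_distrib, ← Finset.mul_sum,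
        Nat.sum_div_divisors N (fun d => (d : ℂ))]
      ring

lemma hasSum_shift (q : ℂ) (hq : ‖q‖ < 1) (m : ℕ) :
    HasSum (fun k : ℕ => ((k : ℂ) + 1) * q ^ ((m + 1) * (k + 1)))
      (q ^ (m + 1) / (1 - q ^ (m + 1)) ^ 2) := by
  have hr : ‖q ^ (m + 1)‖ < 1 := by
    rw [norm_pow]
    exact pow_lt_one₀ (norm_nonneg q) hq (Nat.succ_ne_zero m)
  have h := hasSum_coe_mul_geometric_of_norm_lt_one (𝕜 := ℂ) hr
  have h2 := (hasSum_nat_add_iff' (f := fun n : ℕ => (n : ℂ) * (q ^ (m + 1)) ^ n) 1).mpr h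
  simp only [Finset.range_one, Finset.sum_singleton, Nat.cast_zero, zero_mul, sub_zero] at h2
  refine h2.congr_fun fun k => ?_
  rw [← pow_mul]
  push_cast
  ring_nf

lemma hasSum_shiftC (q : ℂ) (hq : ‖q‖ < 1) (n : ℕ) :
    HasSum (fun k : ℕ => (-1 : ℂ) ^ n * (2 * (k : ℂ) + 1) * q ^ ((n + 1) * (n + 2) / 2 + k * (n + 1)))
      ((-1 : ℂ) ^ n * (1 + q ^ (n + 1)) * q ^ ((n + 1) * (n + 2) / 2) / (1 - q ^ (n + 1)) ^ 2) := by
  have hr : ‖q ^ (n + 1)‖ < 1 := by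
    rw [norm_pow]
    exact pow_lt_one₀ (norm_nonneg q) hq (Nat.succ_ne_zero n)
  set r := q ^ (n + 1) with hrdef
  have hne : (1 : ℂ) - r ≠ 0 := by
    intro h
    have : r = 1 := by linear_combination -h
    rw [this] at hr; simp at hr
  have h1 := hasSum_coe_mul_geometric_of_norm_lt_one (𝕜 := ℂ) hr
  have h2 := hasSum_geometric_of_norm_lt_one hr
  have h3 := (h1.mul_left 2).add h2
  have h4 : HasSum (fun k : ℕ => (2 * (k : ℂ) + 1) * r ^ k) ((1 + r) / (1 - r) ^ 2) := by
    have heq : 2 * (r / (1 - r) ^ 2) + (1 - r)⁻¹ = (1 + r) / (1 - r) ^ 2 := by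
      field_simp
      ring
    rw [← heq]
    refine h3.congr_fun fun k => ?_
    ring
  have h5 := h4.mul_left ((-1 : ℂ) ^ n * q ^ ((n + 1) * (n + 2) / 2))
  have heq2 : (-1 : ℂ) ^ n * q ^ ((n + 1) * (n + 2) / 2) * ((1 + r) / (1 - r) ^ 2)
      = (-1 : ℂ) ^ n * (1 + r) * q ^ ((n + 1) * (n + 2) / 2) / (1 - r) ^ 2 := by
    ring
  rw [heq2] at h5
  refine h5.congr_fun fun k => ?_
  rw [hrdef, ← pow_mul, pow_add]
  ring

lemma summable_aux {x : ℝ} (hx0 : 0 ≤ x) (hx : x < 1) :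
    Summable (fun k : ℕ => (2 * (k : ℝ) + 3) * x ^ (k + 1)) := by
  have h1 : Summable (fun k : ℕ => (k : ℝ) * x ^ k) := by
    simpa using summable_pow_mul_geometric_of_norm_lt_one 1 (by rwa [Real.norm_eq_abs, abs_of_nonneg hx0])
  have h2 : Summable (fun k : ℕ => x ^ k) := summable_geometric_of_lt_one hx0 hx
  have h3 := (((h1.mul_left 2).add (h2.mul_left 3)).mul_right x)
  refine h3.congr fun k => ?_
  ring

lemma norm_bound (q : ℂ) (hq : ‖q‖ < 1) (m k e : ℕ) (he : m + k + 1 ≤ e) (c : ℝ) (hc : 0 ≤ c)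
    (hck : c ≤ 2 * k + 3) : c * ‖q‖ ^ e ≤ ‖q‖ ^ m * ((2 * (k : ℝ) + 3) * ‖q‖ ^ (k + 1)) := by
  have h0 : (0:ℝ) ≤ ‖q‖ := norm_nonneg q
  calc c * ‖q‖ ^ e ≤ (2 * (k:ℝ) + 3) * ‖q‖ ^ (m + k + 1) := by
        apply mul_le_mul hck (pow_le_pow_of_le_one h0 hq.le he) (pow_nonneg h0 e) (by positivity)
    _ = ‖q‖ ^ m * ((2 * (k : ℝ) + 3) * ‖q‖ ^ (k + 1)) := by rw [show m+k+1 = m+(k+1) by ring, pow_add]; ring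

lemma majorant_summable (q : ℂ) (hq : ‖q‖ < 1) :
    Summable (fun p : ℕ × ℕ => ‖q‖ ^ p.1 * ((2 * (p.2 : ℝ) + 3) * ‖q‖ ^ (p.2 + 1))) := by
  apply Summable.mul_of_nonneg (summable_geometric_of_lt_one (norm_nonneg q) hq)
    (summable_aux (norm_nonneg q) hq)
  · intro m
    exact pow_nonneg (norm_nonneg q) m
  · intro k
    positivity

lemma sumFB (q : ℂ) (hq : ‖q‖ < 1) :
    Summable (fun p : ℕ × ℕ => ((p.2 : ℂ) + 1) * q ^ ((p.1 + 1) * (p.2 + 1))) := by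
  apply Summable.of_norm
  apply (majorant_summable q hq).of_nonneg_of_le (fun p => norm_nonneg _)
  rintro ⟨m, k⟩
  have h1 : ‖((k : ℂ) + 1) * q ^ ((m + 1) * (k + 1))‖ = ((k:ℝ)+1) * ‖q‖ ^ ((m+1)*(k+1)) := by
    rw [norm_mul, norm_pow]
    congr 1
    have : ((k : ℂ) + 1) = ((k + 1 : ℕ) : ℂ) := by push_cast; ring
    rw [this, Complex.norm_natCast]
    push_cast; ring
  rw [h1]
  exact norm_bound q hq m k _ (by nlinarith) _ (by positivity) (by push_cast; linarith)

lemma sumFC (q : ℂ) (hq : ‖q‖ < 1) :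
    Summable (fun p : ℕ × ℕ =>
      (-1 : ℂ) ^ p.1 * (2 * (p.2 : ℂ) + 1) * q ^ ((p.1 + 1) * (p.1 + 2) / 2 + p.2 * (p.1 + 1))) := by
  apply Summable.of_norm
  apply (majorant_summable q hq).of_nonneg_of_le (fun p => norm_nonneg _)
  rintro ⟨n, k⟩
  have h1 : ‖(-1 : ℂ) ^ n * (2 * (k : ℂ) + 1) * q ^ ((n + 1) * (n + 2) / 2 + k * (n + 1))‖
      = (2*(k:ℝ)+1) * ‖q‖ ^ ((n + 1) * (n + 2) / 2 + k * (n + 1)) := by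
    rw [norm_mul, norm_mul, norm_pow, norm_pow, norm_neg, norm_one, one_pow, one_mul]
    congr 1
    have : (2 * (k : ℂ) + 1) = ((2 * k + 1 : ℕ) : ℂ) := by push_cast; ring
    rw [this, Complex.norm_natCast]
    push_cast; ring
  rw [h1]
  have hE : n + k + 1 ≤ (n + 1) * (n + 2) / 2 + k * (n + 1) := by
    have h2 : n + 1 ≤ (n + 1) * (n + 2) / 2 := by
      apply (Nat.le_div_iff_mul_le (by norm_num)).mpr
      nlinarith
    have h3 : k ≤ k * (n + 1) := Nat.le_mul_of_pos_right k (by omega)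
    omega
  exact norm_bound q hq n k _ hE _ (by positivity) (by push_cast; linarith)

lemma keyB (q : ℂ) (hq : ‖q‖ < 1) :
    HasSum (fun N : ℕ => (∑ d ∈ N.divisors, (d : ℂ)) * q ^ N)
      (∑' n : ℕ, q ^ (n + 1) / (1 - q ^ (n + 1)) ^ 2) := by
  have hsum := sumFB q hq
  have htot : (∑' p : ℕ × ℕ, ((p.2 : ℂ) + 1) * q ^ ((p.1 + 1) * (p.2 + 1)))
      = ∑' n : ℕ, q ^ (n + 1) / (1 - q ^ (n + 1)) ^ 2 := by
    rw [Summable.tsum_prod' hsum (fun m => (hasSum_shift q hq m).summable)]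
    exact tsum_congr fun m => (hasSum_shift q hq m).tsum_eq
  have hfib := hsum.hasSum.tsum_fiberwise (fun p : ℕ × ℕ => (p.1 + 1) * (p.2 + 1))
  rw [htot] at hfib
  refine hfib.congr_fun fun N => ?_
  have hpre : (fun p : ℕ × ℕ => (p.1 + 1) * (p.2 + 1)) ⁻¹' {N}
      = ↑(N.divisorsAntidiagonal.image (fun x => (x.1 - 1, x.2 - 1))) := by
    ext ⟨a, b⟩
    simp only [Set.mem_preimage, Set.mem_singleton_iff, Finset.coe_image, Set.mem_image,
      Finset.mem_coe, Nat.mem_divisorsAntidiagonal]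
    constructor
    · intro h
      refine ⟨(a + 1, b + 1), ⟨h, ?_⟩, by simp⟩
      intro h0
      rw [h0] at h
      exact absurd h (by positivity)
    · rintro ⟨⟨u, v⟩, ⟨huv, hN0⟩, heq⟩
      have hu : u ≠ 0 := by rintro rfl; simp at huv; exact hN0 huv.symm
      have hv : v ≠ 0 := by rintro rfl; simp at huv; exact hN0 huv.symm
      obtain ⟨h1, h2⟩ := Prod.mk.injEq .. ▸ heq
      have e1 : a + 1 = u := by omega
      have e2 : b + 1 = v := by omega
      rw [e1, e2]; exact huv
  have hinj : ∀ x ∈ N.divisorsAntidiagonal, ∀ y ∈ N.divisorsAntidiagonal,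
      (x.1 - 1, x.2 - 1) = (y.1 - 1, y.2 - 1) → x = y := by
    intro x hx y hy h
    have hx' := Nat.mem_divisorsAntidiagonal.mp hx
    have hy' := Nat.mem_divisorsAntidiagonal.mp hy
    have hx1 : x.1 ≠ 0 := by rintro h0; rw [h0] at hx'; simp at hx'; omega
    have hx2 : x.2 ≠ 0 := by rintro h0; rw [h0] at hx'; simp at hx'; omega
    have hy1 : y.1 ≠ 0 := by rintro h0; rw [h0] at hy'; simp at hy'; omega
    have hy2 : y.2 ≠ 0 := by rintro h0; rw [h0] at hy'; simp at hy'; omega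
    obtain ⟨h1, h2⟩ := Prod.mk.injEq .. ▸ h
    have := Prod.ext_iff.mp h
    simp only at this
    exact Prod.ext_iff.mpr ⟨by omega, by omega⟩
  rw [hpre, Finset.tsum_subtype' (N.divisorsAntidiagonal.image (fun x => (x.1 - 1, x.2 - 1)))
      (fun p : ℕ × ℕ => ((p.2 : ℂ) + 1) * q ^ ((p.1 + 1) * (p.2 + 1))),
    Finset.sum_image hinj]
  have hterm : ∀ x ∈ N.divisorsAntidiagonal,
      ((((x.1 - 1, x.2 - 1) : ℕ × ℕ).2 : ℂ) + 1)
          * q ^ ((((x.1 - 1, x.2 - 1) : ℕ × ℕ).1 + 1) * (((x.1 - 1, x.2 - 1) : ℕ × ℕ).2 + 1))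
        = (x.2 : ℂ) * q ^ N := by
    intro x hx
    obtain ⟨huv, hN0⟩ := Nat.mem_divisorsAntidiagonal.mp hx
    have hx1 : x.1 ≠ 0 := by rintro h0; rw [h0] at huv; simp at huv; omega
    have hx2 : x.2 ≠ 0 := by rintro h0; rw [h0] at huv; simp at huv; omega
    simp only
    have e1 : x.1 - 1 + 1 = x.1 := by omega
    have e2 : x.2 - 1 + 1 = x.2 := by omega
    rw [e1, e2, huv]
    congr 1
    rw [Nat.cast_sub (by omega)]
    ring
  rw [Finset.sum_congr rfl hterm,
    Nat.sum_divisorsAntidiagonal' (f := fun i j => (j : ℂ) * q ^ N), ← Finset.sum_mul]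

/-- For `e` an odd divisor of `N`, the corresponding index pair in the expansion of the
alternating Lambert-type series. -/
def psi (N e : ℕ) : ℕ × ℕ :=
  if e < 2 * (N / e) then (e - 1, (2 * (N / e) - e - 1) / 2)
  else (2 * (N / e) - 1, (e - 2 * (N / e) - 1) / 2)

lemma psi_props (N e : ℕ) (he : e ∣ N) (hN : N ≠ 0) (ho : ¬ 2 ∣ e) :
    (((psi N e).1 + 1) * ((psi N e).1 + 2) / 2 + (psi N e).2 * ((psi N e).1 + 1) = N)
    ∧ ((if 2 ∣ (psi N e).1 then (psi N e).1 + 1 else (psi N e).1 + 2 * (psi N e).2 + 2) = e)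
    ∧ ((-1 : ℂ) ^ (psi N e).1 * (2 * ((psi N e).2 : ℂ) + 1)
        = ((2 * (N / e) : ℕ) : ℂ) - (e : ℂ)) := by
  set w := N / e with hwdef
  have hw : e * w = N := Nat.mul_div_cancel' he
  have he1 : 1 ≤ e := by omega
  have hw1 : 1 ≤ w := Nat.pos_of_ne_zero (fun h0 => hN (by rw [← hw, h0, mul_zero]))
  have hef : e ≠ 2 * w := by omega
  have htri : ∀ a : ℕ, 2 * ((a + 1) * (a + 2) / 2) = (a + 1) * (a + 2) := by
    intro a
    refine Nat.mul_div_cancel' ?_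
    have : Even ((a + 1) * (a + 2)) := Nat.even_mul_succ_self (a + 1)
    exact this.two_dvd
  have hwz : (e : ℤ) * w = N := by exact_mod_cast hw
  by_cases hlt : e < 2 * w
  · have hpsi : psi N e = (e - 1, (2 * w - e - 1) / 2) := by
      unfold psi; rw [if_pos (show e < 2 * (N / e) from hwdef ▸ hlt)]
    rw [hpsi]
    have hd2 : 2 ∣ (2 * w - e - 1) := by omega
    have h2 : 2 * ((2 * w - e - 1) / 2) = 2 * w - e - 1 := Nat.mul_div_cancel' hd2
    refine ⟨?_, ?_, ?_⟩
    · dsimp only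
      have key : 2 * ((e - 1 + 1) * (e - 1 + 2) / 2 + (2 * w - e - 1) / 2 * (e - 1 + 1))
          = 2 * N := by
        rw [Nat.mul_add, htri (e - 1), ← Nat.mul_assoc, h2,
          show e - 1 + 1 = e from by omega, show e - 1 + 2 = e + 1 from by omega]
        zify [show e ≤ 2 * w from by omega, show 1 ≤ 2 * w - e from by omega]
        linear_combination 2 * hwz
      omega
    · dsimp only
      rw [if_pos (show 2 ∣ (e - 1) by omega)]
      omega
    · dsimp only
      have hev : Even (e - 1) := by rw [Nat.even_iff]; omega
      rw [hev.neg_one_pow, one_mul]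
      have hx' := congrArg (fun t : ℕ => (t : ℂ)) h2
      push_cast at hx'
      have h3 : ((2 * w - e - 1 : ℕ) : ℂ) = 2 * (w : ℂ) - e - 1 := by
        rw [Nat.cast_sub (by omega), Nat.cast_sub (by omega)]
        push_cast; ring
      push_cast
      linear_combination hx' + h3
  · have hgt : 2 * w < e := by omega
    have hpsi : psi N e = (2 * w - 1, (e - 2 * w - 1) / 2) := by
      unfold psi; rw [if_neg (show ¬ e < 2 * (N / e) from hwdef ▸ hlt)]
    rw [hpsi]
    have hd2 : 2 ∣ (e - 2 * w - 1) := by omega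
    have h2 : 2 * ((e - 2 * w - 1) / 2) = e - 2 * w - 1 := Nat.mul_div_cancel' hd2
    refine ⟨?_, ?_, ?_⟩
    · dsimp only
      have key : 2 * ((2 * w - 1 + 1) * (2 * w - 1 + 2) / 2 + (e - 2 * w - 1) / 2 * (2 * w - 1 + 1))
          = 2 * N := by
        rw [Nat.mul_add, htri (2 * w - 1), ← Nat.mul_assoc, h2,
          show 2 * w - 1 + 1 = 2 * w from by omega, show 2 * w - 1 + 2 = 2 * w + 1 from by omega]
        zify [show 2 * w ≤ e from by omega, show 1 ≤ e - 2 * w from by omega]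
        linear_combination 2 * hwz
      omega
    · dsimp only
      rw [if_neg (show ¬ 2 ∣ (2 * w - 1) by omega)]
      omega
    · dsimp only
      have hodd : Odd (2 * w - 1) := by rw [Nat.odd_iff]; omega
      rw [hodd.neg_one_pow]
      have hx' := congrArg (fun t : ℕ => (t : ℂ)) h2
      push_cast at hx'
      have h3 : ((e - 2 * w - 1 : ℕ) : ℂ) = (e : ℂ) - 2 * w - 1 := by
        rw [Nat.cast_sub (by omega), Nat.cast_sub (by omega)]
        push_cast; ring
      push_cast
      linear_combination - hx' - h3

lemma psi_surj (N a b : ℕ) (h : (a + 1) * (a + 2) / 2 + b * (a + 1) = N) :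
    ∃ e, e ∈ N.divisors.filter (fun e => ¬ 2 ∣ e) ∧ psi N e = (a, b) := by
  have htri : 2 * ((a + 1) * (a + 2) / 2) = (a + 1) * (a + 2) := by
    refine Nat.mul_div_cancel' ?_
    exact (Nat.even_mul_succ_self (a + 1)).two_dvd
  have hge : 1 * 2 ≤ (a + 1) * (a + 2) := Nat.mul_le_mul (by omega) (by omega)
  have hN1 : 1 ≤ N := by omega
  have huv : (a + 1) * (a + 2 + 2 * b) = 2 * N := by
    have h1 : (a + 1) * (a + 2 + 2 * b) = (a + 1) * (a + 2) + 2 * (b * (a + 1)) := by ring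
    rw [h1, ← htri, ← h]
    ring
  by_cases hpar : 2 ∣ a
  · have hv2 : 2 ∣ (a + 2 + 2 * b) := by omega
    obtain ⟨t, ht⟩ := hv2
    have hut : (a + 1) * t = N := by
      have h2 : 2 * ((a + 1) * t) = 2 * N := by rw [← huv, ht]; ring
      omega
    have hNu : N / (a + 1) = t := by
      rw [← hut, Nat.mul_div_cancel_left t (by omega : 0 < a + 1)]
    refine ⟨a + 1, ?_, ?_⟩
    · rw [Finset.mem_filter, Nat.mem_divisors]
      exact ⟨⟨⟨t, hut.symm⟩, by omega⟩, by omega⟩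
    · unfold psi
      rw [hNu, if_pos (by omega)]
      simp only [Prod.mk.injEq]
      constructor <;> omega
  · have hu2 : 2 ∣ (a + 1) := by omega
    obtain ⟨t, ht⟩ := hu2
    have hvt : (a + 2 + 2 * b) * t = N := by
      have h2 : 2 * ((a + 2 + 2 * b) * t) = 2 * N := by rw [← huv, ht]; ring
      omega
    have hNv : N / (a + 2 + 2 * b) = t := by
      rw [← hvt, Nat.mul_div_cancel_left t (by omega : 0 < a + 2 + 2 * b)]
    refine ⟨a + 2 + 2 * b, ?_, ?_⟩
    · rw [Finset.mem_filter, Nat.mem_divisors]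
      exact ⟨⟨⟨t, hvt.symm⟩, by omega⟩, by omega⟩
    · unfold psi
      rw [hNv, if_neg (by omega)]
      simp only [Prod.mk.injEq]
      constructor <;> omega

lemma keyC (q : ℂ) (hq : ‖q‖ < 1) :
    HasSum (fun N : ℕ => (∑ d ∈ N.divisors, (d : ℂ)) * q ^ N)
      (∑' n : ℕ, (-1 : ℂ) ^ n * (1 + q ^ (n + 1)) * q ^ ((n + 1) * (n + 2) / 2) /
        (1 - q ^ (n + 1)) ^ 2) := by
  have hsum := sumFC q hq
  have htot : (∑' p : ℕ × ℕ,
        (-1 : ℂ) ^ p.1 * (2 * (p.2 : ℂ) + 1) * q ^ ((p.1 + 1) * (p.1 + 2) / 2 + p.2 * (p.1 + 1)))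
      = ∑' n : ℕ, (-1 : ℂ) ^ n * (1 + q ^ (n + 1)) * q ^ ((n + 1) * (n + 2) / 2) /
        (1 - q ^ (n + 1)) ^ 2 := by
    rw [Summable.tsum_prod' hsum (fun n => (hasSum_shiftC q hq n).summable)]
    exact tsum_congr fun n => (hasSum_shiftC q hq n).tsum_eq
  have hfib := hsum.hasSum.tsum_fiberwise
    (fun p : ℕ × ℕ => (p.1 + 1) * (p.1 + 2) / 2 + p.2 * (p.1 + 1))
  rw [htot] at hfib
  refine hfib.congr_fun fun N => ?_
  have hpre : (fun p : ℕ × ℕ => (p.1 + 1) * (p.1 + 2) / 2 + p.2 * (p.1 + 1)) ⁻¹' {N}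
      = ↑((N.divisors.filter (fun e => ¬ 2 ∣ e)).image (psi N)) := by
    ext ⟨a, b⟩
    simp only [Set.mem_preimage, Set.mem_singleton_iff, Finset.coe_image, Set.mem_image,
      Finset.mem_coe]
    constructor
    · intro h
      obtain ⟨e, he, hpe⟩ := psi_surj N a b h
      exact ⟨e, he, hpe⟩
    · rintro ⟨e, he, hpe⟩
      rw [Finset.mem_filter, Nat.mem_divisors] at he
      have := (psi_props N e he.1.1 he.1.2 he.2).1
      rw [hpe] at this
      exact this
  have hinj : ∀ x ∈ N.divisors.filter (fun e => ¬ 2 ∣ e),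
      ∀ y ∈ N.divisors.filter (fun e => ¬ 2 ∣ e), psi N x = psi N y → x = y := by
    intro x hx y hy hxy
    rw [Finset.mem_filter, Nat.mem_divisors] at hx hy
    have h1 := (psi_props N x hx.1.1 hx.1.2 hx.2).2.1
    have h2 := (psi_props N y hy.1.1 hy.1.2 hy.2).2.1
    rw [← h1, ← h2, hxy]
  rw [hpre, Finset.tsum_subtype' ((N.divisors.filter (fun e => ¬ 2 ∣ e)).image (psi N))
      (fun p : ℕ × ℕ =>
        (-1 : ℂ) ^ p.1 * (2 * (p.2 : ℂ) + 1) * q ^ ((p.1 + 1) * (p.1 + 2) / 2 + p.2 * (p.1 + 1))),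
    Finset.sum_image hinj]
  have hterm : ∀ e ∈ N.divisors.filter (fun e => ¬ 2 ∣ e),
      (-1 : ℂ) ^ (psi N e).1 * (2 * ((psi N e).2 : ℂ) + 1)
          * q ^ (((psi N e).1 + 1) * ((psi N e).1 + 2) / 2 + (psi N e).2 * ((psi N e).1 + 1))
        = (((2 * (N / e) : ℕ) : ℂ) - (e : ℂ)) * q ^ N := by
    intro e he
    rw [Finset.mem_filter, Nat.mem_divisors] at he
    obtain ⟨hg, -, hval⟩ := psi_props N e he.1.1 he.1.2 he.2
    rw [hg, hval]
  rw [Finset.sum_congr rfl hterm, ← Finset.sum_mul, odd_div_sum]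

theorem lambert_series_E2 (q : ℂ) (h0 : 0 < ‖q‖) (h1 : ‖q‖ < 1) :
    ((∑' n : ℕ, (∑ d ∈ (n + 1).divisors, (d : ℂ)) * q ^ (n + 1))
        = ∑' n : ℕ, q ^ (n + 1) / (1 - q ^ (n + 1)) ^ 2) ∧
    ((∑' n : ℕ, q ^ (n + 1) / (1 - q ^ (n + 1)) ^ 2)
        = ∑' n : ℕ, (-1 : ℂ) ^ n * (1 + q ^ (n + 1)) * q ^ ((n + 1) * (n + 2) / 2) /
            (1 - q ^ (n + 1)) ^ 2) ∧
    ((∑' n : ℕ, q ^ (n + 1) / (1 - q ^ (n + 1)) ^ 2)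
        = (1 - (1 - 24 * ∑' n : ℕ, (∑ d ∈ (n + 1).divisors, (d : ℂ)) * q ^ (n + 1))) / 24) := by
  have hq : ‖q‖ < 1 := by exact h1
  have hB := keyB q hq
  have hC := keyC q hq
  have hA : HasSum (fun n : ℕ => (∑ d ∈ (n + 1).divisors, (d : ℂ)) * q ^ (n + 1))
      (∑' n : ℕ, q ^ (n + 1) / (1 - q ^ (n + 1)) ^ 2) := by
    have h := (hasSum_nat_add_iff'
      (f := fun N : ℕ => (∑ d ∈ N.divisors, (d : ℂ)) * q ^ N) 1).mpr hB
    simpa using h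
  have e1 := hA.tsum_eq
  have e2 := hB.unique hC
  refine ⟨e1, e2, ?_⟩
  rw [e1]
  ring
end

section
/- Define for 0 < q < 1 the A₇ graph series H_{A₇}(q) := Σ_{n₁,…,n₇ ≥ 0} q^{n₁n₂+n₂n₃+n₃n₄+n₄n₅+n₅n₆+n₆n₇+n₁+n₂+n₃+n₄+n₅+n₆+n₇} / ((q)_{n₁}(q)_{n₂}(q)_{n₃}(q)_{n₄}(q)_{n₅}(q)_{n₆}(q)_{n₇}). Then as t → 0⁺ one has (e^{-t}; e^{-t})_∞⁴ · H_{A₇}(e^{-t}) = 1 + O(t); that is, there exist constants C > 0 and δ > 0 such that for all real t with 0 < t < δ, |(∏_{j=1}^{∞}(1 - e^{-jt}))⁴ · H_{A₇}(e^{-t}) - 1| ≤ C·t. -/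
set_option maxHeartbeats 1000000

/-- The finite q-Pochhammer symbol `(q)_n = ∏_{j=1}^n (1 - q^j)` (real version). -/
noncomputable def qpR (q : ℝ) (n : ℕ) : ℝ := ∏ j ∈ Finset.range n, (1 - q ^ (j + 1))

/-- The infinite q-Pochhammer symbol `(q)_∞ = ∏_{j=1}^∞ (1 - q^j)` (real version). -/
noncomputable def qpInfR (q : ℝ) : ℝ := ∏' j : ℕ, (1 - q ^ (j + 1))

/-- The `A₇` graph series. -/
noncomputable def HA7 (q : ℝ) : ℝ :=
  ∑' (n₁ : ℕ) (n₂ : ℕ) (n₃ : ℕ) (n₄ : ℕ) (n₅ : ℕ) (n₆ : ℕ) (n₇ : ℕ),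
    q ^ (n₁ * n₂ + n₂ * n₃ + n₃ * n₄ + n₄ * n₅ + n₅ * n₆ + n₆ * n₇
          + n₁ + n₂ + n₃ + n₄ + n₅ + n₆ + n₇) /
      (qpR q n₁ * qpR q n₂ * qpR q n₃ * qpR q n₄ * qpR q n₅ * qpR q n₆ * qpR q n₇)

namespace HA7aux

open Filter Topology

variable {q : ℝ}

lemma weier {f : ℕ → ℝ} (hf : ∀ j, 0 ≤ f j) (hf1 : ∀ j, f j ≤ 1) (s : Finset ℕ) :
    1 - ∑ j ∈ s, f j ≤ ∏ j ∈ s, (1 - f j) := by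
  classical
  induction s using Finset.induction with
  | empty => simp
  | @insert a s hx ih =>
    rw [Finset.sum_insert hx, Finset.prod_insert hx]
    have hs : 0 ≤ ∑ j ∈ s, f j := Finset.sum_nonneg fun j _ => hf j
    have hp : ∏ j ∈ s, (1 - f j) ≤ 1 :=
      Finset.prod_le_one (fun j _ => by linarith [hf1 j]) (fun j _ => by linarith [hf j])
    nlinarith [hf a, hf1 a]

section basic
variable (hq0 : 0 < q) (hq1 : q < 1)
include hq0 hq1

lemma pow_lt_one' (j : ℕ) : q ^ (j + 1) < 1 := pow_lt_one₀ hq0.le hq1 (Nat.succ_ne_zero j)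

lemma factor_pos (j : ℕ) : 0 < 1 - q ^ (j + 1) := by linarith [pow_lt_one' hq0 hq1 j]

lemma factor_le_one (j : ℕ) : 1 - q ^ (j + 1) ≤ 1 := by nlinarith [pow_pos hq0 (j+1)]

lemma qpR_pos (n : ℕ) : 0 < qpR q n :=
  Finset.prod_pos fun j _ => factor_pos hq0 hq1 j

lemma qpR_le_one (n : ℕ) : qpR q n ≤ 1 :=
  Finset.prod_le_one (fun j _ => (factor_pos hq0 hq1 j).le)
    (fun j _ => factor_le_one hq0 hq1 j)

lemma qpR_antitone : Antitone (qpR q) := by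
  intro m n hmn
  unfold qpR
  rw [← Finset.prod_range_mul_prod_Ico _ hmn]
  have h1 : ∏ j ∈ Finset.Ico m n, (1 - q ^ (j+1)) ≤ 1 :=
    Finset.prod_le_one (fun j _ => (factor_pos hq0 hq1 j).le)
      (fun j _ => factor_le_one hq0 hq1 j)
  have h2 : (0:ℝ) ≤ ∏ j ∈ Finset.Ico m n, (1 - q ^ (j+1)) :=
    Finset.prod_nonneg (fun j _ => (factor_pos hq0 hq1 j).le)
  exact mul_le_of_le_one_right (Finset.prod_nonneg (fun j _ => (factor_pos hq0 hq1 j).le)) h1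

lemma summable_pow : Summable (fun j : ℕ => q ^ (j + 1)) := by
  have := (summable_geometric_of_lt_one hq0.le hq1).mul_left q
  apply this.congr
  intro j
  rw [pow_succ, mul_comm]

lemma summable_log : Summable (fun j : ℕ => Real.log (1 - q ^ (j + 1))) := by
  apply Summable.of_norm
  apply Summable.of_nonneg_of_le (fun j => norm_nonneg _)
      (fun j => ?_) ((summable_pow hq0 hq1).mul_left (1 - q)⁻¹)
  have hj1 := pow_lt_one' hq0 hq1 j
  have hj0 : 0 < q ^ (j+1) := pow_pos hq0 _
  have hfp := factor_pos hq0 hq1 j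
  rw [Real.norm_eq_abs, abs_of_nonpos (Real.log_nonpos (by linarith) (by linarith))]
  rw [← Real.log_inv]
  have h2 : Real.log (1 - q ^ (j+1))⁻¹ ≤ (1 - q ^ (j+1))⁻¹ - 1 :=
    Real.log_le_sub_one_of_pos (by positivity)
  have h3 : (1 - q ^ (j+1))⁻¹ - 1 = q^(j+1) / (1 - q^(j+1)) := by
    field_simp
    ring
  have h5 : q ^ (j+1) ≤ q ^ 1 := pow_le_pow_of_le_one hq0.le hq1.le (by omega)
  have h4 : q^(j+1) / (1 - q^(j+1)) ≤ q^(j+1) / (1 - q) := by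
    apply div_le_div_of_nonneg_left hj0.le (by linarith) ?_
    simp only [pow_one] at h5; linarith
  have h6 : (1:ℝ)/(1-q) * q^(j+1) = q^(j+1)/(1-q) := by ring
  rw [inv_eq_one_div (1-q)] at *
  linarith

lemma hasProd_qpInf : HasProd (fun j : ℕ => 1 - q ^ (j + 1)) (qpInfR q) :=
  (Real.multipliable_of_summable_log (fun j => factor_pos hq0 hq1 j)
    (summable_log hq0 hq1)).hasProd

lemma tendsto_qpR : Tendsto (fun n => qpR q n) atTop (𝓝 (qpInfR q)) :=
  (hasProd_qpInf hq0 hq1).tendsto_prod_nat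

lemma qpInfR_pos : 0 < qpInfR q := by
  have h2 := Real.rexp_tsum_eq_tprod (f := fun j => 1 - q ^ (j+1))
    (fun j => factor_pos hq0 hq1 j) (summable_log hq0 hq1)
  beta_reduce at h2
  rw [qpInfR, ← h2]
  exact Real.exp_pos _

lemma qpInfR_le_qpR (n : ℕ) : qpInfR q ≤ qpR q n := by
  apply le_of_tendsto (tendsto_qpR hq0 hq1)
  filter_upwards [eventually_ge_atTop n] with m hm
  exact qpR_antitone hq0 hq1 hm

lemma qpR_sub_qpInf_le (n : ℕ) :
    qpR q n - qpInfR q ≤ qpR q n * (q ^ (n+1) / (1 - q)) := by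
  have key : ∀ m, n ≤ m → qpR q n * (1 - q ^ (n+1) / (1-q)) ≤ qpR q m := by
    intro m hm
    have hsplit : qpR q m = qpR q n * ∏ j ∈ Finset.Ico n m, (1 - q ^ (j+1)) := by
      rw [qpR, qpR, ← Finset.prod_range_mul_prod_Ico _ hm]
    rw [hsplit]
    have hW : 1 - ∑ j ∈ Finset.Ico n m, q ^ (j+1) ≤ ∏ j ∈ Finset.Ico n m, (1 - q ^ (j+1)) :=
      weier (fun j => (pow_pos hq0 (j+1)).le) (fun j => (pow_lt_one' hq0 hq1 j).le) _
    have hsum : ∑ j ∈ Finset.Ico n m, q ^ (j+1) ≤ q ^ (n+1) / (1 - q) := by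
      have heq : ∑ j ∈ Finset.Ico n m, q ^ (j+1)
          = q^(n+1) * ∑ i ∈ Finset.range (m-n), q^i := by
        rw [Finset.sum_Ico_eq_sum_range, Finset.mul_sum]
        apply Finset.sum_congr rfl
        intro i _
        rw [← pow_add]
        congr 1
        omega
      have hgeom : ∑ i ∈ Finset.range (m-n), q^i ≤ (1-q)⁻¹ := by
        have := Summable.sum_le_tsum (Finset.range (m-n)) (fun i _ => (pow_nonneg hq0.le i))
          (summable_geometric_of_lt_one hq0.le hq1)
        rwa [tsum_geometric_of_lt_one hq0.le hq1] at this
      rw [heq, div_eq_mul_inv]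
      exact mul_le_mul_of_nonneg_left hgeom (pow_pos hq0 _).le
    have := qpR_pos hq0 hq1 n
    nlinarith
  have h := ge_of_tendsto (tendsto_qpR hq0 hq1) (by
    filter_upwards [eventually_ge_atTop n] with m hm using key m hm)
  have := qpR_pos hq0 hq1 n
  nlinarith [h]

end basic
end HA7aux

namespace HA7aux
open Filter Topology

/-- Euler's function F(z) = Σ z^n/(q)_n -/
noncomputable def F (q z : ℝ) : ℝ := ∑' n : ℕ, z ^ n / qpR q n

variable {q : ℝ}

section euler
variable (hq0 : 0 < q) (hq1 : q < 1)
include hq0 hq1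

lemma qpR_succ (n : ℕ) : qpR q (n+1) = qpR q n * (1 - q^(n+1)) := by
  rw [qpR, Finset.prod_range_succ]; rfl

lemma summable_F {z : ℝ} (hz0 : 0 ≤ z) (hz1 : z < 1) :
    Summable (fun n : ℕ => z ^ n / qpR q n) := by
  apply Summable.of_nonneg_of_le
    (fun n => div_nonneg (pow_nonneg hz0 n) (qpR_pos hq0 hq1 n).le)
    (fun n => ?_) ((summable_geometric_of_lt_one hz0 hz1).mul_right (qpInfR q)⁻¹)
  rw [div_eq_mul_inv]
  apply mul_le_mul_of_nonneg_left _ (pow_nonneg hz0 n)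
  exact inv_anti₀ (qpInfR_pos hq0 hq1) (qpInfR_le_qpR hq0 hq1 n)

lemma F_sub {z : ℝ} (hz0 : 0 ≤ z) (hz1 : z < 1) :
    F q z - F q (q * z) = z * F q z := by
  have hqz0 : 0 ≤ q * z := mul_nonneg hq0.le hz0
  have hqz1 : q * z < 1 := by nlinarith
  have h1 := summable_F hq0 hq1 hz0 hz1
  have h2 := summable_F hq0 hq1 hqz0 hqz1
  have hsub : F q z - F q (q*z) = ∑' n : ℕ, (z^n/qpR q n - (q*z)^n/qpR q n) :=
    (Summable.tsum_sub h1 h2).symm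
  rw [hsub]
  set g : ℕ → ℝ := fun n => z^n/qpR q n - (q*z)^n/qpR q n with hg
  have hshift : (fun n => g (n + 1)) = fun n : ℕ => z * (z^n / qpR q n) := by
    funext n
    have hpos := (qpR_pos hq0 hq1 n).ne'
    have hfac := (factor_pos hq0 hq1 n).ne'
    simp only [hg, qpR_succ hq0 hq1 n]
    field_simp
    ring
  have hS : HasSum (fun n : ℕ => g (n + 1)) (z * F q z) := by
    rw [hshift]; exact h1.hasSum.mul_left z
  have hS2 := (hasSum_nat_add_iff (f := g) 1).mp hS
  have hg0 : ∑ i ∈ Finset.range 1, g i = 0 := by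
    simp [hg, qpR]
  rw [hg0, add_zero] at hS2
  exact hS2.tsum_eq

lemma F_rec (m : ℕ) : F q (q^(m+2)) = (1 - q^(m+1)) * F q (q^(m+1)) := by
  have hz0 : (0:ℝ) ≤ q^(m+1) := (pow_pos hq0 _).le
  have hz1 := pow_lt_one' hq0 hq1 m
  have h := F_sub hq0 hq1 hz0 hz1
  have : q * q^(m+1) = q^(m+2) := by ring
  rw [this] at h
  linarith

lemma F_pow (m : ℕ) : F q (q^(m+1)) = qpR q m * F q q := by
  induction m with
  | zero => simp [qpR]
  | succ n ih =>
    rw [F_rec hq0 hq1 n, ih, qpR_succ hq0 hq1 n]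
    ring

lemma F_one_bound {z : ℝ} (hz0 : 0 ≤ z) (hz1 : z < 1) :
    |F q z - 1| ≤ z * ((1 - z) * qpInfR q)⁻¹ := by
  have h1 := summable_F hq0 hq1 hz0 hz1
  have hF1 : F q z - 1 = ∑' n : ℕ, z^(n+1)/qpR q (n+1) := by
    rw [F, Summable.tsum_eq_zero_add h1]
    simp [qpR]
  rw [hF1]
  have hnn : ∀ n : ℕ, 0 ≤ z^(n+1)/qpR q (n+1) :=
    fun n => div_nonneg (pow_nonneg hz0 _) (qpR_pos hq0 hq1 _).le
  rw [abs_of_nonneg (tsum_nonneg hnn)]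
  have hle : ∀ n : ℕ, z^(n+1)/qpR q (n+1) ≤ z * (z^n * (qpInfR q)⁻¹) := by
    intro n
    rw [div_eq_mul_inv, pow_succ, mul_comm (z^n) z, mul_assoc]
    apply mul_le_mul_of_nonneg_left _ hz0
    apply mul_le_mul_of_nonneg_left _ (pow_nonneg hz0 n)
    exact inv_anti₀ (qpInfR_pos hq0 hq1) (qpInfR_le_qpR hq0 hq1 _)
  calc ∑' n : ℕ, z^(n+1)/qpR q (n+1)
      ≤ ∑' n : ℕ, z * (z^n * (qpInfR q)⁻¹) := by
        apply Summable.tsum_le_tsum hle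
          ((summable_nat_add_iff (f := fun m : ℕ => z^m / qpR q m) 1).mpr h1)
          (((summable_geometric_of_lt_one hz0 hz1).mul_right _).mul_left z)
    _ = z * ((1-z)⁻¹ * (qpInfR q)⁻¹) := by
        rw [tsum_mul_left, tsum_mul_right, tsum_geometric_of_lt_one hz0 hz1]
    _ = z * ((1 - z) * qpInfR q)⁻¹ := by rw [mul_inv]

lemma F_q_eq : F q q = (qpInfR q)⁻¹ := by
  have he := qpInfR_pos hq0 hq1
  have htend1 : Tendsto (fun m : ℕ => F q (q^(m+1))) atTop (𝓝 1) := by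
    have hb : ∀ m : ℕ, |F q (q^(m+1)) - 1| ≤ q^(m+1) * ((1 - q) * qpInfR q)⁻¹ := by
      intro m
      have hz0 : (0:ℝ) ≤ q^(m+1) := (pow_pos hq0 _).le
      have hz1 := pow_lt_one' hq0 hq1 m
      refine le_trans (F_one_bound hq0 hq1 hz0 hz1) ?_
      apply mul_le_mul_of_nonneg_left _ hz0
      apply inv_anti₀ (mul_pos (by linarith) he)
      apply mul_le_mul_of_nonneg_right _ he.le
      have : q^(m+1) ≤ q^1 := pow_le_pow_of_le_one hq0.le hq1.le (by omega)
      simp only [pow_one] at this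
      linarith
    have htend0 : Tendsto (fun m : ℕ => q^(m+1) * ((1 - q) * qpInfR q)⁻¹) atTop (𝓝 0) := by
      rw [show (0:ℝ) = 0 * ((1 - q) * qpInfR q)⁻¹ by ring]
      exact (tendsto_pow_atTop_nhds_zero_of_lt_one hq0.le hq1).comp
        (tendsto_add_atTop_nat 1) |>.mul_const _
    have h0 : Tendsto (fun m : ℕ => F q (q^(m+1)) - 1) atTop (𝓝 0) :=
      squeeze_zero_norm (fun m => by simpa [Real.norm_eq_abs] using hb m) htend0
    have := h0.add_const 1
    simpa using this
  have htend2 : Tendsto (fun m : ℕ => qpR q m * F q q) atTop (𝓝 (qpInfR q * F q q)) :=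
    (tendsto_qpR hq0 hq1).mul_const _
  have heq : (fun m : ℕ => F q (q^(m+1))) = fun m => qpR q m * F q q :=
    funext (F_pow hq0 hq1)
  rw [heq] at htend1
  have := tendsto_nhds_unique htend1 htend2
  field_simp
  linarith [this]

end euler
end HA7aux

namespace HA7aux
open Filter Topology
variable {q : ℝ}
section euler2
variable (hq0 : 0 < q) (hq1 : q < 1)
include hq0 hq1

lemma F_val (m : ℕ) : F q (q^(m+1)) = qpR q m / qpInfR q := by
  rw [F_pow hq0 hq1, F_q_eq hq0 hq1, div_eq_mul_inv]

lemma eulerA0 (m : ℕ) :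
    HasSum (fun n : ℕ => (q^(m+1))^n / qpR q n) (qpR q m / qpInfR q) := by
  have h := (summable_F hq0 hq1 (z := q^(m+1)) (pow_pos hq0 _).le
    (pow_lt_one' hq0 hq1 m)).hasSum
  rwa [show (∑' n : ℕ, (q^(m+1))^n / qpR q n) = F q (q^(m+1)) from rfl,
    F_val hq0 hq1] at h

lemma eulerA (m : ℕ) :
    HasSum (fun n : ℕ => q^((m+1)*n) / qpR q n) (qpR q m / qpInfR q) := by
  have h := eulerA0 hq0 hq1 m
  have heq : (fun n : ℕ => (q^(m+1))^n / qpR q n)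
      = fun n : ℕ => q^((m+1)*n) / qpR q n := by
    funext n; rw [← pow_mul]
  rwa [heq] at h

lemma geomA (m : ℕ) :
    HasSum (fun n : ℕ => q^((m+1)*n)) ((1 - q^(m+1))⁻¹) := by
  have h := hasSum_geometric_of_lt_one (r := q^(m+1)) (pow_pos hq0 _).le
    (pow_lt_one' hq0 hq1 m)
  have heq : (fun n : ℕ => (q^(m+1))^n) = fun n : ℕ => q^((m+1)*n) := by
    funext n; rw [← pow_mul]
  rwa [heq] at h

lemma eulerB (m : ℕ) :
    HasSum (fun n : ℕ => q^((m+1)*n) / qpR q (n+1))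
      ((qpR q m / qpInfR q - 1) / q^(m+1)) := by
  set z := q^(m+1) with hz
  have hzne : z ≠ 0 := (pow_pos hq0 _).ne'
  have h := eulerA0 hq0 hq1 m
  have h2 : HasSum (fun n : ℕ => z^(n+1) / qpR q (n+1))
      (qpR q m / qpInfR q - 1) := by
    apply (hasSum_nat_add_iff (f := fun n : ℕ => z^n / qpR q n) 1).mpr
    have : qpR q m / qpInfR q - 1 + ∑ i ∈ Finset.range 1, z^i / qpR q i
        = qpR q m / qpInfR q := by simp [qpR]
    rwa [this]
  have h3 := h2.div_const z
  have heq : (fun n : ℕ => z^(n+1) / qpR q (n+1) / z)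
      = fun n : ℕ => q^((m+1)*n) / qpR q (n+1) := by
    funext n
    have h4 : z^(n+1) / qpR q (n+1) / z = z^n / qpR q (n+1) := by
      rw [pow_succ]
      field_simp [(qpR_pos hq0 hq1 (n+1)).ne']
    rw [h4, hz, ← pow_mul]
  rwa [heq] at h3

end euler2
end HA7aux

namespace HA7aux
open Filter Topology

noncomputable def f6 (q : ℝ) (n1 n2 n3 n4 n5 n6 : ℕ) : ℝ :=
  q^(n1*n2+n2*n3+n3*n4+n4*n5+n5*n6+n1+n2+n3+n4+n5+n6) /
    (qpR q n1*qpR q n2*qpR q n3*qpR q n4*qpR q n5) * (qpInfR q)⁻¹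

noncomputable def f5 (q : ℝ) (n1 n2 n3 n4 n5 : ℕ) : ℝ :=
  q^(n1*n2+n2*n3+n3*n4+n4*n5+n1+n2+n3+n4+n5) /
    (qpR q n1*qpR q n2*qpR q n3*qpR q n4*qpR q (n5+1)) * (qpInfR q)⁻¹

noncomputable def gr (q : ℝ) (n1 n2 n3 n4 : ℕ) : ℝ :=
  q^(n1*n2+n2*n3+n3*n4+n1+n2+n3+n4) / (qpR q n1*qpR q n2*qpR q n3*qpR q n4)
    * ((qpR q n4 / qpInfR q - 1) / (qpInfR q * q^(n4+1)))

noncomputable def g2r (q : ℝ) (n2 n3 n4 : ℕ) : ℝ :=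
  q^(n2*n3+n3*n4+n2+n3+n4) / (qpR q n3*qpR q n4)
    * ((qpR q n4 / qpInfR q - 1) / (qpInfR q^2 * q^(n4+1)))

noncomputable def g3r (q : ℝ) (n3 n4 : ℕ) : ℝ :=
  q^(n3*n4+n3+n4) / (qpR q (n3+1)*qpR q n4)
    * ((qpR q n4 / qpInfR q - 1) / (qpInfR q^2 * q^(n4+1)))

noncomputable def g4r (q : ℝ) (n4 : ℕ) : ℝ :=
  q^n4 / qpR q n4 * ((qpR q n4 / qpInfR q - 1)^2 / (qpInfR q^2 * q^(2*n4+2)))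

variable {q : ℝ}
section stages
variable (hq0 : 0 < q) (hq1 : q < 1)
include hq0 hq1

lemma eulerA' (m : ℕ) :
    HasSum (fun n : ℕ => q^((m+1)*n) / (qpR q m * qpR q n)) (qpInfR q)⁻¹ := by
  have h := (eulerA hq0 hq1 m).div_const (qpR q m)
  have hm := (qpR_pos hq0 hq1 m).ne'
  have heq : (fun n : ℕ => q^((m+1)*n) / qpR q n / qpR q m)
      = fun n : ℕ => q^((m+1)*n) / (qpR q m * qpR q n) := by
    funext n
    rw [div_div, mul_comm (qpR q n) (qpR q m)]
  have hv : qpR q m / qpInfR q / qpR q m = (qpInfR q)⁻¹ := by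
    rw [div_div, mul_comm, ← div_div, div_self hm, one_div]
  rwa [heq, hv] at h

lemma stageA (n1 n2 n3 n4 n5 n6 : ℕ) :
    HasSum (fun n7 : ℕ => q ^ (n1 * n2 + n2 * n3 + n3 * n4 + n4 * n5 + n5 * n6 + n6 * n7
          + n1 + n2 + n3 + n4 + n5 + n6 + n7) /
      (qpR q n1 * qpR q n2 * qpR q n3 * qpR q n4 * qpR q n5 * qpR q n6 * qpR q n7))
      (f6 q n1 n2 n3 n4 n5 n6) := by
  set c : ℝ := q^(n1*n2+n2*n3+n3*n4+n4*n5+n5*n6+n1+n2+n3+n4+n5+n6) /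
    (qpR q n1*qpR q n2*qpR q n3*qpR q n4*qpR q n5) with hc
  have h := (eulerA' hq0 hq1 n6).mul_left c
  have heq : (fun n7 : ℕ => q ^ (n1 * n2 + n2 * n3 + n3 * n4 + n4 * n5 + n5 * n6 + n6 * n7
          + n1 + n2 + n3 + n4 + n5 + n6 + n7) /
      (qpR q n1 * qpR q n2 * qpR q n3 * qpR q n4 * qpR q n5 * qpR q n6 * qpR q n7))
      = fun n7 : ℕ => c * (q^((n6+1)*n7) / (qpR q n6 * qpR q n7)) := by
    funext n7
    rw [show n1 * n2 + n2 * n3 + n3 * n4 + n4 * n5 + n5 * n6 + n6 * n7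
          + n1 + n2 + n3 + n4 + n5 + n6 + n7
        = (n1*n2+n2*n3+n3*n4+n4*n5+n5*n6+n1+n2+n3+n4+n5+n6) + (n6+1)*n7 by ring,
      pow_add, hc]
    ring
  rw [heq]
  have hval : c * (qpInfR q)⁻¹ = f6 q n1 n2 n3 n4 n5 n6 := by
    rw [hc, f6]
  rwa [hval] at h

lemma stageB (n1 n2 n3 n4 n5 : ℕ) :
    HasSum (fun n6 : ℕ => f6 q n1 n2 n3 n4 n5 n6) (f5 q n1 n2 n3 n4 n5) := by
  set c : ℝ := q^(n1*n2+n2*n3+n3*n4+n4*n5+n1+n2+n3+n4+n5) /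
    (qpR q n1*qpR q n2*qpR q n3*qpR q n4*qpR q n5) * (qpInfR q)⁻¹ with hc
  have h := (geomA hq0 hq1 n5).mul_left c
  have heq : (fun n6 : ℕ => f6 q n1 n2 n3 n4 n5 n6)
      = fun n6 : ℕ => c * q^((n5+1)*n6) := by
    funext n6
    rw [f6, show n1*n2+n2*n3+n3*n4+n4*n5+n5*n6+n1+n2+n3+n4+n5+n6
        = (n1*n2+n2*n3+n3*n4+n4*n5+n1+n2+n3+n4+n5) + (n5+1)*n6 by ring,
      pow_add, hc]
    ring
  rw [heq]
  have hval : c * (1 - q^(n5+1))⁻¹ = f5 q n1 n2 n3 n4 n5 := by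
    rw [hc, f5, qpR_succ hq0 hq1 n5]
    simp only [div_eq_mul_inv, mul_inv]
    ring
  rwa [hval] at h

lemma stageC (n1 n2 n3 n4 : ℕ) :
    HasSum (fun n5 : ℕ => f5 q n1 n2 n3 n4 n5) (gr q n1 n2 n3 n4) := by
  set c : ℝ := q^(n1*n2+n2*n3+n3*n4+n1+n2+n3+n4) /
    (qpR q n1*qpR q n2*qpR q n3*qpR q n4) * (qpInfR q)⁻¹ with hc
  have h := (eulerB hq0 hq1 n4).mul_left c
  have heq : (fun n5 : ℕ => f5 q n1 n2 n3 n4 n5)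
      = fun n5 : ℕ => c * (q^((n4+1)*n5) / qpR q (n5+1)) := by
    funext n5
    rw [f5, show n1*n2+n2*n3+n3*n4+n4*n5+n1+n2+n3+n4+n5
        = (n1*n2+n2*n3+n3*n4+n1+n2+n3+n4) + (n4+1)*n5 by ring,
      pow_add, hc]
    ring
  rw [heq]
  have hval : c * ((qpR q n4 / qpInfR q - 1) / q^(n4+1)) = gr q n1 n2 n3 n4 := by
    rw [hc, gr]
    ring
  rwa [hval] at h

lemma stageD (n2 n3 n4 : ℕ) :
    HasSum (fun n1 : ℕ => gr q n1 n2 n3 n4) (g2r q n2 n3 n4) := by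
  set c : ℝ := q^(n2*n3+n3*n4+n2+n3+n4) / (qpR q n3*qpR q n4)
    * ((qpR q n4 / qpInfR q - 1) / (qpInfR q * q^(n4+1))) with hc
  have h := (eulerA' hq0 hq1 n2).mul_left c
  have heq : (fun n1 : ℕ => gr q n1 n2 n3 n4)
      = fun n1 : ℕ => c * (q^((n2+1)*n1) / (qpR q n2 * qpR q n1)) := by
    funext n1
    rw [gr, show n1*n2+n2*n3+n3*n4+n1+n2+n3+n4
        = (n2*n3+n3*n4+n2+n3+n4) + (n2+1)*n1 by ring,
      pow_add, hc]
    ring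
  rw [heq]
  have hval : c * (qpInfR q)⁻¹ = g2r q n2 n3 n4 := by
    rw [hc, g2r]
    ring
  rwa [hval] at h

lemma stageE (n3 n4 : ℕ) :
    HasSum (fun n2 : ℕ => g2r q n2 n3 n4) (g3r q n3 n4) := by
  set c : ℝ := q^(n3*n4+n3+n4) / (qpR q n3*qpR q n4)
    * ((qpR q n4 / qpInfR q - 1) / (qpInfR q^2 * q^(n4+1))) with hc
  have h := (geomA hq0 hq1 n3).mul_left c
  have heq : (fun n2 : ℕ => g2r q n2 n3 n4) = fun n2 : ℕ => c * q^((n3+1)*n2) := by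
    funext n2
    rw [g2r, show n2*n3+n3*n4+n2+n3+n4 = (n3*n4+n3+n4) + (n3+1)*n2 by ring,
      pow_add, hc]
    ring
  rw [heq]
  have hval : c * (1 - q^(n3+1))⁻¹ = g3r q n3 n4 := by
    rw [hc, g3r, qpR_succ hq0 hq1 n3]
    simp only [div_eq_mul_inv, mul_inv]
    ring
  rwa [hval] at h

lemma stageF (n4 : ℕ) :
    HasSum (fun n3 : ℕ => g3r q n3 n4) (g4r q n4) := by
  set c : ℝ := q^n4 / qpR q n4
    * ((qpR q n4 / qpInfR q - 1) / (qpInfR q^2 * q^(n4+1))) with hc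
  have h := (eulerB hq0 hq1 n4).mul_left c
  have heq : (fun n3 : ℕ => g3r q n3 n4)
      = fun n3 : ℕ => c * (q^((n4+1)*n3) / qpR q (n3+1)) := by
    funext n3
    rw [g3r, show n3*n4+n3+n4 = n4 + (n4+1)*n3 by ring, pow_add, hc]
    ring
  rw [heq]
  have hval : c * ((qpR q n4 / qpInfR q - 1) / q^(n4+1)) = g4r q n4 := by
    rw [hc, g4r, show 2*n4+2 = (n4+1)+(n4+1) by ring, pow_add]
    ring
  rwa [hval] at h

lemma part1 : HA7 q = ∑' (n1 : ℕ) (n2 : ℕ) (n3 : ℕ) (n4 : ℕ), gr q n1 n2 n3 n4 := by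
  rw [HA7]
  have e1 : ∀ n1 n2 n3 n4 n5 n6 : ℕ,
      (∑' n7 : ℕ, q ^ (n1 * n2 + n2 * n3 + n3 * n4 + n4 * n5 + n5 * n6 + n6 * n7
          + n1 + n2 + n3 + n4 + n5 + n6 + n7) /
      (qpR q n1 * qpR q n2 * qpR q n3 * qpR q n4 * qpR q n5 * qpR q n6 * qpR q n7))
      = f6 q n1 n2 n3 n4 n5 n6 :=
    fun n1 n2 n3 n4 n5 n6 => (stageA hq0 hq1 n1 n2 n3 n4 n5 n6).tsum_eq
  calc ∑' (n1 : ℕ) (n2 : ℕ) (n3 : ℕ) (n4 : ℕ) (n5 : ℕ) (n6 : ℕ) (n7 : ℕ),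
        q ^ (n1 * n2 + n2 * n3 + n3 * n4 + n4 * n5 + n5 * n6 + n6 * n7
          + n1 + n2 + n3 + n4 + n5 + n6 + n7) /
        (qpR q n1 * qpR q n2 * qpR q n3 * qpR q n4 * qpR q n5 * qpR q n6 * qpR q n7)
      = ∑' (n1 : ℕ) (n2 : ℕ) (n3 : ℕ) (n4 : ℕ) (n5 : ℕ) (n6 : ℕ), f6 q n1 n2 n3 n4 n5 n6 :=
        tsum_congr fun n1 => tsum_congr fun n2 => tsum_congr fun n3 =>
          tsum_congr fun n4 => tsum_congr fun n5 => tsum_congr fun n6 =>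
          e1 n1 n2 n3 n4 n5 n6
    _ = ∑' (n1 : ℕ) (n2 : ℕ) (n3 : ℕ) (n4 : ℕ) (n5 : ℕ), f5 q n1 n2 n3 n4 n5 :=
        tsum_congr fun n1 => tsum_congr fun n2 => tsum_congr fun n3 =>
          tsum_congr fun n4 => tsum_congr fun n5 =>
          (stageB hq0 hq1 n1 n2 n3 n4 n5).tsum_eq
    _ = ∑' (n1 : ℕ) (n2 : ℕ) (n3 : ℕ) (n4 : ℕ), gr q n1 n2 n3 n4 :=
        tsum_congr fun n1 => tsum_congr fun n2 => tsum_congr fun n3 =>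
          tsum_congr fun n4 => (stageC hq0 hq1 n1 n2 n3 n4).tsum_eq

end stages
end HA7aux

namespace HA7aux
open Filter Topology
variable {q : ℝ}
section part2
variable (hq0 : 0 < q) (hq1 : q < 1)
include hq0 hq1

lemma ratio_nonneg (n : ℕ) : 0 ≤ qpR q n / qpInfR q - 1 := by
  have h := (one_le_div (qpInfR_pos hq0 hq1)).mpr (qpInfR_le_qpR hq0 hq1 n)
  linarith

lemma gr_nonneg (n1 n2 n3 n4 : ℕ) : 0 ≤ gr q n1 n2 n3 n4 := by
  rw [gr]
  have := ratio_nonneg hq0 hq1 n4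
  have e1 := (qpR_pos hq0 hq1 n1); have e2 := (qpR_pos hq0 hq1 n2)
  have e3 := (qpR_pos hq0 hq1 n3); have e4 := (qpR_pos hq0 hq1 n4)
  have e5 := qpInfR_pos hq0 hq1
  positivity

lemma g2r_nonneg (n2 n3 n4 : ℕ) : 0 ≤ g2r q n2 n3 n4 := by
  rw [g2r]
  have := ratio_nonneg hq0 hq1 n4
  have e3 := (qpR_pos hq0 hq1 n3); have e4 := (qpR_pos hq0 hq1 n4)
  have e5 := qpInfR_pos hq0 hq1
  positivity

lemma g3r_nonneg (n3 n4 : ℕ) : 0 ≤ g3r q n3 n4 := by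
  rw [g3r]
  have := ratio_nonneg hq0 hq1 n4
  have e3 := (qpR_pos hq0 hq1 (n3+1)); have e4 := (qpR_pos hq0 hq1 n4)
  have e5 := qpInfR_pos hq0 hq1
  positivity

lemma g4r_nonneg (n : ℕ) : 0 ≤ g4r q n := by
  rw [g4r]
  have e4 := (qpR_pos hq0 hq1 n)
  have e5 := qpInfR_pos hq0 hq1
  positivity

lemma g4r_le (n : ℕ) : g4r q n ≤ q^n * ((1-q)^2 * qpInfR q^5)⁻¹ := by
  set N := qpR q n with hN
  set e := qpInfR q with he
  set P := q^(n+1) with hP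
  have hNpos := qpR_pos hq0 hq1 n
  have hepos := qpInfR_pos hq0 hq1
  have hPpos : (0:ℝ) < P := pow_pos hq0 _
  have h1q : (0:ℝ) < 1 - q := by linarith
  have hD0 : 0 ≤ N/e - 1 := ratio_nonneg hq0 hq1 n
  have hD : N/e - 1 ≤ P/((1-q)*e) := by
    have hsub := qpR_sub_qpInf_le hq0 hq1 n
    have hN1 := qpR_le_one hq0 hq1 n
    have : N - e ≤ P/(1-q) := by
      calc N - e ≤ N * (P/(1-q)) := hsub
        _ ≤ 1 * (P/(1-q)) := by
            apply mul_le_mul_of_nonneg_right hN1 (by positivity)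
        _ = P/(1-q) := by ring
    rw [div_sub' hepos.ne', div_le_div_iff₀ hepos (by positivity)]
    have h9 : N - e * 1 = N - e := by ring
    rw [h9]
    calc (N - e) * ((1-q)*e) ≤ (P/(1-q)) * ((1-q)*e) := by
          apply mul_le_mul_of_nonneg_right this (by positivity)
      _ = P * e := by field_simp
  have hD2 : (N/e-1)^2 ≤ (P/((1-q)*e))^2 := pow_le_pow_left₀ hD0 hD 2
  have h2n : q^(2*n+2) = P^2 := by rw [hP, ← pow_mul]; ring_nf
  rw [g4r, h2n, ← hN, ← he]
  calc q^n/N * ((N/e-1)^2/(e^2*P^2))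
      ≤ q^n/e * ((P/((1-q)*e))^2/(e^2*P^2)) := by
        apply mul_le_mul
        · exact div_le_div_of_nonneg_left (pow_pos hq0 n).le hepos (qpInfR_le_qpR hq0 hq1 n)
        · exact div_le_div_of_nonneg_right hD2 (by positivity)
        · positivity
        · positivity
    _ = q^n * ((1-q)^2 * e^5)⁻¹ := by
        field_simp

lemma summable_g4r : Summable (g4r q) :=
  Summable.of_nonneg_of_le (g4r_nonneg hq0 hq1) (g4r_le hq0 hq1)
    ((summable_geometric_of_lt_one hq0.le hq1).mul_right _)

end part2
end HA7aux

namespace HA7aux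
open Filter Topology
variable {q : ℝ}

lemma comm4 (f : ℕ → ℕ → ℕ → ℕ → ENNReal) :
    ∑' (a : ℕ) (b : ℕ) (c : ℕ) (d : ℕ), f a b c d
      = ∑' (d : ℕ) (c : ℕ) (b : ℕ) (a : ℕ), f a b c d := by
  calc ∑' (a : ℕ) (b : ℕ) (c : ℕ) (d : ℕ), f a b c d
      = ∑' (a : ℕ) (b : ℕ) (d : ℕ) (c : ℕ), f a b c d :=
        tsum_congr fun a => tsum_congr fun b =>
          ENNReal.tsum_comm (f := fun c d => f a b c d)
    _ = ∑' (a : ℕ) (d : ℕ) (b : ℕ) (c : ℕ), f a b c d :=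
        tsum_congr fun a => ENNReal.tsum_comm (f := fun b d => ∑' c, f a b c d)
    _ = ∑' (d : ℕ) (a : ℕ) (b : ℕ) (c : ℕ), f a b c d :=
        ENNReal.tsum_comm (f := fun a d => ∑' (b : ℕ) (c : ℕ), f a b c d)
    _ = ∑' (d : ℕ) (a : ℕ) (c : ℕ) (b : ℕ), f a b c d :=
        tsum_congr fun d => tsum_congr fun a =>
          ENNReal.tsum_comm (f := fun b c => f a b c d)
    _ = ∑' (d : ℕ) (c : ℕ) (a : ℕ) (b : ℕ), f a b c d :=
        tsum_congr fun d => ENNReal.tsum_comm (f := fun a c => ∑' b, f a b c d)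
    _ = ∑' (d : ℕ) (c : ℕ) (b : ℕ) (a : ℕ), f a b c d :=
        tsum_congr fun d => tsum_congr fun c =>
          ENNReal.tsum_comm (f := fun a b => f a b c d)

section fubini
variable (hq0 : 0 < q) (hq1 : q < 1)
include hq0 hq1

lemma rev_eval :
    ∑' (n4 : ℕ) (n3 : ℕ) (n2 : ℕ) (n1 : ℕ), ENNReal.ofReal (gr q n1 n2 n3 n4)
      = ENNReal.ofReal (∑' n, g4r q n) := by
  have l1 : ∀ n2 n3 n4 : ℕ,
      ∑' n1 : ℕ, ENNReal.ofReal (gr q n1 n2 n3 n4) = ENNReal.ofReal (g2r q n2 n3 n4) := by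
    intro n2 n3 n4
    rw [← ENNReal.ofReal_tsum_of_nonneg (fun n1 => gr_nonneg hq0 hq1 n1 n2 n3 n4)
      (stageD hq0 hq1 n2 n3 n4).summable, (stageD hq0 hq1 n2 n3 n4).tsum_eq]
  have l2 : ∀ n3 n4 : ℕ,
      ∑' n2 : ℕ, ENNReal.ofReal (g2r q n2 n3 n4) = ENNReal.ofReal (g3r q n3 n4) := by
    intro n3 n4
    rw [← ENNReal.ofReal_tsum_of_nonneg (fun n2 => g2r_nonneg hq0 hq1 n2 n3 n4)
      (stageE hq0 hq1 n3 n4).summable, (stageE hq0 hq1 n3 n4).tsum_eq]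
  have l3 : ∀ n4 : ℕ,
      ∑' n3 : ℕ, ENNReal.ofReal (g3r q n3 n4) = ENNReal.ofReal (g4r q n4) := by
    intro n4
    rw [← ENNReal.ofReal_tsum_of_nonneg (fun n3 => g3r_nonneg hq0 hq1 n3 n4)
      (stageF hq0 hq1 n4).summable, (stageF hq0 hq1 n4).tsum_eq]
  calc ∑' (n4 : ℕ) (n3 : ℕ) (n2 : ℕ) (n1 : ℕ), ENNReal.ofReal (gr q n1 n2 n3 n4)
      = ∑' (n4 : ℕ) (n3 : ℕ) (n2 : ℕ), ENNReal.ofReal (g2r q n2 n3 n4) :=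
        tsum_congr fun n4 => tsum_congr fun n3 => tsum_congr fun n2 => l1 n2 n3 n4
    _ = ∑' (n4 : ℕ) (n3 : ℕ), ENNReal.ofReal (g3r q n3 n4) :=
        tsum_congr fun n4 => tsum_congr fun n3 => l2 n3 n4
    _ = ∑' (n4 : ℕ), ENNReal.ofReal (g4r q n4) := tsum_congr fun n4 => l3 n4
    _ = ENNReal.ofReal (∑' n, g4r q n) :=
        (ENNReal.ofReal_tsum_of_nonneg (g4r_nonneg hq0 hq1) (summable_g4r hq0 hq1)).symm

lemma part_main :
    ∑' (n1 : ℕ) (n2 : ℕ) (n3 : ℕ) (n4 : ℕ), gr q n1 n2 n3 n4 = ∑' n, g4r q n := by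
  set G : ℕ → ℕ → ℕ → ℕ → ENNReal := fun n1 n2 n3 n4 => ENNReal.ofReal (gr q n1 n2 n3 n4)
    with hG
  have hcomm : ∑' (n1 : ℕ) (n2 : ℕ) (n3 : ℕ) (n4 : ℕ), G n1 n2 n3 n4
      = ∑' (n4 : ℕ) (n3 : ℕ) (n2 : ℕ) (n1 : ℕ), G n1 n2 n3 n4 := comm4 G
  have hrev := rev_eval hq0 hq1
  have hT : ∑' (n1 : ℕ) (n2 : ℕ) (n3 : ℕ) (n4 : ℕ), G n1 n2 n3 n4 ≠ ⊤ := by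
    rw [hcomm, hG]
    simp only []
    rw [hrev]
    exact ENNReal.ofReal_ne_top
  -- finiteness of partial sums
  have hf4 : ∀ n1 n2 n3 : ℕ, ∑' n4 : ℕ, G n1 n2 n3 n4 ≠ ⊤ := by
    intro n1 n2 n3
    have h := calc ∑' n4 : ℕ, G n1 n2 n3 n4
        ≤ ∑' (n3' : ℕ) (n4 : ℕ), G n1 n2 n3' n4 :=
          ENNReal.le_tsum (f := fun n3' => ∑' n4 : ℕ, G n1 n2 n3' n4) n3
      _ ≤ ∑' (n2' : ℕ) (n3' : ℕ) (n4 : ℕ), G n1 n2' n3' n4 :=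
          ENNReal.le_tsum (f := fun n2' => ∑' (n3' : ℕ) (n4 : ℕ), G n1 n2' n3' n4) n2
      _ ≤ ∑' (n1' : ℕ) (n2' : ℕ) (n3' : ℕ) (n4 : ℕ), G n1' n2' n3' n4 :=
          ENNReal.le_tsum (f := fun n1' => ∑' (n2' : ℕ) (n3' : ℕ) (n4 : ℕ), G n1' n2' n3' n4) n1
    exact fun he => hT (top_le_iff.mp (he ▸ h))
  have hf3 : ∀ n1 n2 : ℕ, ∑' (n3 : ℕ) (n4 : ℕ), G n1 n2 n3 n4 ≠ ⊤ := by
    intro n1 n2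
    have h := calc ∑' (n3 : ℕ) (n4 : ℕ), G n1 n2 n3 n4
        ≤ ∑' (n2' : ℕ) (n3' : ℕ) (n4 : ℕ), G n1 n2' n3' n4 :=
          ENNReal.le_tsum (f := fun n2' => ∑' (n3' : ℕ) (n4 : ℕ), G n1 n2' n3' n4) n2
      _ ≤ ∑' (n1' : ℕ) (n2' : ℕ) (n3' : ℕ) (n4 : ℕ), G n1' n2' n3' n4 :=
          ENNReal.le_tsum (f := fun n1' => ∑' (n2' : ℕ) (n3' : ℕ) (n4 : ℕ), G n1' n2' n3' n4) n1
    exact fun he => hT (top_le_iff.mp (he ▸ h))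
  have hf2 : ∀ n1 : ℕ, ∑' (n2 : ℕ) (n3 : ℕ) (n4 : ℕ), G n1 n2 n3 n4 ≠ ⊤ := by
    intro n1
    have h : ∑' (n2 : ℕ) (n3 : ℕ) (n4 : ℕ), G n1 n2 n3 n4
        ≤ ∑' (n1' : ℕ) (n2' : ℕ) (n3' : ℕ) (n4 : ℕ), G n1' n2' n3' n4 :=
      ENNReal.le_tsum (f := fun n1' => ∑' (n2' : ℕ) (n3' : ℕ) (n4 : ℕ), G n1' n2' n3' n4) n1
    exact fun he => hT (top_le_iff.mp (he ▸ h))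
  -- bridge level by level
  have l4 : ∀ n1 n2 n3 : ℕ, (∑' n4 : ℕ, G n1 n2 n3 n4).toReal = ∑' n4 : ℕ, gr q n1 n2 n3 n4 := by
    intro n1 n2 n3
    rw [ENNReal.tsum_toReal_eq (fun _ => ENNReal.ofReal_ne_top)]
    exact tsum_congr fun n4 => ENNReal.toReal_ofReal (gr_nonneg hq0 hq1 n1 n2 n3 n4)
  have l3 : ∀ n1 n2 : ℕ, (∑' (n3 : ℕ) (n4 : ℕ), G n1 n2 n3 n4).toReal
      = ∑' (n3 : ℕ) (n4 : ℕ), gr q n1 n2 n3 n4 := by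
    intro n1 n2
    rw [ENNReal.tsum_toReal_eq (fun n3 => hf4 n1 n2 n3)]
    exact tsum_congr fun n3 => l4 n1 n2 n3
  have l2 : ∀ n1 : ℕ, (∑' (n2 : ℕ) (n3 : ℕ) (n4 : ℕ), G n1 n2 n3 n4).toReal
      = ∑' (n2 : ℕ) (n3 : ℕ) (n4 : ℕ), gr q n1 n2 n3 n4 := by
    intro n1
    rw [ENNReal.tsum_toReal_eq (fun n2 => hf3 n1 n2)]
    exact tsum_congr fun n2 => l3 n1 n2
  have l1 : (∑' (n1 : ℕ) (n2 : ℕ) (n3 : ℕ) (n4 : ℕ), G n1 n2 n3 n4).toReal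
      = ∑' (n1 : ℕ) (n2 : ℕ) (n3 : ℕ) (n4 : ℕ), gr q n1 n2 n3 n4 := by
    rw [ENNReal.tsum_toReal_eq (fun n1 => hf2 n1)]
    exact tsum_congr fun n1 => l2 n1
  rw [← l1, hcomm, hG]
  simp only []
  rw [hrev, ENNReal.toReal_ofReal (tsum_nonneg (g4r_nonneg hq0 hq1))]

lemma key_identity :
    qpInfR q ^ 4 * HA7 q = ∑' n : ℕ, (qpR q n - qpInfR q)^2 / (qpR q n * q^(n+2)) := by
  rw [part1 hq0 hq1, part_main hq0 hq1, ← tsum_mul_left]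
  apply tsum_congr
  intro n
  rw [g4r]
  have hN := (qpR_pos hq0 hq1 n).ne'
  have he := (qpInfR_pos hq0 hq1).ne'
  have hqn : q^(2*n+2) = q^n * q^(n+2) := by rw [← pow_add]; congr 1; ring
  rw [hqn]
  field_simp

end fubini
end HA7aux

namespace HA7aux
open Filter Topology

lemma asymp (t : ℝ) (ht0 : 0 < t) (ht : t ≤ 1/2) :
    |(∑' n : ℕ, (qpR (Real.exp (-t)) n - qpInfR (Real.exp (-t)))^2 /
        (qpR (Real.exp (-t)) n * (Real.exp (-t))^(n+2))) - 1| ≤ 300 * t := by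
  set q : ℝ := Real.exp (-t) with hqdef
  have hq0 : 0 < q := Real.exp_pos _
  have hq1 : q < 1 := by
    rw [hqdef, show (1:ℝ) = Real.exp 0 by rw [Real.exp_zero]]
    exact Real.exp_lt_exp.mpr (by linarith)
  have hqge : 1 - t ≤ q := by
    have := Real.add_one_le_exp (-t); rw [hqdef]; linarith
  have hqhalf : 1/2 ≤ q := by linarith
  have h1mq_le : 1 - q ≤ t := by linarith
  have h1mq_pos : 0 < 1 - q := by linarith
  have h1mq_ge : t/2 ≤ 1 - q := by
    have hexp : (1:ℝ) + t ≤ Real.exp t := by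
      have := Real.add_one_le_exp t; linarith
    have h1 : q ≤ (1+t)⁻¹ := by
      rw [hqdef, Real.exp_neg]
      exact inv_anti₀ (by linarith) hexp
    have h2 : (1+t)⁻¹ ≤ 1 - t/2 := by
      rw [inv_le_iff_one_le_mul₀ (by linarith)]
      nlinarith
    linarith
  have hpow : ∀ j : ℕ, 1 - q^j ≤ j*t := by
    intro j
    have hqj : q^j = Real.exp (-((j:ℝ)*t)) := by
      rw [hqdef, ← Real.exp_nat_mul]
      congr 1
      ring
    have := Real.add_one_le_exp (-((j:ℝ)*t))
    rw [hqj]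
    linarith
  have he0 : 0 < qpInfR q := qpInfR_pos hq0 hq1
  have he_le_t : qpInfR q ≤ t := by
    have h1 : qpInfR q ≤ qpR q 1 := qpInfR_le_qpR hq0 hq1 1
    have h2 : qpR q 1 = 1 - q := by simp [qpR]
    have := hpow 1
    rw [h2] at h1
    simp at this
    linarith
  set e : ℝ := qpInfR q with hedef
  set a : ℕ → ℝ := fun n => (qpR q n - e)^2 / (qpR q n * q^(n+2)) with ha
  have haN : ∀ n, e ≤ qpR q n := fun n => qpInfR_le_qpR hq0 hq1 n
  have ha_nonneg : ∀ n, 0 ≤ a n := by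
    intro n
    have := qpR_pos hq0 hq1 n
    rw [ha]
    positivity
  -- generic bound 1 : a n ≤ qpR q n / q^(n+2)
  have a_le_N : ∀ n, a n ≤ qpR q n / q^(n+2) := by
    intro n
    have hN := qpR_pos hq0 hq1 n
    have hQ : (0:ℝ) < q^(n+2) := pow_pos hq0 _
    rw [ha]
    have hsq : (qpR q n - e)^2 ≤ qpR q n * qpR q n := by
      nlinarith [haN n, he0]
    calc (qpR q n - e)^2/(qpR q n * q^(n+2)) ≤ (qpR q n * qpR q n)/(qpR q n * q^(n+2)) :=
          div_le_div_of_nonneg_right hsq (by positivity)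
      _ = qpR q n / q^(n+2) := mul_div_mul_left _ _ hN.ne'
  -- generic bound 2 : a n ≤ qpR q n * q^n / (1-q)^2
  have a_le_geom : ∀ n, a n ≤ qpR q n * q^n / (1-q)^2 := by
    intro n
    have hN := qpR_pos hq0 hq1 n
    have key : (qpR q n - e) * (1 - q) ≤ qpR q n * q^(n+1) := by
      have hsub := qpR_sub_qpInf_le hq0 hq1 n
      calc (qpR q n - e) * (1 - q) ≤ (qpR q n * (q^(n+1)/(1-q))) * (1-q) :=
            mul_le_mul_of_nonneg_right hsub h1mq_pos.le
        _ = qpR q n * q^(n+1) := by field_simp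
    rw [ha, div_le_div_iff₀ (by positivity) (by positivity)]
    have hpowid : q^(n+1) * q^(n+1) = q^n * q^(n+2) := by
      rw [← pow_add, ← pow_add]; congr 1; ring
    calc (qpR q n - e)^2 * (1-q)^2 = ((qpR q n - e)*(1-q))^2 := by ring
      _ ≤ (qpR q n * q^(n+1))^2 :=
          pow_le_pow_left₀ (mul_nonneg (by linarith [haN n]) h1mq_pos.le) key 2
      _ = qpR q n * qpR q n * (q^(n+1) * q^(n+1)) := by ring
      _ = qpR q n * qpR q n * (q^n * q^(n+2)) := by rw [hpowid]
      _ = qpR q n * q^n * (qpR q n * q^(n+2)) := by ring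
  have summable_a : Summable a := by
    apply Summable.of_nonneg_of_le ha_nonneg (fun n => ?_)
      ((summable_geometric_of_lt_one hq0.le hq1).mul_right ((1-q)^2)⁻¹)
    calc a n ≤ qpR q n * q^n / (1-q)^2 := a_le_geom n
      _ ≤ 1 * q^n / (1-q)^2 := by
          apply div_le_div_of_nonneg_right _ (by positivity)
          exact mul_le_mul_of_nonneg_right (qpR_le_one hq0 hq1 n) (pow_pos hq0 n).le
      _ = q^n * ((1-q)^2)⁻¹ := by ring
  -- split
  set T : ℝ := ∑' n : ℕ, a (n + 4) with hT
  have hsplit : (∑ i ∈ Finset.range 4, a i) + T = ∑' n, a n :=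
    Summable.sum_add_tsum_nat_add 4 summable_a
  have h4 : ∑ i ∈ Finset.range 4, a i = a 0 + a 1 + a 2 + a 3 := by
    rw [Finset.sum_range_succ, Finset.sum_range_succ, Finset.sum_range_succ,
      Finset.sum_range_one]
  -- powers of q bounds
  have hqk : ∀ k : ℕ, (1/2:ℝ)^k ≤ q^k := fun k => pow_le_pow_left₀ (by norm_num) hqhalf k
  -- term estimates
  have hq2 : (1/4:ℝ) ≤ q^2 := by have := hqk 2; norm_num at this; linarith
  have hq3 : (1/8:ℝ) ≤ q^3 := by have := hqk 3; norm_num at this; linarith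
  have hq4 : (1/16:ℝ) ≤ q^4 := by have := hqk 4; norm_num at this; linarith
  have hq5 : (1/32:ℝ) ≤ q^5 := by have := hqk 5; norm_num at this; linarith
  have hp1 : 1 - q^1 ≤ 1*t := by have := hpow 1; simpa using this
  have hp2 : 1 - q^2 ≤ 2*t := by have := hpow 2; norm_num at this; linarith
  have hp3 : 1 - q^3 ≤ 3*t := by have := hpow 3; norm_num at this; linarith
  have hp4 : 1 - q^4 ≤ 4*t := by have := hpow 4; norm_num at this; linarith
  have hf1 : (0:ℝ) ≤ 1 - q^1 := by have := pow_lt_one' hq0 hq1 0; norm_num at this ⊢; linarith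
  have hf2 : (0:ℝ) ≤ 1 - q^2 := by have : q^2 ≤ 1 := pow_le_one₀ hq0.le hq1.le; linarith
  have hf3 : (0:ℝ) ≤ 1 - q^3 := by have : q^3 ≤ 1 := pow_le_one₀ hq0.le hq1.le; linarith
  have hf4 : (0:ℝ) ≤ 1 - q^4 := by have : q^4 ≤ 1 := pow_le_one₀ hq0.le hq1.le; linarith
  have hN1 : qpR q 1 = 1 - q := by simp [qpR]
  have hN2 : qpR q 2 = (1 - q)*(1-q^2) := by
    rw [qpR, Finset.prod_range_succ, Finset.prod_range_one]
    norm_num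
  have hN3 : qpR q 3 = (1 - q)*(1-q^2)*(1-q^3) := by
    rw [qpR, Finset.prod_range_succ, Finset.prod_range_succ, Finset.prod_range_one]
    norm_num
  have hN4 : qpR q 4 = (1 - q)*(1-q^2)*(1-q^3)*(1-q^4) := by
    rw [qpR, Finset.prod_range_succ, Finset.prod_range_succ, Finset.prod_range_succ,
      Finset.prod_range_one]
    norm_num
  have hN2le : qpR q 2 ≤ 2*t^2 := by
    rw [hN2]
    calc (1-q)*(1-q^2) ≤ t*(2*t) :=
          mul_le_mul h1mq_le hp2 hf2 (by linarith)
      _ = 2*t^2 := by ring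
  have hN2nn : 0 ≤ qpR q 2 := (qpR_pos hq0 hq1 2).le
  have hN3le : qpR q 3 ≤ 6*t^3 := by
    rw [hN3, ← hN2]
    calc qpR q 2*(1-q^3) ≤ (2*t^2)*(3*t) :=
          mul_le_mul hN2le hp3 hf3 (by positivity)
      _ = 6*t^3 := by ring
  have hN3nn : 0 ≤ qpR q 3 := (qpR_pos hq0 hq1 3).le
  have hN4le : qpR q 4 ≤ 24*t^4 := by
    have h34 : qpR q 4 = qpR q 3 * (1-q^4) := by rw [hN4, hN3]
    rw [h34]
    calc qpR q 3*(1-q^4) ≤ (6*t^3)*(4*t) :=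
          mul_le_mul hN3le hp4 hf4 (by positivity)
      _ = 24*t^4 := by ring
  have ha0 : |a 0 - 1| ≤ 8*t := by
    have ha0v : a 0 = (1 - e)^2 / q^2 := by
      rw [ha]
      norm_num [qpR]
    have he_le_N0 : e ≤ 1 := by have := haN 0; simpa [qpR] using this
    have hq2le1 : q^2 ≤ 1 := pow_le_one₀ hq0.le hq1.le
    have hq2pos : (0:ℝ) < q^2 := pow_pos hq0 2
    have hqsq : 1 - 2*t ≤ q^2 := by nlinarith
    have hub : (1 - e)^2/q^2 ≤ 1 + 8*t := by
      rw [div_le_iff₀ hq2pos]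
      nlinarith
    have hlb : 1 - 8*t ≤ (1 - e)^2/q^2 := by
      rw [le_div_iff₀ hq2pos]
      nlinarith
    rw [ha0v, abs_le]
    constructor
    · linarith
    · linarith
  have ha1 : a 1 ≤ 8*t := by
    calc a 1 ≤ qpR q 1 / q^(1+2) := a_le_N 1
      _ ≤ 8*t := by
          rw [hN1, show (1+2) = 3 by norm_num, div_le_iff₀ (pow_pos hq0 3)]
          have h8 := mul_le_mul_of_nonneg_left hq3 ht0.le
          linarith
  have ha2 : a 2 ≤ 16*t := by
    calc a 2 ≤ qpR q 2 / q^(2+2) := a_le_N 2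
      _ ≤ 16*t := by
          rw [show (2+2) = 4 by norm_num, div_le_iff₀ (pow_pos hq0 4)]
          have h8 := mul_le_mul_of_nonneg_left hq4 ht0.le
          have h9 : 2*t^2 ≤ t := by nlinarith
          linarith
  have ha3 : a 3 ≤ 48*t := by
    calc a 3 ≤ qpR q 3 / q^(3+2) := a_le_N 3
      _ ≤ 48*t := by
          rw [show (3+2) = 5 by norm_num, div_le_iff₀ (pow_pos hq0 5)]
          have h8 := mul_le_mul_of_nonneg_left hq5 ht0.le
          have h9 : 6*t^3 ≤ 3/2*t := by nlinarith
          linarith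
  -- tail estimate
  have htail : T ≤ 192*t := by
    have hterm : ∀ n : ℕ, a (n+4) ≤ (qpR q 4 * q^4/(1-q)^2) * q^n := by
      intro n
      calc a (n+4) ≤ qpR q (n+4) * q^(n+4) / (1-q)^2 := a_le_geom (n+4)
        _ ≤ qpR q 4 * q^(n+4) / (1-q)^2 := by
            apply div_le_div_of_nonneg_right _ (by positivity)
            exact mul_le_mul_of_nonneg_right
              (qpR_antitone hq0 hq1 (by omega)) (pow_pos hq0 _).le
        _ = (qpR q 4 * q^4/(1-q)^2) * q^n := by
            rw [show n+4 = 4+n by ring, pow_add]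
            ring
    have hsum : T ≤ (qpR q 4 * q^4/(1-q)^2) * (1-q)⁻¹ := by
      rw [hT]
      calc ∑' n : ℕ, a (n+4) ≤ ∑' n : ℕ, (qpR q 4 * q^4/(1-q)^2) * q^n := by
            apply Summable.tsum_le_tsum hterm
              ((summable_nat_add_iff (f := a) 4).mpr summable_a)
              ((summable_geometric_of_lt_one hq0.le hq1).mul_left _)
        _ = (qpR q 4 * q^4/(1-q)^2) * (1-q)⁻¹ := by
            rw [tsum_mul_left, tsum_geometric_of_lt_one hq0.le hq1]
    have hbound : (qpR q 4 * q^4/(1-q)^2) * (1-q)⁻¹ ≤ 192*t := by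
      have heq : (qpR q 4 * q^4/(1-q)^2) * (1-q)⁻¹ = qpR q 4 * q^4/((1-q)^2*(1-q)) := by
        field_simp
      rw [heq, div_le_iff₀ (by positivity)]
      have hu3 : (t/2)^3 ≤ (1-q)^3 := pow_le_pow_left₀ (by positivity) h1mq_ge 3
      have hq4le1 : q^4 ≤ 1 := pow_le_one₀ hq0.le hq1.le
      have hN4nn : 0 ≤ qpR q 4 := (qpR_pos hq0 hq1 4).le
      have s1 : qpR q 4 * q^4 ≤ 24 * t^4 :=
        calc qpR q 4 * q^4 ≤ (24*t^4) * 1 :=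
              mul_le_mul hN4le hq4le1 (pow_pos hq0 4).le (by positivity)
          _ = 24*t^4 := by ring
      have s2 : 24*t^4 ≤ 192*t*((1-q)^2*(1-q)) := by
        have h30 : (24:ℝ)*t^4 = 192*t*((t/2)^3) := by ring
        rw [h30]
        apply mul_le_mul_of_nonneg_left _ (by positivity)
        calc (t/2)^3 ≤ (1-q)^3 := hu3
          _ = (1-q)^2*(1-q) := by ring
      linarith
    linarith
  -- assemble
  have hTnn : 0 ≤ T := tsum_nonneg (fun n => ha_nonneg (n+4))
  have hdecomp : (∑' n, a n) - 1 = (a 0 - 1) + (a 1 + a 2 + a 3 + T) := by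
    rw [← hsplit, h4]
    ring
  rw [hdecomp]
  calc |(a 0 - 1) + (a 1 + a 2 + a 3 + T)| ≤ |a 0 - 1| + |a 1 + a 2 + a 3 + T| := abs_add_le _ _
    _ = |a 0 - 1| + (a 1 + a 2 + a 3 + T) := by
        rw [abs_of_nonneg (show (0:ℝ) ≤ a 1 + a 2 + a 3 + T by
          have := ha_nonneg 1; have := ha_nonneg 2; have := ha_nonneg 3
          linarith)]
    _ ≤ 8*t + (8*t + 16*t + 48*t + 192*t) := by
        apply add_le_add ha0
        linarith [ha_nonneg 1, ha_nonneg 2, ha_nonneg 3]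
    _ ≤ 300 * t := by linarith

end HA7aux


theorem HA7_asymptotic :
    ∃ C > (0 : ℝ), ∃ δ > (0 : ℝ), ∀ t : ℝ, 0 < t → t < δ →
      |(qpInfR (Real.exp (-t))) ^ 4 * HA7 (Real.exp (-t)) - 1| ≤ C * t := by
  refine ⟨300, by norm_num, 1/2, by norm_num, ?_⟩
  intro t ht0 htδ
  have hq0 : 0 < Real.exp (-t) := Real.exp_pos _
  have hq1 : Real.exp (-t) < 1 := by
    rw [show (1:ℝ) = Real.exp 0 by rw [Real.exp_zero]]
    exact Real.exp_lt_exp.mpr (by linarith)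
  rw [HA7aux.key_identity hq0 hq1]
  exact HA7aux.asymp t ht0 (le_of_lt htδ)
end
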